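/- arXiv:1305.3844 — 12 statements merged into one kernel-verified Lean document; each statement's English description precedes it below -/
import Mathlib

section
/- If f : ℝ → ℂ is real analytic and never zero, then there exists a real analytic function g : ℝ → ℂ such that f(t) = exp(g(t)) for all real t. -/
open Complex

theorem phase_exists_exp
    (f : ℝ → ℂ) (hf : ∀ t : ℝ, AnalyticAt ℝ f t) (hne : ∀ t : ℝ, f t ≠ 0) :
    ∃ g : ℝ → ℂ, (∀ t : ℝ, AnalyticAt ℝ g t) ∧ ∀ t : ℝ, f t = Complex.exp (g t) := by
  have hfa : AnalyticOnNhd ℝ f Set.univ := fun t _ => hf t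
  have hderiv : AnalyticOnNhd ℝ (deriv f) Set.univ := hfa.deriv
  set F : ℝ → ℂ := fun t => deriv f t / f t with hFdef
  have hFc : Continuous F := by
    refine Continuous.div ?_ ?_ hne
    · exact continuous_iff_continuousAt.2 fun t => (hderiv t trivial).continuousAt
    · exact continuous_iff_continuousAt.2 fun t => (hf t).continuousAt
  set g : ℝ → ℂ := fun t => Complex.log (f 0) + ∫ s in (0:ℝ)..t, F s with hgdef
  have hg' : ∀ t, HasDerivAt g (F t) t := by
    intro t
    have h := intervalIntegral.integral_hasDerivAt_right
      (hFc.intervalIntegrable 0 t)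
      (hFc.stronglyMeasurableAtFilter _ _) hFc.continuousAt
    simpa [hgdef] using h.const_add (Complex.log (f 0))
  have hfd : ∀ t, HasDerivAt f (deriv f t) t := fun t => (hf t).differentiableAt.hasDerivAt
  have hg0 : g 0 = Complex.log (f 0) := by simp [hgdef]
  have key : ∀ t, f t = Complex.exp (g t) := by
    have hd : ∀ t, HasDerivAt (fun t => f t * Complex.exp (-g t)) 0 t := by
      intro t
      have h1 : HasDerivAt (fun t => Complex.exp (-g t))
          (Complex.exp (-g t) * (-F t)) t := ((hg' t).neg).cexp
      have h2 := (hfd t).mul h1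
      have h3 : deriv f t * Complex.exp (-g t) + f t * (Complex.exp (-g t) * -F t) = 0 := by
        have hFt : f t * F t = deriv f t := by
          rw [hFdef]
          exact mul_div_cancel₀ _ (hne t)
        calc deriv f t * Complex.exp (-g t) + f t * (Complex.exp (-g t) * -F t)
            = (deriv f t - f t * F t) * Complex.exp (-g t) := by ring
          _ = 0 := by rw [hFt, sub_self, zero_mul]
      rw [h3] at h2
      exact h2
    have hconst : ∀ t, f t * Complex.exp (-g t) = f 0 * Complex.exp (-g 0) :=
      fun t => is_const_of_deriv_eq_zero (fun s => (hd s).differentiableAt)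
        (fun s => (hd s).deriv) t 0
    intro t
    have h0 : f 0 * Complex.exp (-g 0) = 1 := by
      rw [hg0, Complex.exp_neg, Complex.exp_log (hne 0)]
      exact mul_inv_cancel₀ (hne 0)
    have h1 : f t * Complex.exp (-g t) = 1 := by rw [hconst t, h0]
    calc f t = f t * Complex.exp (-g t) * Complex.exp (g t) := by
              rw [mul_assoc, ← Complex.exp_add, neg_add_cancel, Complex.exp_zero, mul_one]
      _ = Complex.exp (g t) := by rw [h1, one_mul]
  refine ⟨g, ?_, key⟩
  intro t₀
  set φ : ℝ → ℂ := fun t => g t₀ + Complex.log (f t / f t₀) with hφdef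
  have hmem1 : (f t₀ / f t₀) ∈ Complex.slitPlane := by
    rw [div_self (hne t₀)]; exact Complex.one_mem_slitPlane
  have hdiv : AnalyticAt ℝ (fun t => f t / f t₀) t₀ :=
    (hf t₀).div analyticAt_const (hne t₀)
  have hlog : AnalyticAt ℝ Complex.log (f t₀ / f t₀) :=
    (analyticAt_clog hmem1).restrictScalars
  have hcomp : AnalyticAt ℝ (Complex.log ∘ fun t => f t / f t₀) t₀ :=
    AnalyticAt.comp (g := Complex.log) (f := fun t => f t / f t₀) (x := t₀) hlog hdiv
  have hφa : AnalyticAt ℝ φ t₀ := analyticAt_const.add hcomp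
  -- open set where the slit-plane condition holds
  have hU : IsOpen {t : ℝ | f t / f t₀ ∈ Complex.slitPlane} :=
    Complex.isOpen_slitPlane.preimage
      ((continuous_iff_continuousAt.2 fun t => (hf t).continuousAt).div_const _)
  have ht₀U : t₀ ∈ {t : ℝ | f t / f t₀ ∈ Complex.slitPlane} := hmem1
  obtain ⟨ε, hε, hball⟩ := Metric.isOpen_iff.1 hU t₀ ht₀U
  have hφ' : ∀ t ∈ Metric.ball t₀ ε, HasDerivAt φ (F t) t := by
    intro t ht
    have hmem : f t / f t₀ ∈ Complex.slitPlane := hball ht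
    have hu : HasDerivAt (fun t => f t / f t₀) (deriv f t / f t₀) t := (hfd t).div_const _
    have := (hu.clog_real hmem).const_add (g t₀)
    convert this using 1
    · rfl
    rw [hFdef]
    show deriv f t / f t = deriv f t / f t₀ / (f t / f t₀)
    rw [div_div_div_cancel_right₀ (hne t₀)]
  have hdzero : ∀ t ∈ Metric.ball t₀ ε, HasDerivAt (fun t => g t - φ t) 0 t := by
    intro t ht
    have h := (hg' t).sub (hφ' t ht)
    simp only [sub_self] at h
    exact h
  have heq : ∀ t ∈ Metric.ball t₀ ε, g t - φ t = g t₀ - φ t₀ := by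
    intro t ht
    refine (convex_ball t₀ ε).is_const_of_fderivWithin_eq_zero
      (fun s hs => ((hdzero s hs).differentiableAt).differentiableWithinAt) ?_ ht
      (Metric.mem_ball_self hε)
    intro s hs
    rw [fderivWithin_of_isOpen Metric.isOpen_ball hs]
    rw [(hdzero s hs).hasFDerivAt.fderiv]
    ext
    simp
  have hφt₀ : φ t₀ = g t₀ := by
    simp [hφdef, div_self (hne t₀)]
  have hev : φ =ᶠ[nhds t₀] g := by
    filter_upwards [Metric.ball_mem_nhds t₀ hε] with t ht
    have := heq t ht
    rw [hφt₀] at this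
    have : g t - φ t = 0 := by simpa using this
    linear_combination -this
  exact hφa.congr hev
end

section
/- If f : ℝ → ℂ is real analytic and never zero, then there exists a real analytic function φ : ℝ → ℝ such that f(t) = |f(t)| · exp(i·φ(t)) for all real t. -/
open Complex

theorem phase_exists_arg
    (f : ℝ → ℂ) (hf : ∀ t : ℝ, AnalyticAt ℝ f t) (hne : ∀ t : ℝ, f t ≠ 0) :
    ∃ φ : ℝ → ℝ, (∀ t : ℝ, AnalyticAt ℝ φ t) ∧
      ∀ t : ℝ, f t = (‖f t‖ : ℂ) * Complex.exp (Complex.I * (φ t : ℂ)) := by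
  -- logarithmic derivative
  set h : ℝ → ℂ := fun t => deriv f t / f t with hh_def
  have hfO : AnalyticOnNhd ℝ f Set.univ := fun t _ => hf t
  have hh : ∀ t, AnalyticAt ℝ h t := fun t =>
    ((hfO.deriv t trivial)).div (hf t) (hne t)
  have hhc : Continuous h := continuous_iff_continuousAt.2 fun t => (hh t).continuousAt
  -- antiderivative
  set G : ℝ → ℂ := fun t => Complex.log (f 0) + ∫ s in (0:ℝ)..t, h s with hG_def
  have hG' : ∀ t, HasDerivAt G (h t) t := fun t =>
    ((hhc.integral_hasStrictDerivAt 0 t).hasDerivAt).const_add _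
  -- exp ∘ G = f
  have hexpG : ∀ t, Complex.exp (G t) = f t := by
    set u : ℝ → ℂ := fun t => f t * Complex.exp (-G t) with hu_def
    have hu' : ∀ t, HasDerivAt u 0 t := by
      intro t
      have h1 : HasDerivAt f (deriv f t) t := (hf t).differentiableAt.hasDerivAt
      have h2 : HasDerivAt (fun t => Complex.exp (-G t)) (-(h t) * Complex.exp (-G t)) t := by
        have := ((hG' t).neg).cexp
        simpa [mul_comm] using this
      have hfh : f t * h t = deriv f t := by
        rw [hh_def, ← mul_div_assoc]
        exact mul_div_cancel_left₀ (deriv f t) (hne t)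
      have key : deriv f t * Complex.exp (-G t) + f t * (-(h t) * Complex.exp (-G t)) = 0 := by
        linear_combination -Complex.exp (-G t) * hfh
      have := h1.mul h2
      rw [key] at this
      exact this
    have hconst : ∀ t, u t = u 0 := by
      intro t
      exact is_const_of_deriv_eq_zero (fun x => (hu' x).differentiableAt)
        (fun x => (hu' x).deriv) t 0
    have hu0 : u 0 = 1 := by
      have hG0 : G 0 = Complex.log (f 0) := by simp [hG_def]
      rw [hu_def]
      simp only [hG0]
      rw [Complex.exp_neg, Complex.exp_log (hne 0)]
      exact mul_inv_cancel₀ (hne 0)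
    intro t
    have := hconst t
    rw [hu0] at this
    rw [hu_def] at this
    simp only [] at this
    rw [ Complex.exp_neg, ← div_eq_mul_inv,
      div_eq_one_iff_eq (Complex.exp_ne_zero _)] at this
    exact this.symm
  -- G is analytic
  have hG : ∀ t, AnalyticAt ℝ G t := by
    intro t0
    set L : ℂ → ℂ := fun w => G t0 + Complex.log (w / f t0) with hL_def
    have hLa : AnalyticAt ℂ L (f t0) := by
      have h1 : AnalyticAt ℂ (fun w : ℂ => w / f t0) (f t0) :=
        (analyticAt_id).div analyticAt_const (hne t0)
      have h2 := h1.clog (by simp [div_self (hne t0)])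
      exact analyticAt_const.add h2
    have hLf : AnalyticAt ℝ (fun t => L (f t)) t0 := hLa.restrictScalars.comp (hf t0)
    have hexpL : ∀ w : ℂ, w ≠ 0 → Complex.exp (L w) = w := by
      intro w hw
      rw [hL_def]
      simp only []
      rw [Complex.exp_add, hexpG, Complex.exp_log (div_ne_zero hw (hne t0)),
        ← mul_div_assoc]
      exact mul_div_cancel_left₀ w (hne t0)
    have hD0 : G t0 - L (f t0) = 0 := by
      simp [hL_def, div_self (hne t0), Complex.log_one]
    have hcont : ContinuousAt (fun t => ‖G t - L (f t)‖) t0 :=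
      (((hG' t0).continuousAt.sub hLf.continuousAt)).norm
    have hlt : ∀ᶠ t in nhds t0, ‖G t - L (f t)‖ < 2 * Real.pi := by
      have hlt0 : (fun t => ‖G t - L (f t)‖) t0 < 2 * Real.pi := by
        simp only [hD0, norm_zero]; positivity
      exact hcont.eventually_lt_const hlt0
    have heq : (fun t => L (f t)) =ᶠ[nhds t0] G := by
      filter_upwards [hlt] with t ht
      have hexp_eq : Complex.exp (G t) = Complex.exp (L (f t)) := by
        rw [hexpG, hexpL (f t) (hne t)]
      obtain ⟨n, hn⟩ := Complex.exp_eq_exp_iff_exists_int.1 hexp_eq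
      have hDt : G t - L (f t) = n * (2 * Real.pi * I) := by
        rw [hn]; ring
      by_cases hn0 : n = 0
      · rw [hn0] at hn; simpa using hn.symm
      · exfalso
        rw [hDt] at ht
        have hnorm : ‖(n : ℂ) * (2 * Real.pi * I)‖ = |(n : ℝ)| * (2 * Real.pi) := by
          rw [norm_mul, Complex.norm_intCast, norm_mul, Complex.norm_I, mul_one,
            norm_mul]
          simp [Complex.norm_real, _root_.abs_of_nonneg Real.pi_pos.le]
        rw [hnorm] at ht
        have h1 : (1 : ℝ) ≤ |(n : ℝ)| := by
          rw [← Int.cast_abs]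
          exact_mod_cast Int.one_le_abs hn0
        nlinarith [Real.pi_pos]
    exact hLf.congr heq
  -- conclude
  refine ⟨fun t => (G t).im, fun t => ?_, fun t => ?_⟩
  · exact (Complex.imCLM.analyticAt (G t)).comp (hG t)
  · rw [← hexpG t, Complex.norm_exp, Complex.ofReal_exp, ← Complex.exp_add]
    congr 1
    rw [mul_comm Complex.I]
    exact (Complex.re_add_im (G t)).symm
end

section
/- For all real t, cos(π/2·(1/2 + i·t)) = (1/√2) · √(cosh(π t)) · exp(−i·arctan(tanh(π t/2))). -/
open Complex Real

theorem cos_half_plus_it (t : ℝ) :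
    Complex.cos ((π / 2 : ℂ) * (1 / 2 + Complex.I * (t : ℂ))) =
      (1 / Real.sqrt 2 : ℝ) * (Real.sqrt (Real.cosh (π * t)) : ℂ) *
        Complex.exp (-Complex.I * (Real.arctan (Real.tanh (π * t / 2)) : ℂ)) := by
  have harg : (π / 2 : ℂ) * (1 / 2 + Complex.I * (t : ℂ))
      = (↑(π/4) : ℂ) + (↑(π * t / 2) : ℂ) * Complex.I := by
    push_cast; ring
  rw [harg, Complex.cos_add]
  set u : ℝ := π * t / 2 with hu
  have hcosh : 0 < Real.cosh u := Real.cosh_pos u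
  have hc : Complex.cos ((u : ℂ) * Complex.I) = (Real.cosh u : ℂ) := by
    rw [Complex.cos_mul_I, ← Complex.ofReal_cosh]
  have hs : Complex.sin ((u : ℂ) * Complex.I) = (Real.sinh u : ℂ) * Complex.I := by
    rw [Complex.sin_mul_I, ← Complex.ofReal_sinh]
  have hcos4 : Complex.cos ((↑(π/4) : ℂ)) = ((Real.sqrt 2 / 2 : ℝ) : ℂ) := by
    rw [← Complex.ofReal_cos, Real.cos_pi_div_four]
  have hsin4 : Complex.sin ((↑(π/4) : ℂ)) = ((Real.sqrt 2 / 2 : ℝ) : ℂ) := by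
    rw [← Complex.ofReal_sin, Real.sin_pi_div_four]
  rw [hc, hs, hcos4, hsin4]
  have hexp : Complex.exp (-Complex.I * (↑(Real.arctan (Real.tanh u)) : ℂ))
      = ((Real.cos (Real.arctan (Real.tanh u)) : ℝ) : ℂ)
        - ((Real.sin (Real.arctan (Real.tanh u)) : ℝ) : ℂ) * Complex.I := by
    have h1 : -Complex.I * (↑(Real.arctan (Real.tanh u)) : ℂ)
        = (↑(-(Real.arctan (Real.tanh u))) : ℂ) * Complex.I := by push_cast; ring
    rw [h1, Complex.exp_mul_I, ← Complex.ofReal_cos, ← Complex.ofReal_sin]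
    push_cast [Real.cos_neg, Real.sin_neg]
    ring
  rw [hexp, Real.cos_arctan, Real.sin_arctan]
  -- key real identity
  have hs2pos : (0:ℝ) < Real.sqrt (1 + Real.tanh u ^ 2) :=
    Real.sqrt_pos.mpr (by positivity)
  have hsq : Real.sqrt (Real.cosh (π * t)) = Real.cosh u * Real.sqrt (1 + Real.tanh u ^ 2) := by
    have h2u : π * t = 2 * u := by rw [hu]; ring
    have hch : Real.cosh (π * t) = Real.cosh u ^ 2 * (1 + Real.tanh u ^ 2) := by
      rw [h2u, Real.cosh_two_mul, Real.tanh_eq_sinh_div_cosh]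
      have := Real.cosh_sq u
      field_simp
    rw [hch, Real.sqrt_mul (by positivity), Real.sqrt_sq hcosh.le]
  rw [hsq]
  have htanh : Real.tanh u * Real.cosh u = Real.sinh u := by
    rw [Real.tanh_eq_sinh_div_cosh]; field_simp
  have h2 : Real.sqrt 2 * Real.sqrt 2 = 2 := Real.mul_self_sqrt (by norm_num)
  have hs2ne : (Real.sqrt (1 + Real.tanh u ^ 2) : ℂ) ≠ 0 := by
    exact_mod_cast hs2pos.ne'
  have h2ne : (Real.sqrt 2 : ℂ) ≠ 0 := by
    have : (0:ℝ) < Real.sqrt 2 := Real.sqrt_pos.mpr (by norm_num)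
    exact_mod_cast this.ne'
  set a := Real.cosh u with ha
  set b := Real.sinh u with hb
  set c := Real.tanh u with hcdef
  set s := Real.sqrt (1 + c ^ 2) with hsdef
  set r := Real.sqrt 2 with hrdef
  have hC : (c:ℂ) * a = b := by exact_mod_cast htanh
  have hR : (r:ℂ) * r = 2 := by exact_mod_cast h2
  push_cast
  field_simp
  ring_nf
  linear_combination (↑a - ↑b*Complex.I) * hR + (2*Complex.I) * hC
end

section
/- If f is a non-constant real analytic function ℝ → ℂ with phase decomposition f(t) = U(t)·exp(i·(ph f)(t)) where U and ph f are real analytic and real valued, then for every real t, (ph f)(t) = (ph f)(0) + ∫₀ᵗ Im(f'(x)/f(x)) dx, where the integrand Im(f'/f) extends to a real analytic function on ℝ (the singularities at zeros of f being removable). -/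
open Complex Real MeasureTheory intervalIntegral

theorem phase_eq_integral_im_logDeriv
    (f : ℝ → ℂ) (f' : ℝ → ℂ) (U phf : ℝ → ℝ)
    (hf : ∀ t : ℝ, AnalyticAt ℝ f t)
    (hf' : ∀ t : ℝ, HasDerivAt f (f' t) t)
    (hnonconst : ∃ a b : ℝ, f a ≠ f b)
    (hU : ∀ t : ℝ, AnalyticAt ℝ U t) (hph : ∀ t : ℝ, AnalyticAt ℝ phf t)
    (hdecomp : ∀ t : ℝ, f t = (U t : ℂ) * Complex.exp (Complex.I * (phf t : ℂ))) :
    ∃ h : ℝ → ℝ, (∀ t : ℝ, AnalyticAt ℝ h t) ∧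
      (∀ x : ℝ, f x ≠ 0 → h x = (f' x / f x).im) ∧
      ∀ t : ℝ, phf t = phf 0 + ∫ x in (0:ℝ)..t, h x := by
  refine ⟨deriv phf, fun t => (AnalyticOnNhd.deriv (fun x _ => hph x) : AnalyticOnNhd ℝ (deriv phf) Set.univ) t (Set.mem_univ t), ?_, ?_⟩
  · intro x hx
    have hUx : U x ≠ 0 := by
      intro h0
      apply hx
      rw [hdecomp x, h0]
      simp
    have hphd : HasDerivAt phf (deriv phf x) x := (hph x).differentiableAt.hasDerivAt
    have hUd : HasDerivAt U (deriv U x) x := (hU x).differentiableAt.hasDerivAt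
    have hexp : HasDerivAt (fun t => Complex.exp (Complex.I * (phf t : ℂ)))
        (Complex.I * (deriv phf x) * Complex.exp (Complex.I * (phf x : ℂ))) x := by
      have := ((hphd.ofReal_comp).const_mul Complex.I).cexp
      simpa [mul_comm, mul_assoc] using this
    have hfd : HasDerivAt f
        ((Complex.ofReal (deriv U x)) * Complex.exp (Complex.I * (phf x : ℂ)) +
          (U x : ℂ) * (Complex.I * (deriv phf x) * Complex.exp (Complex.I * (phf x : ℂ)))) x := by
      have := (hUd.ofReal_comp.mul hexp)
      exact (this.congr_deriv rfl).congr_of_eventuallyEq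
        (Filter.Eventually.of_forall fun t => (hdecomp t))
    have heq : f' x = (Complex.ofReal (deriv U x)) * Complex.exp (Complex.I * (phf x : ℂ)) +
        (U x : ℂ) * (Complex.I * (deriv phf x) * Complex.exp (Complex.I * (phf x : ℂ))) :=
      (hf' x).unique hfd
    rw [heq, hdecomp x]
    have he : Complex.exp (Complex.I * (phf x : ℂ)) ≠ 0 := Complex.exp_ne_zero _
    have hUC : (U x : ℂ) ≠ 0 := by exact_mod_cast hUx
    rw [show ((Complex.ofReal (deriv U x)) * Complex.exp (Complex.I * (phf x : ℂ)) +
        (U x : ℂ) * (Complex.I * (deriv phf x) * Complex.exp (Complex.I * (phf x : ℂ)))) /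
        ((U x : ℂ) * Complex.exp (Complex.I * (phf x : ℂ)))
        = Complex.ofReal (deriv U x / U x) + Complex.I * Complex.ofReal (deriv phf x) by
      push_cast
      field_simp]
    simp
  · intro t
    have hcont : Continuous (deriv phf) := by
      have : AnalyticOnNhd ℝ (deriv phf) Set.univ := fun x _ => (AnalyticOnNhd.deriv (fun y _ => hph y) : AnalyticOnNhd ℝ (deriv phf) Set.univ) x (Set.mem_univ x)
      exact continuousOn_univ.mp this.continuousOn
    have := intervalIntegral.integral_deriv_eq_sub
      (f := phf) (a := 0) (b := t)
      (fun x _ => (hph x).differentiableAt) (hcont.intervalIntegrable 0 t)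
    linarith [this]
end

section
/- For all real t, Γ(1/2 + i·t) = √(π / cosh(π t)) · exp(i·(2·ϑ(t) + t·log(2π) + arctan(tanh(π t/2)))), where ϑ(t) is the Riemann–Siegel theta function. -/
open Complex Real

theorem Gamma_half_plus_it
    (ϑ : ℝ → ℝ) (hϑa : ∀ t : ℝ, AnalyticAt ℝ ϑ t) (hϑ0 : ϑ 0 = 0)
    (hΓ : ∀ t : ℝ, Complex.Gamma (1 / 4 + Complex.I * (t : ℂ) / 2) =
      (‖Complex.Gamma (1 / 4 + Complex.I * (t : ℂ) / 2)‖ : ℂ) *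
        Complex.exp (Complex.I * ((ϑ t + t / 2 * Real.log π : ℝ) : ℂ)))
    (t : ℝ) :
    Complex.Gamma (1 / 2 + Complex.I * (t : ℂ)) =
      (Real.sqrt (π / Real.cosh (π * t)) : ℂ) *
        Complex.exp (Complex.I *
          ((2 * ϑ t + t * Real.log (2 * π) + Real.arctan (Real.tanh (π * t / 2)) : ℝ) : ℂ)) := by
  have hπ0 : (0:ℝ) < π := Real.pi_pos
  have hGs := hΓ t
  have hC0 := Real.cosh_two_mul (π * t / 2)
  rw [show 2 * (π * t / 2) = π * t by ring] at hC0
  set s : ℂ := 1 / 4 + Complex.I * (t : ℂ) / 2 with hs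
  set R : ℝ := ‖Complex.Gamma s‖ with hR
  set φ : ℝ := ϑ t + t / 2 * Real.log π with hφ
  set c : ℝ := Real.cosh (π * t / 2) with hc
  set sh : ℝ := Real.sinh (π * t / 2) with hsh
  set C : ℝ := Real.cosh (π * t) with hCdef
  set α : ℝ := Real.arctan (Real.tanh (π * t / 2)) with hα
  have hcpos : 0 < c := Real.cosh_pos _
  have hCpos : 0 < C := Real.cosh_pos _
  have hC : C = c ^ 2 + sh ^ 2 := hC0
  have hsqrtCpos : 0 < Real.sqrt C := Real.sqrt_pos.mpr hCpos
  have hs' : s = ((1/4 : ℝ):ℂ) + ((t/2 : ℝ):ℂ) * Complex.I := by rw [hs]; push_cast; ring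
  -- Gamma s ≠ 0
  have ha : Complex.Gamma s ≠ 0 := by
    apply Complex.Gamma_ne_zero_of_re_pos
    simp [hs']
  have hRpos : 0 < R := norm_pos_iff.mpr ha
  have hRne : ((R:ℝ):ℂ) ≠ 0 := by exact_mod_cast (ne_of_gt hRpos)
  -- exp(I α) = (c + sh I)/√C
  have h1tan : 1 + Real.tanh (π * t / 2) ^ 2 = C / c ^ 2 := by
    rw [Real.tanh_eq_sinh_div_cosh, hC, ← hc, ← hsh]
    field_simp
  have hsqrtdiv : Real.sqrt (C / c ^ 2) = Real.sqrt C / c := by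
    rw [Real.sqrt_div hCpos.le, Real.sqrt_sq hcpos.le]
  have hcosα : Real.cos α = c / Real.sqrt C := by
    rw [hα, Real.cos_arctan, h1tan, hsqrtdiv]
    field_simp
  have hsinα : Real.sin α = sh / Real.sqrt C := by
    rw [hα, Real.sin_arctan, h1tan, hsqrtdiv, Real.tanh_eq_sinh_div_cosh, ← hc, ← hsh]
    field_simp
  have hA : Complex.exp (Complex.I * (α:ℂ)) = ((c:ℂ) + (sh:ℂ) * Complex.I) / ((Real.sqrt C : ℝ):ℂ) := by
    rw [mul_comm, Complex.exp_mul_I, ← Complex.ofReal_cos, ← Complex.ofReal_sin, hcosα, hsinα]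
    push_cast
    ring
  -- sin (π s)
  have hsinπs : Complex.sin ((π:ℂ) * s) = ((Real.sqrt 2 / 2 : ℝ):ℂ) * ((c:ℂ) + (sh:ℂ) * Complex.I) := by
    have h1 : (π:ℂ) * s = ((π/4 : ℝ):ℂ) + ((π * t / 2 : ℝ):ℂ) * Complex.I := by
      rw [hs]; push_cast; ring
    rw [h1, Complex.sin_add_mul_I, ← Complex.ofReal_sin, ← Complex.ofReal_cos,
        ← Complex.ofReal_cosh, ← Complex.ofReal_sinh, Real.sin_pi_div_four, Real.cos_pi_div_four,
        ← hc, ← hsh]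
    push_cast; ring
  have hsinconj : (starRingEnd ℂ) (Complex.sin ((π:ℂ) * s)) =
      ((Real.sqrt 2 / 2 : ℝ):ℂ) * ((c:ℂ) - (sh:ℂ) * Complex.I) := by
    rw [hsinπs, map_mul, map_add, map_mul, Complex.conj_I, Complex.conj_ofReal,
        Complex.conj_ofReal, Complex.conj_ofReal]
    ring
  have hden : ((c:ℝ):ℂ) - (sh:ℂ) * Complex.I ≠ 0 := by
    intro h
    have := congrArg Complex.re h
    simp at this
    exact absurd this (ne_of_gt hcpos)
  have hden' : ((c:ℝ):ℂ) + (sh:ℂ) * Complex.I ≠ 0 := by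
    intro h
    have := congrArg Complex.re h
    simp at this
    exact absurd this (ne_of_gt hcpos)
  have hhalfne : ((Real.sqrt 2 / 2 : ℝ):ℂ) ≠ 0 := by
    have : (0:ℝ) < Real.sqrt 2 / 2 := by positivity
    exact_mod_cast this.ne'
  have hsinne : Complex.sin ((π:ℂ) * s) ≠ 0 := by
    rw [hsinπs]; exact mul_ne_zero hhalfne hden'
  -- Gamma (s + 1/2) = conj (Gamma (1 - s))
  have hconj : (starRingEnd ℂ) (1 - s) = s + 1/2 := by
    rw [hs']
    rw [map_sub, map_one, map_add, map_mul, Complex.conj_I, Complex.conj_ofReal,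
        Complex.conj_ofReal]
    push_cast; ring
  have hGs15 : Complex.Gamma (s + 1/2) = (starRingEnd ℂ) (Complex.Gamma (1 - s)) := by
    rw [← Complex.Gamma_conj, hconj]
  have hGconj : (starRingEnd ℂ) (Complex.Gamma s) = ((R:ℝ):ℂ) * Complex.exp (-(Complex.I * (φ:ℂ))) := by
    rw [hGs, map_mul, Complex.conj_ofReal, ← Complex.exp_conj, map_mul, Complex.conj_I,
        Complex.conj_ofReal, neg_mul]
  have hsqrt2 : ((Real.sqrt 2 : ℝ):ℂ) * ((Real.sqrt 2 : ℝ):ℂ) = 2 := by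
    rw [← Complex.ofReal_mul, Real.mul_self_sqrt (by norm_num)]
    norm_num
  have hsqrtC : ((Real.sqrt C : ℝ):ℂ) * ((Real.sqrt C : ℝ):ℂ) = ((C:ℝ):ℂ) := by
    rw [← Complex.ofReal_mul, Real.mul_self_sqrt hCpos.le]
  have huv : ((c:ℝ):ℂ) ^ 2 + ((sh:ℝ):ℂ) ^ 2 = ((C:ℝ):ℂ) := by
    rw [← Complex.ofReal_pow, ← Complex.ofReal_pow, ← Complex.ofReal_add, hC]
  have hsqrtCne : ((Real.sqrt C : ℝ):ℂ) ≠ 0 := by exact_mod_cast (ne_of_gt hsqrtCpos)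
  have hsqrt2ne : ((Real.sqrt 2 : ℝ):ℂ) ≠ 0 := by
    have : (0:ℝ) < Real.sqrt 2 := by positivity
    exact_mod_cast this.ne'
  have hsqrtπne : ((Real.sqrt π : ℝ):ℂ) ≠ 0 := by
    have : (0:ℝ) < Real.sqrt π := Real.sqrt_pos.mpr hπ0
    exact_mod_cast this.ne'
  -- the product
  have hprod : Complex.Gamma s * Complex.Gamma (s + 1/2) =
      ((π * Real.sqrt 2 / Real.sqrt C : ℝ):ℂ) * Complex.exp (Complex.I * ((2*φ + α : ℝ):ℂ)) := by
    have h1s : Complex.Gamma (1 - s) = (π:ℂ) / Complex.sin ((π:ℂ) * s) / Complex.Gamma s := by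
      have href := Complex.Gamma_mul_Gamma_one_sub s
      rw [eq_div_iff hsinne] at href
      rw [div_div, eq_div_iff (mul_ne_zero hsinne ha)]
      linear_combination href
    rw [hGs15, h1s, map_div₀, map_div₀, Complex.conj_ofReal, hGconj, hsinconj, hGs]
    rw [show ((2*φ + α : ℝ):ℂ) = (φ:ℂ) + (φ:ℂ) + (α:ℂ) by push_cast; ring]
    rw [mul_add, mul_add, Complex.exp_add, Complex.exp_add, hA, Complex.exp_neg]
    push_cast
    have hden2 : ((c:ℝ):ℂ) - Complex.I * (sh:ℂ) ≠ 0 := by rw [mul_comm]; exact hden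
    field_simp
    have hI : Complex.I ^ 2 = -1 := Complex.I_sq
    linear_combination (2:ℂ) * hsqrtC + (((Real.sqrt 2:ℝ):ℂ)^2*((sh:ℝ):ℂ)^2) * hI
      - (((Real.sqrt 2:ℝ):ℂ)^2) * huv - ((C:ℝ):ℂ) * hsqrt2
  -- 2^(1/2 - I t)
  have h2pow : (2:ℂ) ^ ((1:ℂ)/2 - Complex.I * (t:ℂ)) =
      ((Real.sqrt 2 : ℝ):ℂ) * Complex.exp (-(Complex.I * ((t * Real.log 2 : ℝ):ℂ))) := by
    rw [Complex.cpow_def_of_ne_zero two_ne_zero]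
    have hlog2 : Complex.log 2 = ((Real.log 2 : ℝ):ℂ) := by
      rw [show (2:ℂ) = ((2:ℝ):ℂ) by norm_num, ← Complex.ofReal_log (by norm_num : (0:ℝ) ≤ 2)]
    rw [hlog2, show ((Real.log 2 : ℝ):ℂ) * ((1:ℂ)/2 - Complex.I * (t:ℂ))
          = ((Real.log 2 / 2 : ℝ):ℂ) + (-(Complex.I * ((t * Real.log 2 : ℝ):ℂ))) by push_cast; ring,
        Complex.exp_add, ← Complex.ofReal_exp]
    congr 2
    rw [Real.sqrt_eq_rpow, Real.rpow_def_of_pos (by norm_num)]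
    ring_nf
  -- duplication
  have hdup := Complex.Gamma_mul_Gamma_add_half s
  rw [show (1:ℂ) - 2 * s = (1:ℂ)/2 - Complex.I * (t:ℂ) by rw [hs]; ring,
      show (2:ℂ) * s = 1/2 + Complex.I * (t:ℂ) by rw [hs]; ring,
      hprod, h2pow] at hdup
  have hM : ((Real.sqrt 2 : ℝ):ℂ) * Complex.exp (-(Complex.I * ((t * Real.log 2 : ℝ):ℂ)))
      * ((Real.sqrt π : ℝ):ℂ) ≠ 0 :=
    mul_ne_zero (mul_ne_zero hsqrt2ne (Complex.exp_ne_zero _)) hsqrtπne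
  have key : ((π * Real.sqrt 2 / Real.sqrt C : ℝ):ℂ) * Complex.exp (Complex.I * ((2*φ + α : ℝ):ℂ)) =
      (((Real.sqrt (π / C) : ℝ):ℂ) *
        Complex.exp (Complex.I * ((2 * ϑ t + t * Real.log (2 * π) + α : ℝ):ℂ))) *
      (((Real.sqrt 2 : ℝ):ℂ) * Complex.exp (-(Complex.I * ((t * Real.log 2 : ℝ):ℂ)))
        * ((Real.sqrt π : ℝ):ℂ)) := by
    have hΘ : (2 * ϑ t + t * Real.log (2 * π) + α : ℝ) = (2*φ + α) + t * Real.log 2 := by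
      rw [hφ, Real.log_mul (by norm_num) (ne_of_gt hπ0)]
      ring
    have hππ : Real.sqrt π * Real.sqrt π = π := Real.mul_self_sqrt hπ0.le
    have hreal : π * Real.sqrt 2 / Real.sqrt C = Real.sqrt (π / C) * Real.sqrt 2 * Real.sqrt π := by
      rw [Real.sqrt_div hπ0.le]
      field_simp
      linear_combination (-1:ℝ) * hππ
    have e1 : Complex.I * ((2*φ + α + t * Real.log 2 : ℝ):ℂ)
        = Complex.I * ((2*φ + α : ℝ):ℂ) + Complex.I * ((t * Real.log 2 : ℝ):ℂ) := by
      push_cast; ring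
    have hππC : ((Real.sqrt π : ℝ):ℂ) * ((Real.sqrt π : ℝ):ℂ) = (π:ℂ) := by
      rw [← Complex.ofReal_mul, hππ]
    rw [hΘ, hreal, e1, Complex.exp_add, Complex.exp_neg]
    push_cast
    field_simp
  apply mul_right_cancel₀ hM
  linear_combination key - hdup
end

section
/- For every real t, ϑ(t) = −(1/2)·(γ + log π + 3·log 2 + π/2)·t + Σ_{k=0}^∞ (2t/(4k+1) − arctan(2t/(4k+1))), where γ is the Euler–Mascheroni constant, and the series converges for all real t. -/
open Complex Real

namespace ThetaSeriesAux

open Filter Finset Topology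

/-! Elementary inequalities -/

lemma arctan_le_self' {x : ℝ} (hx : 0 ≤ x) : Real.arctan x ≤ x := by
  have hmono : Monotone (fun x : ℝ => x - Real.arctan x) := by
    apply monotone_of_deriv_nonneg
    · exact differentiable_id.sub Real.differentiable_arctan
    · intro y
      have h1 : HasDerivAt (fun x : ℝ => x - Real.arctan x) (1 - 1/(1+y^2)) y :=
        (hasDerivAt_id y).sub (Real.hasDerivAt_arctan y)
      rw [h1.deriv]
      have : 1/(1+y^2) ≤ 1 := by
        rw [div_le_one (by positivity)]; nlinarith [sq_nonneg y]
      linarith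
  have := hmono hx
  simpa [Real.arctan_zero] using this

lemma sub_arctan_le_cube {x : ℝ} (hx : 0 ≤ x) : x - Real.arctan x ≤ x^3 := by
  have hmono : Monotone (fun x : ℝ => x^3 + Real.arctan x - x) := by
    apply monotone_of_deriv_nonneg
    · exact ((differentiable_pow 3).add Real.differentiable_arctan).sub differentiable_id
    · intro y
      have h1 : HasDerivAt (fun x : ℝ => x^3 + Real.arctan x - x)
          ((3:ℕ) * y^2 + 1/(1+y^2) - 1) y := by
        have h := ((hasDerivAt_pow 3 y).add (Real.hasDerivAt_arctan y)).sub (hasDerivAt_id' y)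
        exact h.congr_deriv (by norm_num)
      rw [h1.deriv]
      have h2 : 1 - y^2 ≤ 1/(1+y^2) := by
        rw [le_div_iff₀ (by positivity)]
        nlinarith [sq_nonneg y, sq_nonneg (y^2)]
      push_cast
      nlinarith [sq_nonneg y]
  have := hmono hx
  simp only [Real.arctan_zero] at this
  nlinarith [this]

lemma abs_sub_arctan_le (x : ℝ) : |x - Real.arctan x| ≤ |x|^3 := by
  rcases le_or_gt 0 x with hx | hx
  · have h1 : (0:ℝ) ≤ x - Real.arctan x := by linarith [arctan_le_self' hx]
    rw [_root_.abs_of_nonneg h1, _root_.abs_of_nonneg hx]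
    exact sub_arctan_le_cube hx
  · have hx' : 0 ≤ -x := by linarith
    have h1 := arctan_le_self' hx'
    have h2 := sub_arctan_le_cube hx'
    rw [Real.arctan_neg] at h1 h2
    have h3 : x - Real.arctan x ≤ 0 := by linarith
    rw [_root_.abs_of_nonpos h3, _root_.abs_of_neg hx]
    nlinarith [h2]

/-! Grouped sums and the harmonic/Leibniz constants -/

lemma sum_range_two_mul (f : ℕ → ℝ) (n : ℕ) :
    ∑ i ∈ range (2*n), f i = ∑ k ∈ range n, (f (2*k) + f (2*k+1)) := by
  induction n with
  | zero => simp
  | succ n ih =>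
      have : 2 * (n+1) = (2*n + 1) + 1 := by ring
      rw [this, Finset.sum_range_succ, Finset.sum_range_succ, ih, Finset.sum_range_succ]
      ring

lemma sum_range_four_mul (f : ℕ → ℝ) (n : ℕ) :
    ∑ i ∈ range (4*n), f i = ∑ k ∈ range n, (f (4*k) + f (4*k+1) + f (4*k+2) + f (4*k+3)) := by
  induction n with
  | zero => simp
  | succ n ih =>
      have : 4 * (n+1) = (((4*n + 1) + 1) + 1) + 1 := by ring
      rw [this, Finset.sum_range_succ, Finset.sum_range_succ, Finset.sum_range_succ,
        Finset.sum_range_succ, ih, Finset.sum_range_succ]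
      ring

noncomputable def H (n : ℕ) : ℝ := ∑ k ∈ range n, 1/((k:ℝ)+1)

lemma tendsto_H_sub_log :
    Tendsto (fun n : ℕ => H n - Real.log n) atTop (𝓝 Real.eulerMascheroniConstant) := by
  apply Real.tendsto_harmonic_sub_log.congr
  intro n
  congr 1
  rw [H, harmonic]
  push_cast
  exact Finset.sum_congr rfl fun k _ => (one_div _).symm

noncomputable def R1 (n : ℕ) : ℝ := ∑ k ∈ range n, 1/(4*(k:ℝ)+1)

noncomputable def L (n : ℕ) : ℝ := ∑ i ∈ range n, (-1:ℝ)^i/(2*(i:ℝ)+1)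

lemma tendsto_L2 : Tendsto (fun n : ℕ => L (2*n)) atTop (𝓝 (π/4)) :=
  Real.tendsto_sum_pi_div_four.comp
    (Filter.tendsto_atTop_atTop.mpr fun b => ⟨b, fun a ha => by omega⟩)

lemma R1_eq (n : ℕ) : R1 n = H (4*n)/2 - H (2*n)/4 + L (2*n)/2 := by
  have h4 : H (4*n) = ∑ k ∈ range n,
      ((1/(4*(k:ℝ)+1) + 1/(4*(k:ℝ)+2)) + (1/(4*(k:ℝ)+3) + 1/(4*(k:ℝ)+4))) := by
    rw [H, sum_range_four_mul (fun i => 1/((i:ℝ)+1))]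
    apply Finset.sum_congr rfl
    intro k _
    push_cast
    ring
  have h2 : H (2*n) = ∑ k ∈ range n, (1/(2*(k:ℝ)+1) + 1/(2*(k:ℝ)+2)) := by
    rw [H, sum_range_two_mul (fun i => 1/((i:ℝ)+1))]
    apply Finset.sum_congr rfl
    intro k _
    push_cast
    ring
  have hL : L (2*n) = ∑ k ∈ range n, (1/(4*(k:ℝ)+1) - 1/(4*(k:ℝ)+3)) := by
    rw [L, sum_range_two_mul (fun i => (-1:ℝ)^i/(2*(i:ℝ)+1))]
    apply Finset.sum_congr rfl
    intro k _
    have h1 : (-1:ℝ)^(2*k) = 1 := by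
      rw [pow_mul]; norm_num
    have h2 : (-1:ℝ)^(2*k+1) = -1 := by
      rw [pow_succ, h1]; norm_num
    rw [h1, h2]
    push_cast
    ring
  rw [h4, h2, hL, R1, Finset.sum_div, Finset.sum_div, Finset.sum_div,
    ← Finset.sum_sub_distrib, ← Finset.sum_add_distrib]
  apply Finset.sum_congr rfl
  intro k _
  have hk : (0:ℝ) ≤ (k:ℝ) := Nat.cast_nonneg k
  field_simp
  ring

lemma tendsto_mul_atTop (c : ℕ) (hc : 0 < c) :
    Tendsto (fun n : ℕ => c * n) atTop atTop :=
  Filter.tendsto_atTop_atTop.mpr fun b => ⟨b, fun a ha => by nlinarith⟩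

lemma tendsto_R1 :
    Tendsto (fun n : ℕ => R1 n - H n / 4) atTop (𝓝 (π/8 + 3/4 * Real.log 2)) := by
  set γ := Real.eulerMascheroniConstant
  have e4 : Tendsto (fun n : ℕ => H (4*n) - Real.log ((4*n : ℕ))) atTop (𝓝 γ) :=
    tendsto_H_sub_log.comp (tendsto_mul_atTop 4 (by norm_num))
  have e2 : Tendsto (fun n : ℕ => H (2*n) - Real.log ((2*n : ℕ))) atTop (𝓝 γ) :=
    tendsto_H_sub_log.comp (tendsto_mul_atTop 2 (by norm_num))
  have e1 : Tendsto (fun n : ℕ => H n - Real.log n) atTop (𝓝 γ) := tendsto_H_sub_log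
  have key : Tendsto (fun n : ℕ =>
      (H (4*n) - Real.log ((4*n : ℕ)))/2 - (H (2*n) - Real.log ((2*n : ℕ)))/4
        - (H n - Real.log n)/4 + L (2*n)/2 + 3/4 * Real.log 2) atTop
      (𝓝 (γ/2 - γ/4 - γ/4 + (π/4)/2 + 3/4 * Real.log 2)) := by
    exact ((((e4.div_const 2).sub (e2.div_const 4)).sub (e1.div_const 4)).add
      (tendsto_L2.div_const 2)).add tendsto_const_nhds
  have hval : γ/2 - γ/4 - γ/4 + (π/4)/2 + 3/4 * Real.log 2 = π/8 + 3/4 * Real.log 2 := by ring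
  rw [hval] at key
  apply key.congr'
  filter_upwards [eventually_ge_atTop 1] with n hn
  have hn0 : (n:ℝ) ≠ 0 := by positivity
  have hlog4 : Real.log ((4*n : ℕ)) = 2 * Real.log 2 + Real.log n := by
    push_cast
    rw [Real.log_mul (by norm_num) hn0]
    rw [show (4:ℝ) = 2^2 by norm_num, Real.log_pow]
    push_cast
    ring
  have hlog2 : Real.log ((2*n : ℕ)) = Real.log 2 + Real.log n := by
    push_cast
    rw [Real.log_mul (by norm_num) hn0]
  rw [R1_eq n, hlog4, hlog2]
  ring

lemma tendsto_sum_d :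
    Tendsto (fun n : ℕ => ∑ k ∈ range n, (1/(4*((k:ℝ)+1)) - 1/(4*((k:ℝ)+1)+1)))
      atTop (𝓝 (1 - π/8 - 3/4 * Real.log 2)) := by
  have hid : ∀ n : ℕ, ∑ k ∈ range n, (1/(4*((k:ℝ)+1)) - 1/(4*((k:ℝ)+1)+1))
      = 1 + (H n / 4 - R1 (n+1)) := by
    intro n
    have h1 : ∑ k ∈ range n, (1/(4*((k:ℝ)+1))) = H n / 4 := by
      rw [H, Finset.sum_div]
      apply Finset.sum_congr rfl
      intro k _
      field_simp
    have h2 : R1 (n+1) = 1 + ∑ k ∈ range n, 1/(4*((k:ℝ)+1)+1) := by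
      rw [R1, Finset.sum_range_succ', add_comm]
      congr 1
      · norm_num
      · apply Finset.sum_congr rfl
        intro k _
        push_cast
        ring_nf
    rw [Finset.sum_sub_distrib, h1, h2]
    ring
  have key : Tendsto (fun n : ℕ => 1 + (H n / 4 - R1 (n+1))) atTop
      (𝓝 (1 - π/8 - 3/4 * Real.log 2)) := by
    have hs : Tendsto (fun n : ℕ => R1 (n+1) - H (n+1) / 4) atTop
        (𝓝 (π/8 + 3/4 * Real.log 2)) :=
      tendsto_R1.comp (tendsto_add_atTop_nat 1)
    have hd : Tendsto (fun n : ℕ => H (n+1) / 4 - H n / 4) atTop (𝓝 0) := by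
      have heq : ∀ n : ℕ, H (n+1) / 4 - H n / 4 = (1/((n:ℝ)+1))/4 := by
        intro n
        rw [H, H, Finset.sum_range_succ]
        ring
      rw [show (0:ℝ) = 0/4 by norm_num]
      apply Tendsto.congr (fun n => (heq n).symm)
      apply Tendsto.div_const
      exact tendsto_one_div_add_atTop_nhds_zero_nat
    have h := (hs.add hd).neg.const_add 1
    have hval : (1:ℝ) + -(π/8 + 3/4*Real.log 2 + 0) = 1 - π/8 - 3/4*Real.log 2 := by ring
    rw [hval] at h
    apply h.congr
    intro n
    ring
  exact key.congr fun n => (hid n).symm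

/-! The series `b` and the function `F` -/

noncomputable def b (s : ℝ) (k : ℕ) : ℝ :=
  s/(2*((k:ℝ)+1)) - Real.arctan (2*s/(4*((k:ℝ)+1)+1))

lemma b_bound {R : ℝ} (hR : 0 ≤ R) {s : ℝ} (hs : |s| ≤ R) (k : ℕ) :
    |b s k| ≤ (R/2 + 8*R^3) * (1/((k:ℝ)+1)^2) := by
  have hk1 : (0:ℝ) < (k:ℝ)+1 := by positivity
  have hk5 : (0:ℝ) < 4*((k:ℝ)+1)+1 := by positivity
  have h1 : b s k = (s/(2*((k:ℝ)+1)) - 2*s/(4*((k:ℝ)+1)+1))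
      + (2*s/(4*((k:ℝ)+1)+1) - Real.arctan (2*s/(4*((k:ℝ)+1)+1))) := by
    rw [b]; ring
  have h2 : |s/(2*((k:ℝ)+1)) - 2*s/(4*((k:ℝ)+1)+1)| ≤ (R/2) * (1/((k:ℝ)+1)^2) := by
    have he : s/(2*((k:ℝ)+1)) - 2*s/(4*((k:ℝ)+1)+1) = s / (2*((k:ℝ)+1)*(4*((k:ℝ)+1)+1)) := by
      field_simp
      ring
    have hden : (0:ℝ) < 2*((k:ℝ)+1)*(4*((k:ℝ)+1)+1) := by positivity
    rw [he, abs_div, abs_of_pos hden]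
    calc |s| / (2*((k:ℝ)+1)*(4*((k:ℝ)+1)+1)) ≤ R / (2*((k:ℝ)+1)^2) := by
          apply div_le_div₀ hR hs (by positivity)
          nlinarith [sq_nonneg ((k:ℝ)+1)]
    _ = (R/2) * (1/((k:ℝ)+1)^2) := by rw [mul_one_div, div_div]
  have h3 : |2*s/(4*((k:ℝ)+1)+1) - Real.arctan (2*s/(4*((k:ℝ)+1)+1))|
      ≤ (8*R^3) * (1/((k:ℝ)+1)^2) := by
    refine (abs_sub_arctan_le _).trans ?_
    have habs : |2*s/(4*((k:ℝ)+1)+1)| ≤ 2*R/((k:ℝ)+1) := by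
      rw [abs_div, abs_of_pos hk5, div_le_div_iff₀ hk5 hk1, abs_mul]
      have h2' : |(2:ℝ)| = 2 := by norm_num
      rw [h2']
      nlinarith [abs_nonneg s]
    calc |2*s/(4*((k:ℝ)+1)+1)|^3 ≤ (2*R/((k:ℝ)+1))^3 := by
          apply pow_le_pow_left₀ (abs_nonneg _) habs
    _ = 8*R^3 * (1/((k:ℝ)+1)^3) := by rw [div_pow, mul_one_div]; ring
    _ ≤ (8*R^3) * (1/((k:ℝ)+1)^2) := by
        apply mul_le_mul_of_nonneg_left _ (by positivity)
        apply one_div_le_one_div_of_le (by positivity)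
        nlinarith [sq_nonneg ((k:ℝ)+1)]
  calc |b s k| ≤ _ + _ := h1 ▸ abs_add_le _ _
  _ ≤ (R/2) * (1/((k:ℝ)+1)^2) + (8*R^3) * (1/((k:ℝ)+1)^2) := add_le_add h2 h3
  _ = (R/2 + 8*R^3) * (1/((k:ℝ)+1)^2) := by ring

lemma summable_inv_sq : Summable (fun k : ℕ => 1/((k:ℝ)+1)^2) := by
  have h := Real.summable_one_div_nat_pow.mpr (le_refl 2)
  have h2 := (summable_nat_add_iff 1).mpr h
  apply h2.congr
  intro k
  push_cast
  ring

lemma summable_b (s : ℝ) : Summable (b s) := by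
  apply Summable.of_abs
  apply Summable.of_nonneg_of_le (fun k => abs_nonneg _)
    (fun k => b_bound (abs_nonneg s) (le_refl _) k)
  exact (summable_inv_sq.mul_left _)

noncomputable def F (s : ℝ) : ℝ :=
  (∑' k, b s k) - Real.arctan (2*s) - s/2 * Real.eulerMascheroniConstant

lemma F_zero : F 0 = 0 := by
  simp [F, b]

lemma continuous_F : Continuous F := by
  have hts : ∀ s₀ : ℝ, ContinuousAt (fun s => ∑' k, b s k) s₀ := by
    intro s₀
    set R := |s₀| + 1 with hR
    have hR0 : (0:ℝ) ≤ R := by positivity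
    have hco : ContinuousOn (fun s => ∑' k, b s k) (Set.Ioo (-R) R) := by
      apply continuousOn_tsum (f := fun (k : ℕ) (s : ℝ) => b s k)
        (u := fun k : ℕ => (R/2 + 8*R^3) * (1/((k:ℝ)+1)^2))
      · intro k
        apply Continuous.continuousOn
        apply Continuous.sub
        · exact continuous_id.div_const _
        · exact Real.continuous_arctan.comp ((continuous_const.mul continuous_id).div_const _)
      · exact summable_inv_sq.mul_left _
      · intro k s hsmem
        have : |s| ≤ R := by
          rw [abs_le]
          exact ⟨(Set.mem_Ioo.mp hsmem).1.le, (Set.mem_Ioo.mp hsmem).2.le⟩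
        simpa using b_bound hR0 this k
    apply hco.continuousAt
    apply Ioo_mem_nhds
    · have := neg_abs_le s₀; linarith
    · have := le_abs_self s₀; linarith
  apply Continuous.sub
  apply Continuous.sub
  · exact continuous_iff_continuousAt.mpr hts
  · exact Real.continuous_arctan.comp (continuous_const.mul continuous_id)
  · exact (continuous_id.div_const 2).mul continuous_const

/-! The Gamma product/argument formula -/

noncomputable def zc (s : ℝ) : ℂ := 1/4 + Complex.I * (s:ℂ) / 2

lemma zc_re (s : ℝ) : (zc s).re = 1/4 := by simp [zc]
lemma zc_im (s : ℝ) : (zc s).im = s/2 := by simp [zc]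

lemma zc_add_nat_ne (s : ℝ) (j : ℕ) : zc s + j ≠ 0 := by
  intro h
  have hre : (zc s + j).re = 1/4 + j := by simp [zc_re]
  rw [h] at hre
  simp only [Complex.zero_re] at hre
  have : (0:ℝ) ≤ (j:ℝ) := Nat.cast_nonneg j
  linarith

lemma arg_zc_add (s : ℝ) (j : ℕ) :
    (Complex.log (zc s + j)).im = Real.arctan (2*s/(4*(j:ℝ)+1)) := by
  rw [Complex.log_im]
  have hre : (zc s + j).re = 1/4 + j := by simp [zc_re]
  have him : (zc s + j).im = s/2 := by simp [zc_im]
  have hrepos : 0 < (zc s + j).re := by rw [hre]; positivity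
  have h1 : Real.arctan (Real.tan (Complex.arg (zc s + j))) = Complex.arg (zc s + j) := by
    apply Real.arctan_tan
    · have := Complex.abs_arg_lt_pi_div_two_iff.mpr (Or.inl hrepos)
      linarith [abs_lt.mp this |>.1]
    · have := Complex.abs_arg_lt_pi_div_two_iff.mpr (Or.inl hrepos)
      linarith [abs_lt.mp this |>.2]
  rw [← h1, Complex.tan_arg, hre, him]
  congr 1
  field_simp
  ring

lemma gammaSeq_eq (s : ℝ) (n : ℕ) (hn : 1 ≤ n) :
    Complex.GammaSeq (zc s) n = ((Nat.factorial n : ℕ) : ℂ) *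
      Complex.exp ((Real.log n : ℂ) * zc s - ∑ j ∈ range (n+1), Complex.log (zc s + j)) := by
  rw [Complex.GammaSeq]
  have hn0 : (n:ℂ) ≠ 0 := by
    exact_mod_cast Nat.cast_ne_zero.mpr (by omega)
  have h1 : (n:ℂ) ^ (zc s) = Complex.exp ((Real.log n : ℂ) * zc s) := by
    rw [Complex.cpow_def_of_ne_zero hn0, Complex.natCast_log]
  have h2 : ∏ j ∈ range (n+1), (zc s + j) =
      Complex.exp (∑ j ∈ range (n+1), Complex.log (zc s + j)) := by
    rw [Complex.exp_sum]
    exact Finset.prod_congr rfl fun j _ => (Complex.exp_log (zc_add_nat_ne s j)).symm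
  rw [h1, h2, Complex.exp_sub]
  ring

noncomputable def E (s : ℝ) (n : ℕ) : ℝ :=
  s/2 * Real.log n - ∑ j ∈ range (n+1), Real.arctan (2*s/(4*(j:ℝ)+1))

lemma gammaSeq_polar (s : ℝ) (n : ℕ) (hn : 1 ≤ n) :
    Complex.GammaSeq (zc s) n = ((‖Complex.GammaSeq (zc s) n‖ : ℝ) : ℂ) *
      Complex.exp (Complex.I * (E s n : ℂ)) := by
  set w : ℂ := (Real.log n : ℂ) * zc s - ∑ j ∈ range (n+1), Complex.log (zc s + j) with hw
  have him : w.im = E s n := by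
    rw [hw, Complex.sub_im, Complex.mul_im, Complex.im_sum]
    simp only [Complex.ofReal_re, Complex.ofReal_im, zc_re, zc_im]
    rw [E]
    congr 1
    · ring
    · exact Finset.sum_congr rfl fun j _ => arg_zc_add s j
  have key := gammaSeq_eq s n hn
  have habs : ‖Complex.GammaSeq (zc s) n‖
      = ((Nat.factorial n : ℕ) : ℝ) * Real.exp w.re := by
    rw [key, norm_mul, Complex.norm_exp]
    congr 1
    simp
  have hsplit : Complex.exp w = (Real.exp w.re : ℂ) * Complex.exp (Complex.I * (E s n : ℂ)) := by
    rw [← him, Complex.ofReal_exp, ← Complex.exp_add]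
    congr 1
    rw [mul_comm Complex.I]
    exact (Complex.re_add_im w).symm
  rw [habs, key, ← hw, hsplit]
  push_cast
  ring

lemma E_eq (s : ℝ) (n : ℕ) :
    E s n = - Real.arctan (2*s) + (∑ k ∈ range n, b s k) - s/2 * (H n - Real.log n) := by
  have hshift : ∑ j ∈ range (n+1), Real.arctan (2*s/(4*(j:ℝ)+1))
      = Real.arctan (2*s) + ∑ k ∈ range n, Real.arctan (2*s/(4*((k:ℝ)+1)+1)) := by
    rw [Finset.sum_range_succ', add_comm]
    congr 1
    · norm_num
    · apply Finset.sum_congr rfl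
      intro k _
      push_cast
      ring_nf
  have hb : ∑ k ∈ range n, b s k
      = s/2 * H n - ∑ k ∈ range n, Real.arctan (2*s/(4*((k:ℝ)+1)+1)) := by
    rw [H, Finset.mul_sum, ← Finset.sum_sub_distrib]
    apply Finset.sum_congr rfl
    intro k _
    rw [b]
    congr 1
    rw [mul_one_div, div_div]
  rw [E, hshift, hb]
  ring

lemma tendsto_E (s : ℝ) : Tendsto (E s) atTop (𝓝 (F s)) := by
  have h1 : Tendsto (fun n : ℕ => ∑ k ∈ range n, b s k) atTop (𝓝 (∑' k, b s k)) :=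
    (summable_b s).hasSum.tendsto_sum_nat
  have h2 := tendsto_H_sub_log
  have h3 : Tendsto (fun n : ℕ =>
      - Real.arctan (2*s) + (∑ k ∈ range n, b s k) - s/2 * (H n - Real.log n)) atTop
      (𝓝 (- Real.arctan (2*s) + (∑' k, b s k) - s/2 * Real.eulerMascheroniConstant)) :=
    (tendsto_const_nhds.add h1).sub (h2.const_mul (s/2))
  have hval : - Real.arctan (2*s) + (∑' k, b s k) - s/2 * Real.eulerMascheroniConstant = F s := by
    rw [F]; ring
  rw [hval] at h3
  exact h3.congr fun n => (E_eq s n).symm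

lemma gamma_ne (s : ℝ) : Complex.Gamma (zc s) ≠ 0 := by
  apply Complex.Gamma_ne_zero
  intro m h
  have := congrArg Complex.re h
  rw [zc_re] at this
  simp only [Complex.neg_re, Complex.natCast_re] at this
  have : (0:ℝ) ≤ (m:ℝ) := Nat.cast_nonneg m
  linarith [congrArg Complex.re h, Nat.cast_nonneg (α := ℝ) m]

lemma gamma_polar (s : ℝ) :
    Complex.Gamma (zc s) = ((‖Complex.Gamma (zc s)‖ : ℝ) : ℂ) *
      Complex.exp (Complex.I * (F s : ℂ)) := by
  have hG : Tendsto (Complex.GammaSeq (zc s)) atTop (𝓝 (Complex.Gamma (zc s))) :=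
    Complex.GammaSeq_tendsto_Gamma (zc s)
  have habs : Tendsto (fun n => ((‖Complex.GammaSeq (zc s) n‖ : ℝ) : ℂ)) atTop
      (𝓝 ((‖Complex.Gamma (zc s)‖ : ℝ) : ℂ)) :=
    Complex.continuous_ofReal.continuousAt.tendsto.comp
      ((continuous_norm.continuousAt.tendsto).comp hG)
  have hexp : Tendsto (fun n => Complex.exp (Complex.I * (E s n : ℂ))) atTop
      (𝓝 (Complex.exp (Complex.I * (F s : ℂ)))) := by
    apply (Complex.continuous_exp.comp
      (continuous_const.mul Complex.continuous_ofReal)).continuousAt.tendsto.comp (tendsto_E s)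
  have hprod := habs.mul hexp
  have hcongr : ∀ᶠ n in atTop, Complex.GammaSeq (zc s) n
      = ((‖Complex.GammaSeq (zc s) n‖ : ℝ) : ℂ) * Complex.exp (Complex.I * (E s n : ℂ)) := by
    filter_upwards [eventually_ge_atTop 1] with n hn
    exact gammaSeq_polar s n hn
  exact tendsto_nhds_unique (hG.congr' hcongr) hprod

lemma a_bound (t : ℝ) (k : ℕ) :
    |2*t/(4*(k:ℝ)+1) - Real.arctan (2*t/(4*(k:ℝ)+1))| ≤ 8*|t|^3 * (1/((k:ℝ)+1)^2) := by
  have hk1 : (0:ℝ) < (k:ℝ)+1 := by positivity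
  have hk5 : (0:ℝ) < 4*(k:ℝ)+1 := by positivity
  refine (abs_sub_arctan_le _).trans ?_
  have habs : |2*t/(4*(k:ℝ)+1)| ≤ 2*|t|/((k:ℝ)+1) := by
    rw [abs_div, abs_of_pos hk5, div_le_div_iff₀ hk5 hk1, abs_mul]
    have h2' : |(2:ℝ)| = 2 := by norm_num
    rw [h2']
    nlinarith [abs_nonneg t]
  calc |2*t/(4*(k:ℝ)+1)|^3 ≤ (2*|t|/((k:ℝ)+1))^3 := by
        apply pow_le_pow_left₀ (abs_nonneg _) habs
  _ = 8*|t|^3 * (1/((k:ℝ)+1)^3) := by rw [div_pow, mul_one_div]; ring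
  _ ≤ 8*|t|^3 * (1/((k:ℝ)+1)^2) := by
      apply mul_le_mul_of_nonneg_left _ (by positivity)
      apply one_div_le_one_div_of_le (by positivity)
      nlinarith [sq_nonneg ((k:ℝ)+1)]

end ThetaSeriesAux

open ThetaSeriesAux Filter Finset Topology

theorem theta_series_expansion
    (ϑ : ℝ → ℝ) (hϑa : ∀ t : ℝ, AnalyticAt ℝ ϑ t) (hϑ0 : ϑ 0 = 0)
    (hΓ : ∀ t : ℝ, Complex.Gamma (1 / 4 + Complex.I * (t : ℂ) / 2) =
      ((‖Complex.Gamma (1 / 4 + Complex.I * (t : ℂ) / 2)‖ : ℝ) : ℂ) *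
        Complex.exp (Complex.I * ((ϑ t + t / 2 * Real.log π : ℝ) : ℂ)))
    (t : ℝ) :
    HasSum (fun k : ℕ => 2 * t / (4 * k + 1) - Real.arctan (2 * t / (4 * k + 1)))
      (ϑ t + (1 / 2) * (Real.eulerMascheroniConstant + Real.log π + 3 * Real.log 2 + π / 2) * t) := by
  -- Step 1 : ϑ s = F s - s/2 * log π for all s
  have hexp_eq : ∀ s : ℝ, Complex.exp (Complex.I * ((ϑ s + s / 2 * Real.log π : ℝ) : ℂ))
      = Complex.exp (Complex.I * (F s : ℂ)) := by
    intro s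
    have h1 := hΓ s
    have h2 := gamma_polar s
    rw [show (1 / 4 + Complex.I * (s:ℂ) / 2 : ℂ) = zc s from rfl] at h1
    have habsne : ((‖Complex.Gamma (zc s)‖ : ℝ) : ℂ) ≠ 0 := by
      rw [Complex.ofReal_ne_zero]
      exact norm_ne_zero_iff.mpr (gamma_ne s)
    exact mul_left_cancel₀ habsne (h1.symm.trans h2)
  have hint : ∀ s : ℝ, ∃ m : ℤ, ϑ s + s / 2 * Real.log π - F s = m * (2 * π) := by
    intro s
    have h1 := hexp_eq s
    have h2 : Complex.exp (Complex.I * ((ϑ s + s / 2 * Real.log π - F s : ℝ) : ℂ)) = 1 := by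
      have h3 : Complex.I * ((ϑ s + s / 2 * Real.log π - F s : ℝ) : ℂ)
          = Complex.I * ((ϑ s + s / 2 * Real.log π : ℝ) : ℂ) - Complex.I * ((F s : ℝ) : ℂ) := by
        push_cast
        ring
      rw [h3, Complex.exp_sub, h1, div_self (Complex.exp_ne_zero _)]
    rw [Complex.exp_eq_one_iff] at h2
    obtain ⟨m, hm⟩ := h2
    refine ⟨m, ?_⟩
    have him := congrArg Complex.im hm
    simpa using him
  -- Step 2 : the multiple of 2π is constantly zero
  set g : ℝ → ℝ := fun s => ϑ s + s / 2 * Real.log π - F s with hgdef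
  have hϑc : Continuous ϑ := continuous_iff_continuousAt.mpr fun s => (hϑa s).continuousAt
  have hgc : Continuous g :=
    (hϑc.add ((continuous_id.div_const 2).mul continuous_const)).sub continuous_F
  have hg0 : g 0 = 0 := by
    simp only [hgdef, hϑ0, F_zero]
    ring
  have hgzero : ∀ s : ℝ, g s = 0 := by
    intro s
    by_contra hne
    obtain ⟨m, hm⟩ := hint s
    have hm' : g s = m * (2 * π) := hm
    have hm0 : m ≠ 0 := by
      intro h
      apply hne
      rw [hm', h]
      simp
    have hπ : (0:ℝ) < π := Real.pi_pos
    have hiv := intermediate_value_uIcc (a := (0:ℝ)) (b := s) (hgc.continuousOn)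
    rcases lt_or_gt_of_ne hm0 with hmneg | hmpos
    · -- m ≤ -1, g s ≤ -2π, so -π is an intermediate value
      have hle : (m:ℝ) ≤ -1 := by exact_mod_cast (by omega : m ≤ -1)
      have hval : -π ∈ Set.uIcc (g 0) (g s) := by
        rw [hg0, hm']
        apply Set.mem_uIcc.mpr
        right
        constructor
        · nlinarith
        · linarith
      obtain ⟨x, _, hx⟩ := hiv hval
      obtain ⟨m', hm'2⟩ := hint x
      have : (m':ℝ) * (2 * π) = -π := by rw [← hm'2]; exact hx
      have h2m : (2*m' + 1 : ℝ) = 0 := by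
        have hπ0 : π ≠ 0 := ne_of_gt hπ
        field_simp at this
        nlinarith [this]
      have : (2*m' + 1 : ℤ) = 0 := by exact_mod_cast h2m
      omega
    · -- m ≥ 1, g s ≥ 2π, so π is an intermediate value
      have hle : (1:ℝ) ≤ (m:ℝ) := by exact_mod_cast hmpos
      have hval : π ∈ Set.uIcc (g 0) (g s) := by
        rw [hg0, hm']
        apply Set.mem_uIcc.mpr
        left
        constructor
        · linarith
        · nlinarith
      obtain ⟨x, _, hx⟩ := hiv hval
      obtain ⟨m', hm'2⟩ := hint x
      have : (m':ℝ) * (2 * π) = π := by rw [← hm'2]; exact hx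
      have h2m : (2*m' - 1 : ℝ) = 0 := by
        have hπ0 : π ≠ 0 := ne_of_gt hπ
        nlinarith [this]
      have : (2*m' - 1 : ℤ) = 0 := by exact_mod_cast h2m
      omega
  have hϑF : ∀ s : ℝ, ϑ s = F s - s / 2 * Real.log π := by
    intro s
    have := hgzero s
    rw [hgdef] at this
    simp only at this
    linarith
  -- Step 3 : summability of the target series
  set a : ℕ → ℝ := fun k : ℕ => 2 * t / (4 * k + 1) - Real.arctan (2 * t / (4 * k + 1)) with hadef
  have hsum_a : Summable a := by
    apply Summable.of_abs
    apply Summable.of_nonneg_of_le (fun k => abs_nonneg _) (fun k => a_bound t k)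
    exact summable_inv_sq.mul_left _
  -- Step 4 : identify the partial sums
  have ha0 : a 0 = 2 * t - Real.arctan (2 * t) := by
    simp only [hadef]
    norm_num
  have hshift_a : ∀ n : ℕ, ∑ k ∈ range (n+1), a k
      = a 0 + ((∑ k ∈ range n, b t k)
        - 2 * t * ∑ k ∈ range n, (1/(4*((k:ℝ)+1)) - 1/(4*((k:ℝ)+1)+1))) := by
    intro n
    rw [Finset.sum_range_succ']
    rw [Finset.mul_sum, ← Finset.sum_sub_distrib]
    rw [add_comm]
    congr 1
    apply Finset.sum_congr rfl
    intro k _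
    have hk1 : ((k:ℝ)+1) ≠ 0 := by positivity
    have hk2 : (2*((k:ℝ)+1)) ≠ 0 := by positivity
    have hk3 : (4*((k:ℝ)+1)) ≠ 0 := by positivity
    have hk4 : (4*((k:ℝ)+1)+1) ≠ 0 := by positivity
    have key : 2*t/(4*((k:ℝ)+1)+1)
        = t/(2*((k:ℝ)+1)) - 2*t*(1/(4*((k:ℝ)+1)) - 1/(4*((k:ℝ)+1)+1)) := by
      field_simp
      ring
    simp only [hadef, b]
    push_cast
    rw [key]
    ring
  have hLtail : Tendsto (fun n : ℕ => a 0 + ((∑ k ∈ range n, b t k)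
      - 2 * t * ∑ k ∈ range n, (1/(4*((k:ℝ)+1)) - 1/(4*((k:ℝ)+1)+1)))) atTop
      (𝓝 (a 0 + ((∑' k, b t k) - 2 * t * (1 - π/8 - 3/4 * Real.log 2)))) := by
    exact tendsto_const_nhds.add (((summable_b t).hasSum.tendsto_sum_nat).sub
      (tendsto_sum_d.const_mul (2*t)))
  have hpart : Tendsto (fun n : ℕ => ∑ k ∈ range n, a k) atTop
      (𝓝 (a 0 + ((∑' k, b t k) - 2 * t * (1 - π/8 - 3/4 * Real.log 2)))) := by
    rw [← tendsto_add_atTop_iff_nat 1]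
    exact hLtail.congr fun n => (hshift_a n).symm
  have huniq : ∑' k, a k = a 0 + ((∑' k, b t k) - 2 * t * (1 - π/8 - 3/4 * Real.log 2)) :=
    tendsto_nhds_unique hsum_a.hasSum.tendsto_sum_nat hpart
  -- Step 5 : conclude
  have hfinal : ϑ t + (1 / 2) * (Real.eulerMascheroniConstant + Real.log π
      + 3 * Real.log 2 + π / 2) * t = ∑' k, a k := by
    rw [huniq, ha0, hϑF t, F]
    ring
  rw [hfinal]
  exact hsum_a.hasSum
end

section
/- For every real t, ϑ'(t) = −(1/2)(γ + log π) − 2/(1 + 4t²) − Σ_{k=1}^∞ (2(4k+1)/((4k+1)² + 4t²) − 1/(2k)), where γ is the Euler–Mascheroni constant. -/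
open Complex Real Filter MeasureTheory Set Topology

lemma hasDerivAt_prod_range (n : ℕ) (z : ℂ) (hz : ∀ j ∈ Finset.range n, z + j ≠ 0) :
    HasDerivAt (fun s : ℂ => ∏ j ∈ Finset.range n, (s + j))
      ((∏ j ∈ Finset.range n, (z + j)) * ∑ j ∈ Finset.range n, (z + j)⁻¹) z := by
  induction n with
  | zero => simpa using hasDerivAt_const z (1 : ℂ)
  | succ n ih =>
    have hzn : z + n ≠ 0 := hz n (Finset.self_mem_range_succ n)
    have h1 := (ih (fun j hj => hz j (Finset.mem_range.2 ((Finset.mem_range.1 hj).trans (Nat.lt_succ_self n))))).mul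
      ((hasDerivAt_id z).add_const (n : ℂ))
    simp only [Finset.prod_range_succ, Finset.sum_range_succ]
    refine h1.congr_deriv ?_
    field_simp
    simp only [id]

lemma hasDerivAt_GammaSeq {n : ℕ} (hn : n ≠ 0) {z : ℂ}
    (hz : ∀ j ∈ Finset.range (n + 1), z + j ≠ 0) :
    HasDerivAt (fun s => Complex.GammaSeq s n)
      (Complex.GammaSeq z n *
        ((Real.log n : ℂ) - ∑ j ∈ Finset.range (n + 1), (z + j)⁻¹)) z := by
  have hn' : (n : ℂ) ≠ 0 := Nat.cast_ne_zero.2 hn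
  have hP : (∏ j ∈ Finset.range (n + 1), (z + j)) ≠ 0 :=
    Finset.prod_ne_zero_iff.2 hz
  have h1 : HasDerivAt (fun s : ℂ => (n : ℂ) ^ s * (Nat.factorial n : ℂ))
      ((n : ℂ) ^ z * Complex.log n * (Nat.factorial n : ℂ)) z :=
    ((hasStrictDerivAt_const_cpow (Or.inl hn')).hasDerivAt).mul_const _
  have h2 := (h1.div (hasDerivAt_prod_range (n + 1) z hz) hP)
  have hlog : Complex.log n = (Real.log n : ℂ) := (Complex.ofReal_log (Nat.cast_nonneg n)).symm
  simp only [Complex.GammaSeq]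
  refine h2.congr_deriv ?_
  rw [hlog]
  field_simp

lemma tendstoUniformlyOn_gammaSeq {a b : ℝ} (ha : 0 < a) (hab : a ≤ b) {K : Set ℂ}
    (hK : ∀ s ∈ K, s.re ∈ Set.Icc a b) :
    TendstoUniformlyOn (fun (n : ℕ) (s : ℂ) => Complex.GammaSeq s n) Complex.Gamma atTop K := by
  have hb : 0 < b := ha.trans_le hab
  set p : ℕ → ℝ → ℝ := fun n x => indicator (Ioc (0:ℝ) (n:ℝ)) (fun x => (1 - x/n)^n) x with hp
  set h : ℕ → ℝ → ℝ :=
    fun n x => |Real.exp (-x) - p n x| * (x ^ (a-1) + x ^ (b-1)) with hh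
  set g : ℝ → ℝ :=
    fun x => 2 * (Real.exp (-x) * x ^ (a-1) + Real.exp (-x) * x ^ (b-1)) with hg
  have hg_int : IntegrableOn g (Ioi (0:ℝ)) :=
    ((Real.GammaIntegral_convergent ha).add (Real.GammaIntegral_convergent hb)).const_mul 2
  have hmeas : ∀ n, AEStronglyMeasurable (h n) (volume.restrict (Ioi 0)) := by
    intro n
    apply Measurable.aestronglyMeasurable
    apply Measurable.mul
    · apply Measurable.abs
      apply Measurable.sub
      · exact (measurable_id.neg.exp)
      · exact Measurable.indicator (by fun_prop) measurableSet_Ioc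
    · fun_prop
  have hp_bound : ∀ n, ∀ x : ℝ, 0 < x → 0 ≤ p n x ∧ p n x ≤ Real.exp (-x) := by
    intro n x hx
    rcases eq_or_ne n 0 with rfl | hn
    · simp only [hp, Nat.cast_zero, Ioc_self, indicator_empty, Pi.zero_apply]
      exact ⟨le_refl _, (Real.exp_pos _).le⟩
    by_cases hxn : x ∈ Ioc (0:ℝ) (n:ℝ)
    · rw [hp]; simp only [indicator_of_mem hxn]
      have h1 : 0 ≤ 1 - x / n := by
        rw [sub_nonneg]
        exact div_le_one_of_le₀ hxn.2 (Nat.cast_nonneg n)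
      exact ⟨pow_nonneg h1 n, Real.one_sub_div_pow_le_exp_neg hxn.2⟩
    · rw [hp]; simp only [indicator_of_notMem hxn]
      exact ⟨le_refl _, (Real.exp_pos _).le⟩
  have hrpow_nonneg : ∀ x : ℝ, 0 ≤ x → 0 ≤ x ^ (a-1) + x ^ (b-1) := fun x hx =>
    add_nonneg (Real.rpow_nonneg hx _) (Real.rpow_nonneg hx _)
  have hbound : ∀ n, ∀ x : ℝ, 0 < x → h n x ≤ g x := by
    intro n x hx
    have hpb := hp_bound n x hx
    have habs : |Real.exp (-x) - p n x| ≤ 2 * Real.exp (-x) := by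
      rw [abs_sub_le_iff]
      constructor <;> nlinarith [Real.exp_pos (-x)]
    calc h n x ≤ 2 * Real.exp (-x) * (x ^ (a-1) + x ^ (b-1)) :=
          mul_le_mul_of_nonneg_right habs (hrpow_nonneg x hx.le)
      _ = g x := by rw [hg]; ring
  have h_int : ∀ n, IntegrableOn (h n) (Ioi (0:ℝ)) := by
    intro n
    refine Integrable.mono' hg_int (hmeas n) ?_
    rw [ae_restrict_iff' measurableSet_Ioi]
    filter_upwards with x hx
    rw [Real.norm_eq_abs, _root_.abs_of_nonneg (mul_nonneg (abs_nonneg _) (hrpow_nonneg x (le_of_lt hx)))]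
    exact hbound n x hx
  have hlim : ∀ x : ℝ, x ∈ Ioi (0:ℝ) → Tendsto (fun n => h n x) atTop (𝓝 0) := by
    intro x hx
    have hpt : Tendsto (fun n : ℕ => p n x) atTop (𝓝 (Real.exp (-x))) := by
      have hbase : Tendsto (fun n : ℕ => (1 - x/(n:ℝ))^n) atTop (𝓝 (Real.exp (-x))) := by
        have := Real.tendsto_one_add_div_pow_exp (-x)
        simpa [neg_div, sub_eq_add_neg] using this
      refine hbase.congr' ?_
      filter_upwards [eventually_ge_atTop ⌈x⌉₊] with n hn
      rw [Nat.ceil_le] at hn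
      have hmem : x ∈ Ioc (0:ℝ) (n:ℝ) := ⟨mem_Ioi.mp hx, hn⟩
      simp only [hp, indicator_of_mem hmem]
    have : Tendsto (fun n => h n x) atTop
        (𝓝 (|Real.exp (-x) - Real.exp (-x)| * (x ^ (a-1) + x ^ (b-1)))) :=
      ((tendsto_const_nhds.sub hpt).abs.mul_const _)
    simpa using this
  have hint_tendsto : Tendsto (fun n => ∫ x in Ioi (0:ℝ), h n x) atTop (𝓝 0) := by
    have := MeasureTheory.tendsto_integral_of_dominated_convergence g hmeas hg_int
      (fun n => by
        rw [ae_restrict_iff' measurableSet_Ioi]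
        filter_upwards with x hx
        rw [Real.norm_eq_abs,
          _root_.abs_of_nonneg (mul_nonneg (abs_nonneg _) (hrpow_nonneg x (le_of_lt hx)))]
        exact hbound n x hx)
      ((ae_restrict_iff' measurableSet_Ioi).mpr (ae_of_all _ hlim))
    simpa using this
  have key : ∀ n : ℕ, n ≠ 0 → ∀ s ∈ K, dist (Complex.Gamma s) (Complex.GammaSeq s n)
      ≤ ∫ x in Ioi (0:ℝ), h n x := by
    intro n hn s hs
    have hsre : 0 < s.re := ha.trans_le (hK s hs).1
    have hG : Complex.Gamma s = ∫ x in Ioi (0:ℝ), (Real.exp (-x) : ℂ) * (x:ℂ) ^ (s-1) := by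
      rw [Complex.Gamma_eq_integral hsre]; rfl
    set F : ℝ → ℂ := fun x => indicator (Ioc (0:ℝ) (n:ℝ))
      (fun x : ℝ => (((1 - x/(n:ℝ))^n : ℝ) : ℂ) * (x:ℂ)^(s-1)) x with hF
    have hGS : Complex.GammaSeq s n = ∫ x in Ioi (0:ℝ), F x := by
      rw [Complex.GammaSeq_eq_approx_Gamma_integral hsre hn,
        intervalIntegral.integral_of_le (by positivity : (0:ℝ) ≤ n), hF,
        MeasureTheory.integral_indicator measurableSet_Ioc,
        Measure.restrict_restrict_of_subset Ioc_subset_Ioi_self]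
    have hF_int : Integrable F (volume.restrict (Ioi 0)) := by
      rw [hF, integrable_indicator_iff (measurableSet_Ioc : MeasurableSet (Ioc (_:ℝ) _)),
        IntegrableOn, Measure.restrict_restrict_of_subset Ioc_subset_Ioi_self, ← IntegrableOn,
        ← intervalIntegrable_iff_integrableOn_Ioc_of_le (by positivity : (0:ℝ) ≤ (n:ℝ))]
      apply IntervalIntegrable.continuousOn_mul
      · refine intervalIntegral.intervalIntegrable_cpow' ?_
        rwa [sub_re, one_re, ← zero_sub, sub_lt_sub_iff_right]
      · apply Continuous.continuousOn
        exact RCLike.continuous_ofReal.comp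
          ((continuous_const.sub (continuous_id'.div_const (n : ℝ))).pow n)
    rw [dist_eq_norm, hG, hGS,
      ← MeasureTheory.integral_sub (Complex.GammaIntegral_convergent hsre) hF_int]
    refine MeasureTheory.norm_integral_le_of_norm_le (h_int n) ?_
    rw [ae_restrict_iff' measurableSet_Ioi]
    filter_upwards with x hx
    have hx0 : 0 < x := mem_Ioi.mp hx
    have hFx : F x = ((p n x : ℝ) : ℂ) * (x:ℂ)^(s-1) := by
      by_cases hxn : x ∈ Ioc (0:ℝ) (n:ℝ)
      · simp only [hF, hp, indicator_of_mem hxn]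
      · simp only [hF, hp, indicator_of_notMem hxn, Complex.ofReal_zero, zero_mul]
    have hsb : x ^ (s.re - 1) ≤ x ^ (a-1) + x ^ (b-1) := by
      rcases le_total x 1 with hx1 | hx1
      · refine le_add_of_le_of_nonneg ?_ (Real.rpow_nonneg hx0.le _)
        exact Real.rpow_le_rpow_of_exponent_ge hx0 hx1 (by linarith [(hK s hs).1])
      · refine le_add_of_nonneg_of_le (Real.rpow_nonneg hx0.le _) ?_
        exact Real.rpow_le_rpow_of_exponent_le hx1 (by linarith [(hK s hs).2])
    calc ‖(Real.exp (-x) : ℂ) * (x:ℂ) ^ (s-1) - F x‖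
        = |Real.exp (-x) - p n x| * x ^ (s.re - 1) := by
          rw [hFx, ← sub_mul, ← Complex.ofReal_sub, norm_mul, Complex.norm_real,
            Complex.norm_cpow_eq_rpow_re_of_pos hx0, sub_re, one_re,
            Real.norm_eq_abs]
      _ ≤ |Real.exp (-x) - p n x| * (x ^ (a-1) + x ^ (b-1)) :=
          mul_le_mul_of_nonneg_left hsb (abs_nonneg _)
      _ = h n x := rfl
  rw [Metric.tendstoUniformlyOn_iff]
  intro ε hε
  filter_upwards [hint_tendsto.eventually_lt_const hε, eventually_ne_atTop 0] with n hn1 hn2 s hs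
  exact lt_of_le_of_lt (key n hn2 s hs) hn1

lemma ne_zero_of_re_pos' {s : ℂ} (hs : 0 < s.re) (j : ℕ) : s + j ≠ 0 := by
  intro h
  have h2 : (s + j).re = 0 := by rw [h]; simp
  rw [Complex.add_re, Complex.natCast_re] at h2
  have h3 : (0:ℝ) ≤ (j:ℝ) := Nat.cast_nonneg j
  linarith

lemma gammaSeq_ne_zero {n : ℕ} (hn : n ≠ 0) {z : ℂ} (hz : 0 < z.re) :
    Complex.GammaSeq z n ≠ 0 := by
  have hn' : (n : ℂ) ≠ 0 := Nat.cast_ne_zero.2 hn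
  apply div_ne_zero
  · apply mul_ne_zero
    · rw [Complex.cpow_def_of_ne_zero hn']; exact Complex.exp_ne_zero _
    · exact_mod_cast Nat.cast_ne_zero.2 (Nat.factorial_ne_zero n)
  · exact Finset.prod_ne_zero_iff.2 fun j _ => ne_zero_of_re_pos' hz j

lemma tendsto_log_sub_sum {z : ℂ} (hz : 0 < z.re) :
    Tendsto (fun n : ℕ => ((Real.log n : ℂ) - ∑ j ∈ Finset.range (n + 1), (z + j)⁻¹)) atTop
      (𝓝 (deriv Complex.Gamma z / Complex.Gamma z)) := by
  set U : Set ℂ := {s : ℂ | 0 < s.re} with hUdef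
  have hUopen : IsOpen U := isOpen_lt continuous_const Complex.continuous_re
  have hTLU : TendstoLocallyUniformlyOn (fun (n : ℕ) (s : ℂ) => Complex.GammaSeq s n)
      Complex.Gamma atTop U := by
    rw [tendstoLocallyUniformlyOn_iff_forall_isCompact hUopen]
    intro K hKU hK
    rcases K.eq_empty_or_nonempty with rfl | hne
    · exact tendstoUniformlyOn_empty
    obtain ⟨sa, hsaK, hsa⟩ := hK.exists_isMinOn hne Complex.continuous_re.continuousOn
    obtain ⟨sb, hsbK, hsb⟩ := hK.exists_isMaxOn hne Complex.continuous_re.continuousOn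
    exact tendstoUniformlyOn_gammaSeq (hKU hsaK) ((hsa hsbK : sa.re ≤ sb.re))
      (fun s hs => ⟨hsa hs, hsb hs⟩)
  have hF : ∀ᶠ (n : ℕ) in atTop, DifferentiableOn ℂ (fun s => Complex.GammaSeq s n) U := by
    filter_upwards [eventually_ne_atTop 0] with n hn
    intro s hsU
    exact (hasDerivAt_GammaSeq hn fun j _ =>
      ne_zero_of_re_pos' (hsU : 0 < s.re) j).differentiableAt.differentiableWithinAt
  have h1 : Tendsto (fun n : ℕ => (deriv ∘ fun (n : ℕ) (s : ℂ) => Complex.GammaSeq s n) n z)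
      atTop (𝓝 (deriv Complex.Gamma z)) := (hTLU.deriv hF hUopen).tendsto_at (hz : z ∈ U)
  have h2 : ∀ᶠ n : ℕ in atTop, (deriv ∘ fun (n : ℕ) (s : ℂ) => Complex.GammaSeq s n) n z
      = Complex.GammaSeq z n * ((Real.log n : ℂ) - ∑ j ∈ Finset.range (n + 1), (z + j)⁻¹) := by
    filter_upwards [eventually_ne_atTop 0] with n hn
    exact (hasDerivAt_GammaSeq hn fun j _ => ne_zero_of_re_pos' hz j).deriv
  have hΓne : Complex.Gamma z ≠ 0 := by
    apply Complex.Gamma_ne_zero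
    intro m h
    have : z.re = (-(m:ℂ)).re := by rw [h]
    simp only [Complex.neg_re, Complex.natCast_re] at this
    have h3 : (0:ℝ) ≤ (m:ℝ) := Nat.cast_nonneg m
    linarith
  have h5 := ((h1.congr' h2).div (Complex.GammaSeq_tendsto_Gamma z) hΓne)
  refine h5.congr' ?_
  filter_upwards [eventually_ne_atTop 0] with n hn
  exact mul_div_cancel_left₀ _ (gammaSeq_ne_zero hn hz)

lemma gamma_arg_deriv (ϑ ϑ' : ℝ → ℝ)
    (hΓ : ∀ t : ℝ, Complex.Gamma (1 / 4 + Complex.I * (t : ℂ) / 2) =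
      (‖Complex.Gamma (1 / 4 + Complex.I * (t : ℂ) / 2)‖ : ℂ) *
        Complex.exp (Complex.I * ((ϑ t + t / 2 * Real.log π : ℝ) : ℂ)))
    (hϑ' : ∀ t : ℝ, HasDerivAt ϑ (ϑ' t) t) (t : ℝ) :
    ϑ' t + Real.log π / 2 =
      (deriv Complex.Gamma (1 / 4 + Complex.I * (t : ℂ) / 2) /
        Complex.Gamma (1 / 4 + Complex.I * (t : ℂ) / 2)).re / 2 := by
  set z₀ : ℂ := 1 / 4 + Complex.I * (t : ℂ) / 2 with hz₀
  have hz₀ne : ∀ m : ℕ, z₀ ≠ -m := by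
    intro m h
    have : z₀.re = (-(m:ℂ)).re := by rw [h]
    simp only [hz₀, Complex.add_re, Complex.neg_re, Complex.natCast_re, Complex.div_re,
      Complex.mul_re, Complex.I_re, Complex.I_im, Complex.ofReal_re, Complex.ofReal_im] at this
    norm_num at this
    nlinarith [Nat.cast_nonneg (α := ℝ) m, this]
  have hΓdiff : DifferentiableAt ℂ Complex.Gamma z₀ := Complex.differentiableAt_Gamma z₀ hz₀ne
  have hΓne : Complex.Gamma z₀ ≠ 0 := Complex.Gamma_ne_zero hz₀ne
  -- derivative of F
  have hinner : HasDerivAt (fun w : ℂ => 1 / 4 + Complex.I * w / 2) (Complex.I / 2) (t : ℂ) := by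
    have h1 : HasDerivAt (fun w : ℂ => Complex.I * w / 2) (Complex.I / 2) (t : ℂ) := by
      simpa using (((hasDerivAt_id ((t : ℝ) : ℂ)).const_mul Complex.I).div_const 2)
    simpa using h1.const_add (1 / 4 : ℂ)
  have hcomp : HasDerivAt (fun w : ℂ => Complex.Gamma (1 / 4 + Complex.I * w / 2))
      (deriv Complex.Gamma z₀ * (Complex.I / 2)) (t : ℂ) :=
    (HasDerivAt.comp ((t : ℝ) : ℂ) hΓdiff.hasDerivAt hinner)
  have hF : HasDerivAt (fun u : ℝ => Complex.Gamma (1 / 4 + Complex.I * (u : ℂ) / 2))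
      (deriv Complex.Gamma z₀ * (Complex.I / 2)) t := hcomp.comp_ofReal
  -- derivative of the phase
  set α : ℝ → ℝ := fun u => ϑ u + u / 2 * Real.log π with hαdef
  have hα : HasDerivAt α (ϑ' t + Real.log π / 2) t := by
    have h2 : HasDerivAt (fun u : ℝ => u / 2 * Real.log π) (Real.log π / 2) t := by
      have heq : (fun u : ℝ => u / 2 * Real.log π) = fun u => u * (Real.log π / 2) := by
        funext u; ring
      rw [heq]
      simpa using (hasDerivAt_id t).mul_const (Real.log π / 2)
    exact (hϑ' t).add h2
  set A : ℝ := ϑ' t + Real.log π / 2 with hA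
  have hαC : HasDerivAt (fun u : ℝ => ((α u : ℝ) : ℂ)) (A : ℂ) t := hα.ofReal_comp
  have hexp : HasDerivAt (fun u : ℝ => Complex.exp (-(Complex.I * ((α u : ℝ) : ℂ))))
      (Complex.exp (-(Complex.I * ((α t : ℝ) : ℂ))) * (-(Complex.I * (A : ℂ)))) t :=
    ((hαC.const_mul Complex.I).neg).cexp
  set G : ℝ → ℂ := fun u => Complex.Gamma (1 / 4 + Complex.I * (u : ℂ) / 2) *
      Complex.exp (-(Complex.I * ((α u : ℝ) : ℂ))) with hGdef
  have hGr : ∀ u : ℝ, G u =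
      ((‖Complex.Gamma (1 / 4 + Complex.I * (u : ℂ) / 2)‖ : ℝ) : ℂ) := by
    intro u
    rw [hGdef]
    simp only
    conv_lhs => rw [hΓ u]
    rw [mul_assoc, ← Complex.exp_add, add_neg_cancel, Complex.exp_zero, mul_one]
  set W : ℂ := Complex.exp (-(Complex.I * ((α t : ℝ) : ℂ))) with hW
  set G' : ℂ := deriv Complex.Gamma z₀ * (Complex.I / 2) * W +
      Complex.Gamma z₀ * (W * (-(Complex.I * (A : ℂ)))) with hG'
  have hGd : HasDerivAt G G' t := hF.mul hexp
  -- imaginary part of G' vanishes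
  have him : HasDerivAt (fun u : ℝ => (G u).im) G'.im t :=
    Complex.imCLM.hasFDerivAt.comp_hasDerivAt t hGd
  have him0 : G'.im = 0 := by
    have hzero : (fun u : ℝ => (G u).im) = fun _ => (0 : ℝ) := by
      funext u; rw [hGr u]; exact Complex.ofReal_im _
    have := hzero ▸ him
    exact this.unique (hasDerivAt_const t 0)
  -- algebra
  set R : ℝ := ‖Complex.Gamma z₀‖ with hR
  have hRpos : 0 < R := norm_pos_iff.mpr hΓne
  have hFW : Complex.Gamma z₀ * W = (R : ℂ) := hGr t
  have hWeq : W = (R : ℂ) / Complex.Gamma z₀ := by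
    rw [eq_div_iff hΓne, mul_comm]
    exact hFW
  have key : (deriv Complex.Gamma z₀ * (Complex.I / 2) * W).im = A * R := by
    have h3 : (Complex.Gamma z₀ * (W * (-(Complex.I * (A : ℂ))))).im = -(A * R) := by
      rw [show Complex.Gamma z₀ * (W * (-(Complex.I * (A : ℂ)))) =
        (Complex.Gamma z₀ * W) * (-(Complex.I * (A : ℂ))) by ring, hFW]
      simp [Complex.mul_im]
      ring
    have h4 := him0
    rw [hG', Complex.add_im, h3] at h4
    linarith
  rw [hWeq] at key
  have hrw : deriv Complex.Gamma z₀ * (Complex.I / 2) * ((R:ℂ) / Complex.Gamma z₀) =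
      (deriv Complex.Gamma z₀ / Complex.Gamma z₀ * (Complex.I / 2)) * (R:ℂ) := by
    simp only [div_eq_mul_inv]
    ring
  rw [hrw] at key
  have key2 : (deriv Complex.Gamma z₀ / Complex.Gamma z₀ * (Complex.I / 2)).im * R = A * R := by
    rw [← key, Complex.mul_im]
    simp
  have key3 : (deriv Complex.Gamma z₀ / Complex.Gamma z₀ * (Complex.I / 2)).im = A :=
    mul_right_cancel₀ hRpos.ne' key2
  rw [← key3, Complex.mul_im]
  simp [Complex.div_re, Complex.div_im]
  ring

theorem theta_deriv_expansion
    (ϑ ϑ' : ℝ → ℝ) (hϑa : ∀ t : ℝ, AnalyticAt ℝ ϑ t) (hϑ0 : ϑ 0 = 0)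
    (hΓ : ∀ t : ℝ, Complex.Gamma (1 / 4 + Complex.I * (t : ℂ) / 2) =
      (‖Complex.Gamma (1 / 4 + Complex.I * (t : ℂ) / 2)‖ : ℂ) *
        Complex.exp (Complex.I * ((ϑ t + t / 2 * Real.log π : ℝ) : ℂ)))
    (hϑ' : ∀ t : ℝ, HasDerivAt ϑ (ϑ' t) t)
    (t : ℝ) :
    HasSum (fun k : ℕ =>
        2 * (4 * (k + 1) + 1) / ((4 * (k + 1) + 1) ^ 2 + 4 * t ^ 2) - 1 / (2 * (k + 1)))
      (-(1 / 2) * (Real.eulerMascheroniConstant + Real.log π) - 2 / (1 + 4 * t ^ 2) - ϑ' t) := by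
  classical
  set z₀ : ℂ := 1 / 4 + Complex.I * (t : ℂ) / 2 with hz₀def
  have hz₀re : z₀.re = 1 / 4 := by
    simp [hz₀def, Complex.add_re, Complex.div_re, Complex.mul_re]
  have hz₀im : z₀.im = t / 2 := by
    simp [hz₀def, Complex.add_im, Complex.div_im, Complex.mul_im]
  have hz₀pos : 0 < z₀.re := by rw [hz₀re]; norm_num
  set β : ℝ := (deriv Complex.Gamma z₀ / Complex.Gamma z₀).re with hβ
  set γ : ℝ := Real.eulerMascheroniConstant with hγ
  -- the theta derivative
  have hβθ : β = 2 * ϑ' t + Real.log π := by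
    have := gamma_arg_deriv ϑ ϑ' hΓ hϑ' t
    rw [← hz₀def, ← hβ] at this
    linarith
  -- real part of digamma limit
  set c : ℕ → ℝ := fun j => ((z₀ + j)⁻¹).re with hc
  have hre : Tendsto (fun n : ℕ => Real.log (n : ℝ) - ∑ j ∈ Finset.range (n + 1), c j)
      atTop (𝓝 β) := by
    have h1 := (Complex.continuous_re.tendsto _).comp (tendsto_log_sub_sum hz₀pos)
    refine h1.congr fun n => ?_
    simp only [Function.comp, Complex.sub_re, Complex.ofReal_re, Complex.re_sum]
    rfl
  -- closed form of c, definition of d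
  set d : ℕ → ℝ := fun j => 2 * (4 * (j:ℝ) + 1) / ((4 * (j:ℝ) + 1) ^ 2 + 4 * t ^ 2) with hd
  have hcd : ∀ j : ℕ, c j = 2 * d j := by
    intro j
    have h1 : ((z₀ + j)⁻¹).re = (z₀ + j).re / Complex.normSq (z₀ + j) := Complex.inv_re _
    have h2 : (z₀ + j).re = 1/4 + j := by simp [Complex.add_re, hz₀re]
    have h3 : (z₀ + j).im = t/2 := by simp [Complex.add_im, hz₀im]
    have h4 : Complex.normSq (z₀ + j) = (1/4 + (j:ℝ))^2 + (t/2)^2 := by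
      rw [Complex.normSq_apply, h2, h3]; ring
    have hpos : (0:ℝ) < (1/4 + (j:ℝ))^2 + (t/2)^2 := by positivity
    have hpos2 : (0:ℝ) < (4 * (j:ℝ) + 1) ^ 2 + 4 * t ^ 2 := by positivity
    rw [hc]; simp only
    rw [h1, h2, h4, hd]; simp only
    field_simp
    ring
  -- harmonic sums
  have hharm : ∀ n : ℕ, ((harmonic n : ℚ) : ℝ) = ∑ j ∈ Finset.range n, ((j:ℝ) + 1)⁻¹ := by
    intro n
    rw [harmonic]
    push_cast
    rfl
  have hH : Tendsto (fun n : ℕ => (∑ j ∈ Finset.range n, ((j:ℝ) + 1)⁻¹) - Real.log n)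
      atTop (𝓝 γ) := by
    refine Real.tendsto_harmonic_sub_log.congr fun n => ?_
    rw [hharm n]
  -- log(n+1) - log n → 0
  have hlog0 : Tendsto (fun n : ℕ => Real.log ((n:ℝ) + 1) - Real.log n) atTop (𝓝 0) := by
    have h1 : Tendsto (fun n : ℕ => 1 + (n:ℝ)⁻¹) atTop (𝓝 (1 + 0)) :=
      tendsto_const_nhds.add tendsto_inv_atTop_nhds_zero_nat
    rw [add_zero] at h1
    have h2 := (Real.continuousAt_log one_ne_zero).tendsto.comp h1
    rw [Real.log_one] at h2
    refine h2.congr' ?_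
    filter_upwards [eventually_gt_atTop 0] with n hn
    have hn' : (0:ℝ) < n := by exact_mod_cast hn
    have h3 : 1 + (n:ℝ)⁻¹ = ((n:ℝ) + 1)/n := by field_simp
    rw [Function.comp_apply, h3, Real.log_div (by positivity) hn'.ne']
  have hre1 : Tendsto (fun n : ℕ => Real.log ((n:ℝ) + 1) - ∑ j ∈ Finset.range (n + 1), c j)
      atTop (𝓝 β) := by
    have h := hre.add hlog0
    rw [add_zero] at h
    refine h.congr fun n => ?_
    ring
  have hre2 : Tendsto (fun n : ℕ => Real.log (n:ℝ) - ∑ j ∈ Finset.range n, c j)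
      atTop (𝓝 β) := by
    rw [← tendsto_add_atTop_iff_nat 1]
    refine hre1.congr fun n => ?_
    push_cast
    ring_nf
  have hS : Tendsto (fun n : ℕ => ∑ j ∈ Finset.range n, (((j:ℝ) + 1)⁻¹ - c j)) atTop
      (𝓝 (γ + β)) := by
    have h := hH.add hre2
    refine h.congr fun n => ?_
    rw [Finset.sum_sub_distrib]
    ring
  have hT : Tendsto (fun n : ℕ => ∑ j ∈ Finset.range n, (d j - (2 * ((j:ℝ) + 1))⁻¹)) atTop
      (𝓝 (-(γ + β) / 2)) := by
    have h := hS.const_mul (-(1/2) : ℝ)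
    have he : -(1/2) * (γ + β) = -(γ + β)/2 := by ring
    rw [he] at h
    refine h.congr fun n => ?_
    rw [Finset.mul_sum]
    refine Finset.sum_congr rfl fun j _ => ?_
    rw [hcd j, hd]; simp only
    have hj : ((j:ℝ)+1) ≠ 0 := by positivity
    have hq : ((4*(j:ℝ)+1)^2+4*t^2) ≠ 0 := by positivity
    field_simp
    ring
  -- the target function
  set a : ℕ → ℝ := fun k : ℕ =>
      2 * (4 * ((k:ℝ) + 1) + 1) / ((4 * ((k:ℝ) + 1) + 1) ^ 2 + 4 * t ^ 2) - 1 / (2 * ((k:ℝ) + 1))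
    with ha
  have ha_eq : ∀ k : ℕ, a k = d (k + 1) - (2 * ((k:ℝ) + 1))⁻¹ := by
    intro k
    rw [ha, hd]; simp only
    push_cast
    ring
  -- partial sums identity
  have hPSid : ∀ n : ℕ, ∑ k ∈ Finset.range n, a k =
      (∑ j ∈ Finset.range (n + 1), (d j - (2 * ((j:ℝ) + 1))⁻¹)) - d 0 + (2 * ((n:ℝ) + 1))⁻¹ := by
    intro n
    induction n with
    | zero => norm_num
    | succ n ih =>
      rw [Finset.sum_range_succ, ih, ha_eq n, Finset.sum_range_succ
        (f := fun j : ℕ => d j - (2 * ((j:ℝ) + 1))⁻¹) (n := n + 1)]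
      push_cast
      have h1 : (2 * ((n:ℝ) + 1)) ≠ 0 := by positivity
      have h2 : (2 * ((n:ℝ) + 2)) ≠ 0 := by positivity
      field_simp
      ring
  have hinv0 : Tendsto (fun n : ℕ => (2 * ((n:ℝ) + 1))⁻¹) atTop (𝓝 0) := by
    have h1 : Tendsto (fun n : ℕ => 2 * ((n:ℝ) + 1)) atTop atTop := by
      apply Filter.Tendsto.const_mul_atTop two_pos
      exact tendsto_atTop_add_const_right atTop 1 tendsto_natCast_atTop_atTop
    exact h1.inv_tendsto_atTop
  have hT1 : Tendsto (fun n : ℕ => ∑ j ∈ Finset.range (n + 1), (d j - (2 * ((j:ℝ) + 1))⁻¹))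
      atTop (𝓝 (-(γ + β)/2)) := hT.comp (tendsto_add_atTop_nat 1)
  have hPS : Tendsto (fun n : ℕ => ∑ k ∈ Finset.range n, a k) atTop
      (𝓝 (-(γ + β)/2 - d 0 + 0)) := by
    refine Tendsto.congr (fun n => (hPSid n).symm) ?_
    exact (hT1.sub_const (d 0)).add hinv0
  -- summability
  have hsummable : Summable a := by
    apply Summable.of_norm_bounded (g := fun k : ℕ => (5 + 4*t^2)/32 * (1/((k:ℝ)+1)^2))
    · apply Summable.mul_left
      have h2 : Summable (fun n : ℕ => 1/(n:ℝ)^2) := Real.summable_one_div_nat_pow.2 one_lt_two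
      have h3 := (summable_nat_add_iff 1).2 h2
      refine h3.congr fun k => ?_
      push_cast
      ring
    · intro k
      have hj1 : (1:ℝ) ≤ (k:ℝ) + 1 := by
        have := Nat.cast_nonneg (α := ℝ) k
        linarith
      have hjpos : (0:ℝ) < (k:ℝ) + 1 := by linarith
      have hform : a k = -((4*((k:ℝ)+1)+1 + 4*t^2) /
          ((2*((k:ℝ)+1)) * ((4*((k:ℝ)+1)+1)^2 + 4*t^2))) := by
        rw [ha_eq k, hd]; simp only
        push_cast
        have hd1 : ((4*((k:ℝ)+1)+1)^2 + 4*t^2) ≠ 0 := by positivity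
        have hd2 : (2*((k:ℝ)+1)) ≠ 0 := by positivity
        field_simp
        ring
      rw [Real.norm_eq_abs, hform, abs_neg]
      have hnum : (0:ℝ) ≤ 4*((k:ℝ)+1)+1 + 4*t^2 := by positivity
      have hden : (0:ℝ) < (2*((k:ℝ)+1)) * ((4*((k:ℝ)+1)+1)^2 + 4*t^2) := by positivity
      rw [_root_.abs_of_nonneg (div_nonneg hnum hden.le)]
      rw [div_le_iff₀ hden]
      have hgoal : (5 + 4*t^2)/32 * (1/((k:ℝ)+1)^2) * ((2*((k:ℝ)+1)) * ((4*((k:ℝ)+1)+1)^2 + 4*t^2))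
          = (5 + 4*t^2) * ((4*((k:ℝ)+1)+1)^2 + 4*t^2) / (16 * ((k:ℝ)+1)) := by
        field_simp
        ring
      rw [hgoal, le_div_iff₀ (by positivity)]
      nlinarith [sq_nonneg t, hj1, hjpos, mul_nonneg (sq_nonneg t) hjpos.le,
        mul_nonneg (mul_nonneg (sq_nonneg t) hjpos.le) hjpos.le,
        mul_le_mul_of_nonneg_left hj1 (mul_nonneg (sq_nonneg t) hjpos.le)]
  -- conclude
  have h1 := hsummable.hasSum
  have h2 := h1.tendsto_sum_nat
  have h3 : ∑' k, a k = -(γ + β)/2 - d 0 + 0 := tendsto_nhds_unique h2 hPS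
  rw [h3] at h1
  have hd0 : d 0 = 2 / (1 + 4 * t^2) := by rw [hd]; norm_num
  have hL : -(γ + β)/2 - d 0 + 0 = -(1/2) * (γ + Real.log π) - 2/(1 + 4*t^2) - ϑ' t := by
    rw [hβθ, hd0]; ring
  rw [hL] at h1
  exact h1
end

section
/- For every real t, ϑ''(t) = 16·t · Σ_{k=0}^∞ (4k+1)/((4k+1)² + 4t²)². Consequently ϑ''(t) > 0 for t > 0, i.e. ϑ is strictly convex on (0, ∞). -/
open Complex Real

noncomputable section ThetaAux
namespace ThetaAux

/-- term of the second-derivative series -/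
def q (k : ℕ) (t : ℝ) : ℝ := (4 * k + 1) / ((4 * k + 1) ^ 2 + 4 * t ^ 2) ^ 2

def bb (n : ℕ) (t : ℝ) : ℝ :=
  t * Real.log (1 + 1 / (n + 1)) - 2 * Real.arctan (2 * t / (4 * (n + 1) + 1))

def db (n : ℕ) (t : ℝ) : ℝ :=
  Real.log (1 + 1 / (n + 1)) - 4 * (4 * (n + 1) + 1) / ((4 * (n + 1) + 1) ^ 2 + 4 * t ^ 2)

def ddb (n : ℕ) (t : ℝ) : ℝ :=
  32 * t * (4 * (n + 1) + 1) / ((4 * (n + 1) + 1) ^ 2 + 4 * t ^ 2) ^ 2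

lemma den_pos {c : ℝ} (hc : 0 < c) (t : ℝ) : 0 < c ^ 2 + 4 * t ^ 2 := by positivity

lemma hasDerivAt_arct (c : ℝ) (hc : 0 < c) (t : ℝ) :
    HasDerivAt (fun t : ℝ => Real.arctan (2 * t / c)) (2 * c / (c ^ 2 + 4 * t ^ 2)) t := by
  have h1 : HasDerivAt (fun t : ℝ => 2 * t / c) (2 / c) t := by
    simpa using ((hasDerivAt_id t).const_mul 2).div_const c
  have h2 := (Real.hasDerivAt_arctan (2 * t / c)).comp t h1
  refine h2.congr_deriv ?_
  have hd := den_pos hc t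
  field_simp
  ring

lemma hasDerivAt_bb (n : ℕ) (t : ℝ) : HasDerivAt (bb n) (db n t) t := by
  have hc : (0:ℝ) < 4 * (n + 1) + 1 := by positivity
  have h1 : HasDerivAt (fun t : ℝ => t * Real.log (1 + 1 / (n + 1)))
      (Real.log (1 + 1 / (n + 1))) t := hasDerivAt_mul_const _
  have h2 := ((hasDerivAt_arct _ hc t).const_mul 2)
  have h3 := h1.sub h2
  refine h3.congr_deriv ?_
  unfold db
  ring

lemma hasDerivAt_db (n : ℕ) (t : ℝ) : HasDerivAt (db n) (ddb n t) t := by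
  have hc : (0:ℝ) < 4 * (n + 1) + 1 := by positivity
  have hd := den_pos hc t
  have h1 : HasDerivAt (fun t : ℝ => (4 * ((n:ℝ) + 1) + 1) ^ 2 + 4 * t ^ 2) (8 * t) t := by
    have := ((hasDerivAt_pow 2 t).const_mul 4).const_add ((4 * ((n:ℝ) + 1) + 1) ^ 2)
    refine this.congr_deriv ?_
    simp; ring
  have h2 := (h1.inv hd.ne').const_mul (4 * (4 * ((n:ℝ) + 1) + 1))
  have h3 := (hasDerivAt_const t (Real.log (1 + 1 / ((n:ℝ) + 1)))).sub h2
  have h4 : db n = fun x : ℝ =>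
      Real.log (1 + 1 / ((n:ℝ) + 1)) - 4 * (4 * ((n:ℝ) + 1) + 1) * ((4 * ((n:ℝ) + 1) + 1) ^ 2 + 4 * x ^ 2)⁻¹ := by
    funext x
    unfold db
    ring
  rw [h4]
  refine h3.congr_deriv ?_
  unfold ddb
  field_simp
  ring


lemma summable_inv_sq : Summable (fun n : ℕ => 1 / ((n:ℝ) + 1) ^ 2) := by
  have h : Summable (fun n : ℕ => 1 / ((n:ℝ)) ^ 2) := by
    exact_mod_cast summable_one_div_nat_pow.mpr one_lt_two
  have h2 := (summable_nat_add_iff 1).mpr h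
  exact h2.congr fun n => by push_cast; ring

lemma summable_K (K : ℝ) : Summable (fun n : ℕ => K / ((n:ℝ) + 1) ^ 2) := by
  have := summable_inv_sq.mul_left K
  exact this.congr fun n => by ring

lemma one_le_cast_add_one (n : ℕ) : (1:ℝ) ≤ (n:ℝ) + 1 := by
  have := Nat.cast_nonneg (α := ℝ) n; linarith

lemma log_approx {m : ℝ} (hm : 1 ≤ m) : |Real.log (1 + 1 / m) - 1 / m| ≤ 1 / m ^ 2 := by
  have hm0 : 0 < m := by linarith
  set x : ℝ := 1 / m with hx
  have hx0 : 0 < x := by positivity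
  have h1 : Real.log (1 + x) ≤ x := by
    have := Real.log_le_sub_one_of_pos (show (0:ℝ) < 1 + x by linarith)
    linarith
  have h2 : x - x ^ 2 ≤ Real.log (1 + x) := by
    have h3 : Real.log (1 + x)⁻¹ ≤ (1 + x)⁻¹ - 1 :=
      Real.log_le_sub_one_of_pos (by positivity)
    rw [Real.log_inv] at h3
    have hy : (1 + x) * (1 + x)⁻¹ = 1 := mul_inv_cancel₀ (by linarith)
    nlinarith [sq_nonneg x, mul_pos hx0 hx0]
  have hxx : x ^ 2 = 1 / m ^ 2 := by rw [hx]; field_simp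
  rw [abs_le]
  constructor <;> nlinarith [sq_nonneg x]

lemma db_bound_aux {m c R y : ℝ} (hm : 1 ≤ m) (hc : c = 4 * m + 1) (hy : |y| ≤ R) :
    |Real.log (1 + 1 / m) - 4 * c / (c ^ 2 + 4 * y ^ 2)| ≤ (2 + 4 * R ^ 2) / m ^ 2 := by
  subst hc
  set c : ℝ := 4 * m + 1 with hc
  have hm0 : 0 < m := by linarith
  have hc0 : 0 < c := by rw [hc]; linarith
  have hmc : m ≤ c := by rw [hc]; linarith
  have hden : 0 < c ^ 2 + 4 * y ^ 2 := den_pos hc0 y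
  have hy2 : y ^ 2 ≤ R ^ 2 := by nlinarith [le_abs_self y, abs_nonneg y, _root_.sq_abs y]
  have hR0 : 0 ≤ R := le_trans (abs_nonneg y) hy
  have key : Real.log (1 + 1 / m) - 4 * c / (c ^ 2 + 4 * y ^ 2)
      = (Real.log (1 + 1 / m) - 1 / m) + (c + 4 * y ^ 2) / (m * (c ^ 2 + 4 * y ^ 2)) := by
    rw [eq_comm, hc]
    field_simp
    ring
  have h2 : 0 ≤ (c + 4 * y ^ 2) / (m * (c ^ 2 + 4 * y ^ 2)) := by positivity
  have h3 : (c + 4 * y ^ 2) / (m * (c ^ 2 + 4 * y ^ 2)) ≤ (1 + 4 * R ^ 2) / m ^ 2 := by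
    rw [div_le_div_iff₀ (by positivity) (by positivity)]
    rw [hc]
    have e1 : (4 * m + 1) * m ^ 2 ≤ m * (4 * m + 1) ^ 2 := by nlinarith
    have e0 : m ^ 2 ≤ m * (4 * m + 1) ^ 2 := by nlinarith
    have e2 : 4 * y ^ 2 * m ^ 2 ≤ 4 * R ^ 2 * (m * (4 * m + 1) ^ 2) := by nlinarith
    nlinarith [mul_pos hm0 (den_pos (show (0:ℝ) < 4 * m + 1 by linarith) y), sq_nonneg y,
      mul_nonneg (mul_nonneg hR0 hR0) (mul_nonneg hm0.le (sq_nonneg y))]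
  have h1 := log_approx hm
  rw [key]
  calc |Real.log (1 + 1 / m) - 1 / m + (c + 4 * y ^ 2) / (m * (c ^ 2 + 4 * y ^ 2))|
      ≤ |Real.log (1 + 1 / m) - 1 / m| + |(c + 4 * y ^ 2) / (m * (c ^ 2 + 4 * y ^ 2))| :=
        abs_add_le _ _
    _ = |Real.log (1 + 1 / m) - 1 / m| + (c + 4 * y ^ 2) / (m * (c ^ 2 + 4 * y ^ 2)) := by
        rw [_root_.abs_of_nonneg h2]
    _ ≤ 1 / m ^ 2 + (1 + 4 * R ^ 2) / m ^ 2 := add_le_add h1 h3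
    _ = (2 + 4 * R ^ 2) / m ^ 2 := by ring

lemma db_bound (R : ℝ) (n : ℕ) {y : ℝ} (hy : |y| ≤ R) :
    |db n y| ≤ (2 + 4 * R ^ 2) / ((n:ℝ) + 1) ^ 2 := by
  have := db_bound_aux (m := (n:ℝ) + 1) (c := 4 * ((n:ℝ) + 1) + 1)
    (one_le_cast_add_one n) rfl hy
  simpa [db] using this

lemma ddb_bound_aux {m c y : ℝ} (hm : 1 ≤ m) (hc : c = 4 * m + 1) :
    |32 * y * c / (c ^ 2 + 4 * y ^ 2) ^ 2| ≤ 8 / m ^ 2 := by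
  have hm0 : 0 < m := by linarith
  have hc0 : 0 < c := by nlinarith
  have hmc : m ≤ c := by nlinarith
  have hden : 0 < c ^ 2 + 4 * y ^ 2 := den_pos hc0 y
  have habs : |32 * y * c / (c ^ 2 + 4 * y ^ 2) ^ 2| = 32 * |y| * c / (c ^ 2 + 4 * y ^ 2) ^ 2 := by
    rw [abs_div, abs_mul, abs_mul, _root_.abs_of_nonneg (show (0:ℝ) ≤ 32 by norm_num),
      _root_.abs_of_nonneg hc0.le, _root_.abs_of_nonneg (by positivity : (0:ℝ) ≤ (c ^ 2 + 4 * y ^ 2) ^ 2)]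
  rw [habs, div_le_div_iff₀ (by positivity) (by positivity)]
  have ha := abs_nonneg y
  have ha2 : |y| ^ 2 = y ^ 2 := _root_.sq_abs y
  have key1 : 4 * |y| * c ≤ c ^ 2 + 4 * y ^ 2 := by nlinarith [sq_nonneg (c - 2 * |y|)]
  have key2 : c ^ 2 ≤ c ^ 2 + 4 * y ^ 2 := by nlinarith [sq_nonneg y]
  have key3 : (4 * |y| * c) * c ^ 2 ≤ (c ^ 2 + 4 * y ^ 2) ^ 2 := by
    have := mul_le_mul key1 key2 (by positivity) hden.le
    calc (4 * |y| * c) * c ^ 2 ≤ (c ^ 2 + 4 * y ^ 2) * (c ^ 2 + 4 * y ^ 2) := this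
      _ = (c ^ 2 + 4 * y ^ 2) ^ 2 := by ring
  have key4 : m ^ 2 ≤ c ^ 2 := by nlinarith
  have key5 : 32 * |y| * c * m ^ 2 ≤ 32 * |y| * c * c ^ 2 :=
    mul_le_mul_of_nonneg_left key4 (by positivity)
  nlinarith [key3, key5]

lemma ddb_bound (n : ℕ) (y : ℝ) : |ddb n y| ≤ 8 / ((n:ℝ) + 1) ^ 2 := by
  have := ddb_bound_aux (m := (n:ℝ) + 1) (c := 4 * ((n:ℝ) + 1) + 1)
    (one_le_cast_add_one n) rfl (y := y)
  simpa [ddb] using this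


lemma summable_db (t : ℝ) : Summable (fun n => db n t) := by
  apply Summable.of_norm_bounded (summable_K (2 + 4 * |t| ^ 2))
  intro n
  simpa [Real.norm_eq_abs] using db_bound |t| n (le_refl |t|)

lemma summable_ddb (t : ℝ) : Summable (fun n => ddb n t) := by
  apply Summable.of_norm_bounded (summable_K 8)
  intro n
  simpa [Real.norm_eq_abs] using ddb_bound n t

lemma bb_zero (n : ℕ) : bb n 0 = 0 := by simp [bb]

lemma summable_bb (t : ℝ) : Summable (fun n => bb n t) := by
  have h0 : (0:ℝ) ∈ Metric.ball (0:ℝ) (|t| + 1) := by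
    simp [Metric.mem_ball]; positivity
  have ht : t ∈ Metric.ball (0:ℝ) (|t| + 1) := by
    simp [Metric.mem_ball, Real.dist_eq]
  refine summable_of_summable_hasDerivAt_of_isPreconnected
    (u := fun n : ℕ => (2 + 4 * (|t| + 1) ^ 2) / ((n:ℝ) + 1) ^ 2) (summable_K _)
    Metric.isOpen_ball ((convex_ball (0:ℝ) (|t| + 1)).isPreconnected)
    (fun n y _ => hasDerivAt_bb n y) (fun n y hy => ?_) h0 ?_ ht
  · have hyb : |y| ≤ |t| + 1 := by
      have := Metric.mem_ball.mp hy
      rw [Real.dist_eq, sub_zero] at this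
      linarith
    simpa [Real.norm_eq_abs] using db_bound (|t| + 1) n hyb
  · simpa [bb_zero] using summable_zero

lemma hasDerivAt_tsum_bb (t : ℝ) :
    HasDerivAt (fun x => ∑' n, bb n x) (∑' n, db n t) t := by
  have h0 : (0:ℝ) ∈ Metric.ball (0:ℝ) (|t| + 1) := by
    simp [Metric.mem_ball]; positivity
  have ht : t ∈ Metric.ball (0:ℝ) (|t| + 1) := by
    simp [Metric.mem_ball, Real.dist_eq]
  refine hasDerivAt_tsum_of_isPreconnected
    (u := fun n : ℕ => (2 + 4 * (|t| + 1) ^ 2) / ((n:ℝ) + 1) ^ 2) (summable_K _)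
    Metric.isOpen_ball ((convex_ball (0:ℝ) (|t| + 1)).isPreconnected)
    (fun n y _ => hasDerivAt_bb n y) (fun n y hy => ?_) h0 ?_ ht
  · have hyb : |y| ≤ |t| + 1 := by
      have := Metric.mem_ball.mp hy
      rw [Real.dist_eq, sub_zero] at this
      linarith
    simpa [Real.norm_eq_abs] using db_bound (|t| + 1) n hyb
  · simpa [bb_zero] using summable_zero

lemma hasDerivAt_tsum_db (t : ℝ) :
    HasDerivAt (fun x => ∑' n, db n x) (∑' n, ddb n t) t := by
  refine hasDerivAt_tsum (u := fun n : ℕ => 8 / ((n:ℝ) + 1) ^ 2) (summable_K 8)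
    (fun n y => hasDerivAt_db n y) (fun n y => ?_) (summable_db 0) t
  simpa [Real.norm_eq_abs] using ddb_bound n y

def phi (t : ℝ) : ℝ := -2 * Real.arctan (2 * t) + ∑' n, bb n t
def psi (t : ℝ) : ℝ := -4 / (1 + 4 * t ^ 2) + ∑' n, db n t

lemma hasDerivAt_phi (t : ℝ) : HasDerivAt phi (psi t) t := by
  have h1 : HasDerivAt (fun t : ℝ => 2 * t) 2 t := by
    simpa using (hasDerivAt_id t).const_mul 2
  have h2 := ((Real.hasDerivAt_arctan (2 * t)).comp t h1).const_mul (-2)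
  have h3 := h2.add (hasDerivAt_tsum_bb t)
  refine h3.congr_deriv ?_
  unfold psi
  have : (0:ℝ) < 1 + 4 * t ^ 2 := by positivity
  congr 1
  field_simp
  ring

lemma hasDerivAt_psi (t : ℝ) :
    HasDerivAt psi (32 * t / (1 + 4 * t ^ 2) ^ 2 + ∑' n, ddb n t) t := by
  have hpos : (0:ℝ) < 1 + 4 * t ^ 2 := by positivity
  have h1 : HasDerivAt (fun t : ℝ => 1 + 4 * t ^ 2) (8 * t) t := by
    have := ((hasDerivAt_pow 2 t).const_mul 4).const_add (1:ℝ)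
    refine this.congr_deriv ?_
    simp; ring
  have h2 := (h1.inv hpos.ne').const_mul (-4)
  have h3 := h2.add (hasDerivAt_tsum_db t)
  refine h3.congr_deriv ?_
  congr 1
  field_simp
  ring

lemma summable_q (t : ℝ) : Summable (fun k => q k t) := by
  apply Summable.of_nonneg_of_le (fun k => by unfold q; positivity)
    (fun k => ?_) summable_inv_sq
  unfold q
  have hk : (0:ℝ) ≤ (k:ℝ) := Nat.cast_nonneg k
  rw [div_le_div_iff₀ (by positivity) (by positivity)]
  have h1 : ((k:ℝ) + 1) ^ 2 ≤ (4 * k + 1) ^ 3 := by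
    have e1 : ((k:ℝ) + 1) ^ 2 ≤ (4 * k + 1) ^ 2 := by nlinarith
    have e2 : ((4:ℝ) * k + 1) ^ 2 ≤ (4 * k + 1) ^ 3 := by
      nlinarith [sq_nonneg (4 * (k:ℝ) + 1)]
    linarith
  have h2 : ((4 * (k:ℝ) + 1) ^ 2) ^ 2 ≤ ((4 * k + 1) ^ 2 + 4 * t ^ 2) ^ 2 := by
    nlinarith [sq_nonneg t, sq_nonneg (4 * (k:ℝ) + 1)]
  nlinarith [mul_le_mul_of_nonneg_left h1 (show (0:ℝ) ≤ 4 * k + 1 by linarith)]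

lemma ddb_eq (n : ℕ) (t : ℝ) : ddb n t = 32 * t * q (n + 1) t := by
  unfold ddb q
  push_cast
  rw [mul_div_assoc]

lemma psi_deriv_eq (t : ℝ) :
    32 * t / (1 + 4 * t ^ 2) ^ 2 + ∑' n, ddb n t = 2 * (16 * t * ∑' k, q k t) := by
  have hs := summable_q t
  have h1 : ∑' n, ddb n t = 32 * t * ∑' n, q (n + 1) t := by
    rw [← tsum_mul_left]
    exact tsum_congr fun n => ddb_eq n t
  have h2 : ∑' k, q k t = q 0 t + ∑' n, q (n + 1) t := hs.tsum_eq_zero_add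
  have h3 : q 0 t = 1 / (1 + 4 * t ^ 2) ^ 2 := by
    unfold q; norm_num
  rw [h1, h2, h3]
  ring


/-! Complex part -/

def z (t : ℝ) : ℂ := 1 / 4 + Complex.I * (t : ℂ) / 2
def w (t : ℝ) : ℂ := 1 / 4 - Complex.I * (t : ℂ) / 2

lemma one_add_real_mul_I_ne (r : ℝ) : (1:ℂ) + (r:ℂ) * Complex.I ≠ 0 := by
  intro h
  have := congrArg Complex.re h
  simpa using this

lemma conj_z (t : ℝ) : (starRingEnd ℂ) (z t) = w t := by
  unfold z w
  simp [map_div₀, map_ofNat, Complex.conj_I, Complex.conj_ofReal]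
  ring

lemma exp_neg_two_arctan (x : ℝ) :
    Complex.exp (-2 * Complex.I * (Real.arctan x : ℂ))
      = (1 - (x:ℂ) * Complex.I) / (1 + (x:ℂ) * Complex.I) := by
  have hs : (0:ℝ) < 1 + x ^ 2 := by positivity
  have hsq : Real.sqrt (1 + x ^ 2) ^ 2 = 1 + x ^ 2 := Real.sq_sqrt hs.le
  have hs0 : Real.sqrt (1 + x ^ 2) ≠ 0 := by positivity
  have hcos2 : Real.cos (2 * Real.arctan x) = (1 - x ^ 2) / (1 + x ^ 2) := by
    rw [Real.cos_two_mul, Real.cos_arctan, div_pow, one_pow, hsq]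
    field_simp
    ring
  have hmul : Real.sqrt (1 + x ^ 2) * Real.sqrt (1 + x ^ 2) = 1 + x ^ 2 :=
    Real.mul_self_sqrt hs.le
  have hsin2 : Real.sin (2 * Real.arctan x) = 2 * x / (1 + x ^ 2) := by
    rw [Real.sin_two_mul, Real.sin_arctan, Real.cos_arctan]
    field_simp
    rw [hsq]
  have h2 : (-2 : ℂ) * Complex.I * (Real.arctan x : ℂ)
      = ((-(2 * Real.arctan x) : ℝ) : ℂ) * Complex.I := by push_cast; ring
  rw [h2, Complex.exp_mul_I, ← Complex.ofReal_cos, ← Complex.ofReal_sin,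
    Real.cos_neg, Real.sin_neg, hcos2, hsin2]
  have hne : (1:ℂ) + (x:ℂ) * Complex.I ≠ 0 := one_add_real_mul_I_ne x
  have hne2 : ((1:ℂ) + (x:ℂ) ^ 2) ≠ 0 := by
    have : ((1 + x ^ 2 : ℝ) : ℂ) ≠ 0 := Complex.ofReal_ne_zero.mpr hs.ne'
    push_cast at this
    exact this
  rw [eq_div_iff hne]
  push_cast
  field_simp
  linear_combination (-2 * (x:ℂ) ^ 2) * Complex.I_sq

lemma re_pos_ne_zero {u : ℂ} (hu : 0 < u.re) : u ≠ 0 := by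
  intro h; rw [h] at hu; simp at hu

lemma z_add_ne (t : ℝ) (j : ℕ) : z t + j ≠ 0 := by
  apply re_pos_ne_zero
  simp [z]
  positivity

lemma w_add_ne (t : ℝ) (j : ℕ) : w t + j ≠ 0 := by
  apply re_pos_ne_zero
  simp [w]
  positivity

lemma factor_eq (t : ℝ) (j : ℕ) :
    (w t + j) / (z t + j)
      = Complex.exp (-2 * Complex.I * (Real.arctan (2 * t / (4 * j + 1)) : ℂ)) := by
  have hc : (0:ℝ) < 4 * (j:ℝ) + 1 := by positivity
  rw [exp_neg_two_arctan]
  rw [div_eq_div_iff (z_add_ne t j) (one_add_real_mul_I_ne _)]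
  unfold z w
  have hcC : ((4 * (j:ℝ) + 1 : ℝ):ℂ) ≠ 0 := Complex.ofReal_ne_zero.mpr hc.ne'
  push_cast at hcC ⊢
  field_simp
  ring

lemma sum_log (N : ℕ) :
    ∑ n ∈ Finset.range N, Real.log (1 + 1 / ((n:ℝ) + 1)) = Real.log ((N:ℝ) + 1) := by
  induction N with
  | zero => simp
  | succ N ih =>
    rw [Finset.sum_range_succ, ih, ← Real.log_mul (by positivity) (by positivity)]
    congr 1
    push_cast
    field_simp


lemma exp_I_mul_log (t x : ℝ) (hx : 0 < x) :
    Complex.exp (Complex.I * (t:ℂ) * ((Real.log x : ℝ):ℂ)) = ((x : ℝ) : ℂ) ^ (Complex.I * (t:ℂ)) := by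
  rw [Complex.cpow_def_of_ne_zero (Complex.ofReal_ne_zero.mpr hx.ne'),
    ← Complex.ofReal_log hx.le]
  ring_nf

lemma exp_partial (t : ℝ) (N : ℕ) :
    Complex.exp (Complex.I * ((-2 * Real.arctan (2 * t) + ∑ n ∈ Finset.range N, bb n t : ℝ) : ℂ))
      = (((N:ℝ) + 1 : ℝ) : ℂ) ^ (Complex.I * (t:ℂ))
        * ∏ j ∈ Finset.range (N + 1), ((w t + j) / (z t + j)) := by
  have hsum : (-2 * Real.arctan (2 * t) + ∑ n ∈ Finset.range N, bb n t)
      = t * Real.log ((N:ℝ) + 1)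
        + ∑ j ∈ Finset.range (N + 1), (-2 * Real.arctan (2 * t / (4 * (j:ℝ) + 1))) := by
    rw [Finset.sum_range_succ']
    simp only [bb]
    rw [Finset.sum_sub_distrib, ← Finset.mul_sum, sum_log]
    push_cast
    norm_num
    ring
  rw [hsum]
  have e1 : Complex.I * ((t * Real.log ((N:ℝ) + 1)
        + ∑ j ∈ Finset.range (N + 1), (-2 * Real.arctan (2 * t / (4 * (j:ℝ) + 1))) : ℝ) : ℂ)
      = Complex.I * (t:ℂ) * ((Real.log ((N:ℝ) + 1) : ℝ) : ℂ)
        + ∑ j ∈ Finset.range (N + 1),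
            (-2 * Complex.I * ((Real.arctan (2 * t / (4 * (j:ℝ) + 1)) : ℝ) : ℂ)) := by
    push_cast
    rw [mul_add, Finset.mul_sum]
    congr 1
    · ring
    · apply Finset.sum_congr rfl
      intro j _
      ring
  rw [e1, Complex.exp_add, Complex.exp_sum, exp_I_mul_log t _ (by positivity)]
  congr 1
  apply Finset.prod_congr rfl
  intro j _
  rw [factor_eq]

lemma gammaSeq_ratio (t : ℝ) (N : ℕ) (hN : N ≠ 0) :
    Complex.GammaSeq (z t) N / Complex.GammaSeq (w t) N
      = ((N : ℝ) : ℂ) ^ (Complex.I * (t:ℂ))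
        * ∏ j ∈ Finset.range (N + 1), ((w t + j) / (z t + j)) := by
  have hN0 : ((N : ℝ) : ℂ) ≠ 0 := by
    simp [Nat.cast_ne_zero, hN]
  have hprodz : ∏ j ∈ Finset.range (N + 1), (z t + j) ≠ 0 :=
    Finset.prod_ne_zero_iff.mpr fun j _ => z_add_ne t j
  have hprodw : ∏ j ∈ Finset.range (N + 1), (w t + j) ≠ 0 :=
    Finset.prod_ne_zero_iff.mpr fun j _ => w_add_ne t j
  have hfac : ((Nat.factorial N : ℕ) : ℂ) ≠ 0 := by
    exact_mod_cast Nat.factorial_ne_zero N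
  have hNw : ((N : ℝ) : ℂ) ^ (w t) ≠ 0 := by
    rw [Complex.cpow_def_of_ne_zero hN0]
    exact Complex.exp_ne_zero _
  have hpow : ((N : ℝ) : ℂ) ^ (z t)
      = ((N : ℝ) : ℂ) ^ (Complex.I * (t:ℂ)) * ((N : ℝ) : ℂ) ^ (w t) := by
    rw [← Complex.cpow_add _ _ hN0]
    congr 1
    unfold z w
    ring
  rw [Complex.GammaSeq, Complex.GammaSeq, Finset.prod_div_distrib]
  push_cast at hpow hNw hN0 hfac ⊢
  rw [hpow, div_div_div_comm]
  have hX : ((N:ℂ) ^ (Complex.I * (t:ℂ)) * (N:ℂ) ^ (w t) * ((Nat.factorial N : ℕ) : ℂ))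
      / ((N:ℂ) ^ (w t) * ((Nat.factorial N : ℕ) : ℂ)) = (N:ℂ) ^ (Complex.I * (t:ℂ)) := by
    field_simp
  rw [hX, div_div_eq_mul_div, mul_div_assoc]


lemma Gamma_w_ne (t : ℝ) : Complex.Gamma (w t) ≠ 0 := by
  apply Complex.Gamma_ne_zero_of_re_pos
  unfold w
  simp [Complex.div_re]

lemma Gamma_z_ne (t : ℝ) : Complex.Gamma (z t) ≠ 0 := by
  apply Complex.Gamma_ne_zero_of_re_pos
  unfold z
  simp [Complex.div_re]

lemma tendsto_log_succ_sub : Filter.Tendsto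
    (fun N : ℕ => Real.log ((N:ℝ) + 1) - Real.log (N:ℝ)) Filter.atTop (nhds 0) := by
  have h1 : Filter.Tendsto (fun N : ℕ => 1 + 1 / (N:ℝ)) Filter.atTop (nhds 1) := by
    have := tendsto_one_div_atTop_nhds_zero_nat (𝕜 := ℝ)
    simpa using Filter.Tendsto.const_add (1:ℝ) this
  have h2 := (Real.continuousAt_log (by norm_num : (1:ℝ) ≠ 0)).tendsto.comp h1
  rw [Real.log_one] at h2
  apply h2.congr'
  filter_upwards [Filter.eventually_gt_atTop 0] with N hN
  have hN0 : (0:ℝ) < (N:ℝ) := by exact_mod_cast hN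
  rw [Function.comp_apply, ← Real.log_div (by positivity) hN0.ne']
  congr 1
  field_simp

lemma exp_phi (t : ℝ) :
    Complex.exp (Complex.I * ((phi t : ℝ) : ℂ))
      = Complex.Gamma (z t) / Complex.Gamma (w t) := by
  have hcont : Continuous fun x : ℝ => Complex.exp (Complex.I * (x : ℂ)) := by
    exact Complex.continuous_exp.comp (continuous_const.mul Complex.continuous_ofReal)
  have hL : Filter.Tendsto (fun N : ℕ => Complex.exp (Complex.I *
      ((-2 * Real.arctan (2 * t) + ∑ n ∈ Finset.range N, bb n t : ℝ) : ℂ))) Filter.atTop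
      (nhds (Complex.exp (Complex.I * ((phi t : ℝ) : ℂ)))) := by
    have h1 : Filter.Tendsto (fun N : ℕ => -2 * Real.arctan (2 * t) + ∑ n ∈ Finset.range N, bb n t)
        Filter.atTop (nhds (phi t)) := by
      unfold phi
      exact Filter.Tendsto.const_add _ (summable_bb t).hasSum.tendsto_sum_nat
    exact (hcont.tendsto (phi t)).comp h1
  have hG : Filter.Tendsto (fun N : ℕ => Complex.GammaSeq (z t) N / Complex.GammaSeq (w t) N)
      Filter.atTop (nhds (Complex.Gamma (z t) / Complex.Gamma (w t))) :=
    (Complex.GammaSeq_tendsto_Gamma (z t)).div (Complex.GammaSeq_tendsto_Gamma (w t)) (Gamma_w_ne t)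
  have hcont2 : Continuous fun x : ℝ => Complex.exp (Complex.I * (t:ℂ) * (x : ℂ)) := by
    exact Complex.continuous_exp.comp (continuous_const.mul Complex.continuous_ofReal)
  have hc : Filter.Tendsto (fun N : ℕ => Complex.exp (Complex.I * (t:ℂ) *
      ((Real.log ((N:ℝ) + 1) - Real.log (N:ℝ) : ℝ) : ℂ))) Filter.atTop (nhds 1) := by
    have := (hcont2.tendsto 0).comp tendsto_log_succ_sub
    simp only [Function.comp_def, mul_zero, Complex.ofReal_zero, Complex.exp_zero] at this
    exact this
  have hR : Filter.Tendsto (fun N : ℕ => Complex.exp (Complex.I *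
      ((-2 * Real.arctan (2 * t) + ∑ n ∈ Finset.range N, bb n t : ℝ) : ℂ))) Filter.atTop
      (nhds (Complex.Gamma (z t) / Complex.Gamma (w t))) := by
    have hmul := hG.mul hc
    rw [mul_one] at hmul
    apply hmul.congr'
    filter_upwards [Filter.eventually_ne_atTop 0] with N hN
    have hN0 : (0:ℝ) < (N:ℝ) := by
      have : 0 < N := Nat.pos_of_ne_zero hN
      exact_mod_cast this
    rw [exp_partial, gammaSeq_ratio t N hN]
    rw [Complex.ofReal_sub, mul_sub, Complex.exp_sub]
    rw [exp_I_mul_log t _ (by positivity : (0:ℝ) < (N:ℝ) + 1), exp_I_mul_log t _ hN0]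
    have hNe : ((N:ℝ):ℂ) ^ (Complex.I * (t:ℂ)) ≠ 0 := by
      rw [Complex.cpow_def_of_ne_zero (Complex.ofReal_ne_zero.mpr hN0.ne')]
      exact Complex.exp_ne_zero _
    push_cast at hNe ⊢
    field_simp
  exact tendsto_nhds_unique hL hR


lemma phi_zero : phi 0 = 0 := by
  unfold phi
  have : ∀ n : ℕ, bb n 0 = 0 := bb_zero
  simp [this]

end ThetaAux


theorem theta_second_deriv_expansion
    (ϑ ϑ' ϑ'' : ℝ → ℝ) (hϑa : ∀ t : ℝ, AnalyticAt ℝ ϑ t) (hϑ0 : ϑ 0 = 0)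
    (hΓ : ∀ t : ℝ, Complex.Gamma (1 / 4 + Complex.I * (t : ℂ) / 2) =
      (‖Complex.Gamma (1 / 4 + Complex.I * (t : ℂ) / 2)‖ : ℂ) *
        Complex.exp (Complex.I * ((ϑ t + t / 2 * Real.log π : ℝ) : ℂ)))
    (hϑ' : ∀ t : ℝ, HasDerivAt ϑ (ϑ' t) t)
    (hϑ'' : ∀ t : ℝ, HasDerivAt ϑ' (ϑ'' t) t) :
    (∀ t : ℝ, Summable (fun k : ℕ =>
        ((4 * k + 1) / ((4 * k + 1) ^ 2 + 4 * t ^ 2) ^ 2 : ℝ))) ∧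
    (∀ t : ℝ, ϑ'' t = 16 * t * ∑' k : ℕ,
        ((4 * k + 1) / ((4 * k + 1) ^ 2 + 4 * t ^ 2) ^ 2 : ℝ)) ∧
    (∀ t : ℝ, 0 < t → 0 < ϑ'' t) ∧
    StrictConvexOn ℝ (Set.Ioi (0 : ℝ)) ϑ := by
  classical
  set F : ℝ → ℝ := fun t => ϑ t + t / 2 * Real.log π with hFdef
  have hFd : ∀ t, HasDerivAt F (ϑ' t + Real.log π / 2) t := by
    intro t
    have h2 : HasDerivAt (fun x : ℝ => x / 2 * Real.log π) (Real.log π / 2) t := by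
      have := ((hasDerivAt_id t).div_const 2).mul_const (Real.log π)
      refine this.congr_deriv ?_
      ring
    exact (hϑ' t).add h2
  -- the exponential identity
  have habs : ∀ t, ((‖Complex.Gamma (ThetaAux.z t)‖ : ℝ) : ℂ) ≠ 0 := by
    intro t
    simpa using ThetaAux.Gamma_z_ne t
  have hexp : ∀ t, Complex.exp (Complex.I * ((ThetaAux.phi t : ℝ) : ℂ))
      = Complex.exp (Complex.I * ((2 * F t : ℝ) : ℂ)) := by
    intro t
    rw [ThetaAux.exp_phi]
    have hz : Complex.Gamma (ThetaAux.z t)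
        = ((‖Complex.Gamma (ThetaAux.z t)‖ : ℝ) : ℂ)
          * Complex.exp (Complex.I * ((F t : ℝ) : ℂ)) := hΓ t
    have hw : Complex.Gamma (ThetaAux.w t)
        = ((‖Complex.Gamma (ThetaAux.z t)‖ : ℝ) : ℂ)
          * Complex.exp (-(Complex.I * ((F t : ℝ) : ℂ))) := by
      have h1 : (starRingEnd ℂ) (Complex.I * ((F t : ℝ) : ℂ))
          = -(Complex.I * ((F t : ℝ) : ℂ)) := by
        rw [map_mul, Complex.conj_I, Complex.conj_ofReal]
        ring
      rw [← ThetaAux.conj_z, Complex.Gamma_conj]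
      conv_lhs => rw [hz]
      rw [map_mul, Complex.conj_ofReal, ← Complex.exp_conj, h1]
    rw [hz, hw, mul_div_mul_left _ _ (habs t), ← Complex.exp_sub]
    congr 1
    push_cast
    ring
  have hdiff : ∀ t, ∃ k : ℤ, ThetaAux.phi t - 2 * F t = 2 * π * k := by
    intro t
    obtain ⟨n, hn⟩ := Complex.exp_eq_exp_iff_exists_int.mp (hexp t)
    refine ⟨n, ?_⟩
    have h2 : ((ThetaAux.phi t - 2 * F t - 2 * π * n : ℝ) : ℂ) * Complex.I = 0 := by
      push_cast at hn ⊢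
      linear_combination hn
    rcases mul_eq_zero.mp h2 with h3 | h3
    · have h4 : (ThetaAux.phi t - 2 * F t - 2 * π * n : ℝ) = 0 := by exact_mod_cast h3
      linarith
    · exact absurd h3 Complex.I_ne_zero
  have hϑc : Continuous ϑ := continuous_iff_continuousAt.mpr fun t => (hϑ' t).continuousAt
  have hdc : Continuous (fun t => ThetaAux.phi t - 2 * F t) := by
    have hphic : Continuous ThetaAux.phi :=
      continuous_iff_continuousAt.mpr fun t => (ThetaAux.hasDerivAt_phi t).continuousAt
    have hFc : Continuous F := by
      rw [hFdef]
      fun_prop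
    fun_prop
  have hzero : ∀ t, ThetaAux.phi t - 2 * F t = 0 := by
    have h0 : ThetaAux.phi 0 - 2 * F 0 = 0 := by
      simp [hFdef, hϑ0, ThetaAux.phi_zero]
    intro t
    obtain ⟨k, hk⟩ := hdiff t
    rcases eq_or_ne k 0 with rfl | hkne
    · simpa using hk
    exfalso
    have hπ := Real.pi_pos
    have key : ∀ v : ℝ, v ∈ Set.uIcc (0:ℝ) (2 * π * k) →
        ∃ u : ℝ, ThetaAux.phi u - 2 * F u = v := by
      intro v hv
      have hIVT := intermediate_value_uIcc (hdc.continuousOn (s := Set.uIcc (0:ℝ) t))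
      have hmem : v ∈ Set.uIcc ((fun u => ThetaAux.phi u - 2 * F u) 0)
          ((fun u => ThetaAux.phi u - 2 * F u) t) := by
        simpa [h0, hk] using hv
      obtain ⟨u, _, hdu⟩ := hIVT hmem
      exact ⟨u, hdu⟩
    have contra : ∀ m : ℤ, 2 * π * (m:ℝ) = π ∨ 2 * π * (m:ℝ) = -π → False := by
      rintro m (hm | hm)
      · have h5 : (2 * (m:ℝ) - 1) * π = 0 := by linear_combination hm
        rcases mul_eq_zero.mp h5 with h6 | h6
        · have h7 : (2 * m - 1 : ℤ) = 0 := by exact_mod_cast h6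
          omega
        · linarith
      · have h5 : (2 * (m:ℝ) + 1) * π = 0 := by linear_combination hm
        rcases mul_eq_zero.mp h5 with h6 | h6
        · have h7 : (2 * m + 1 : ℤ) = 0 := by exact_mod_cast h6
          omega
        · linarith
    rcases hkne.lt_or_gt with hneg | hpos
    · have hk1 : (k:ℝ) ≤ -1 := by exact_mod_cast Int.le_sub_one_iff.mpr hneg
      obtain ⟨u, hu⟩ := key (-π) (by
        rw [Set.mem_uIcc]
        right
        constructor <;> nlinarith)
      obtain ⟨m, hm⟩ := hdiff u
      rw [hm] at hu
      exact contra m (Or.inr hu)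
    · have hk1 : (1:ℝ) ≤ (k:ℝ) := by exact_mod_cast hpos
      obtain ⟨u, hu⟩ := key π (by
        rw [Set.mem_uIcc]
        left
        constructor <;> nlinarith)
      obtain ⟨m, hm⟩ := hdiff u
      rw [hm] at hu
      exact contra m (Or.inl hu)
  -- identify derivatives
  have hphiF : ThetaAux.phi = fun t => 2 * F t := by
    funext t
    have := hzero t
    linarith
  have hpsival : ThetaAux.psi = fun t => 2 * ϑ' t + Real.log π := by
    funext t
    have h1 : HasDerivAt (fun u => 2 * F u) (2 * (ϑ' t + Real.log π / 2)) t :=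
      (hFd t).const_mul 2
    have h2 : HasDerivAt (fun u => 2 * F u) (ThetaAux.psi t) t := by
      rw [← hphiF]
      exact ThetaAux.hasDerivAt_phi t
    have h3 := h1.unique h2
    linarith
  have hsecond : ∀ t, ϑ'' t = 16 * t * ∑' k : ℕ, ThetaAux.q k t := by
    intro t
    have h1 : HasDerivAt ThetaAux.psi (2 * (16 * t * ∑' k : ℕ, ThetaAux.q k t)) t := by
      have := ThetaAux.hasDerivAt_psi t
      rwa [ThetaAux.psi_deriv_eq] at this
    rw [hpsival] at h1
    have h2 : HasDerivAt (fun u => 2 * ϑ' u + Real.log π) (2 * ϑ'' t) t :=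
      ((hϑ'' t).const_mul 2).add_const _
    have h3 := h2.unique h1
    linarith
  have hpos : ∀ t : ℝ, 0 < t → 0 < ϑ'' t := by
    intro t ht
    rw [hsecond t]
    apply mul_pos (by positivity)
    refine Summable.tsum_pos (ThetaAux.summable_q t) (fun k => ?_) 0 ?_
    · unfold ThetaAux.q; positivity
    · unfold ThetaAux.q; positivity
  refine ⟨fun t => ThetaAux.summable_q t, fun t => hsecond t, hpos, ?_⟩
  apply strictConvexOn_of_deriv2_pos (convex_Ioi 0) (hϑc.continuousOn)
  intro x hx
  rw [interior_Ioi] at hx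
  have e2 : deriv^[2] ϑ x = ϑ'' x := by
    have hd1 : deriv ϑ = ϑ' := funext fun y => (hϑ' y).deriv
    rw [show (2:ℕ) = 1 + 1 from rfl, Function.iterate_add_apply, Function.iterate_one,
      hd1, (hϑ'' x).deriv]
  rw [e2]
  exact hpos x hx
end ThetaAux
end

section
/- If a is a real number with ζ'(1/2 + i·a) = 0 and a ≠ ±a_ϑ where ϑ'(a_ϑ) = 0, then ζ(1/2 + i·a) = 0. (More precisely: for real t with ϑ'(t) ≠ 0, ζ'(1/2 + i t) = 0 implies Z(t) = 0, i.e. ζ(1/2 + i t) = 0.) -/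
open Complex Real

theorem zeta_deriv_zero_implies_zeta_zero
    (Z ϑ ϑ' : ℝ → ℝ)
    (hZa : ∀ t : ℝ, AnalyticAt ℝ Z t) (hϑa : ∀ t : ℝ, AnalyticAt ℝ ϑ t)
    (hRS : ∀ t : ℝ, riemannZeta (1 / 2 + Complex.I * (t : ℂ)) =
      (Z t : ℂ) * Complex.exp (-Complex.I * (ϑ t : ℂ)))
    (hϑ' : ∀ t : ℝ, HasDerivAt ϑ (ϑ' t) t)
    (t : ℝ) (hne : ϑ' t ≠ 0)
    (hz : deriv riemannZeta (1 / 2 + Complex.I * (t : ℂ)) = 0) :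
    Z t = 0 ∧ riemannZeta (1 / 2 + Complex.I * (t : ℂ)) = 0 := by
  set s : ℂ := 1 / 2 + Complex.I * (t : ℂ) with hs
  have hs1 : s ≠ 1 := by
    intro h
    have : s.re = 1 := by rw [h]; simp
    simp [hs, Complex.add_re, Complex.mul_re] at this
  -- derivative of inner map
  have hinner : HasDerivAt (fun u : ℝ => (1 / 2 : ℂ) + Complex.I * (u : ℂ)) Complex.I t := by
    have h1 : HasDerivAt (fun u : ℝ => (u : ℂ)) 1 t := (hasDerivAt_id t).ofReal_comp
    have h2 := h1.const_mul Complex.I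
    simpa using h2.const_add (1 / 2 : ℂ)
  have hζ : HasDerivAt riemannZeta (deriv riemannZeta s) s :=
    (differentiableAt_riemannZeta hs1).hasDerivAt
  have hleft : HasDerivAt (fun u : ℝ => riemannZeta (1 / 2 + Complex.I * (u : ℂ)))
      (Complex.I * deriv riemannZeta s) t := by
    have := (hζ.hasFDerivAt.restrictScalars ℝ).comp_hasDerivAt t hinner
    simpa [mul_comm, Function.comp_def] using this
  -- derivative of right side
  have hZd : HasDerivAt Z (deriv Z t) t := ((hZa t).differentiableAt).hasDerivAt
  have hZc : HasDerivAt (fun u : ℝ => (Z u : ℂ)) ((deriv Z t : ℝ) : ℂ) t := hZd.ofReal_comp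
  have hϑc : HasDerivAt (fun u : ℝ => (ϑ u : ℂ)) (ϑ' t) t := (hϑ' t).ofReal_comp
  have hexp : HasDerivAt (fun u : ℝ => Complex.exp (-Complex.I * (ϑ u : ℂ)))
      ((-Complex.I * (ϑ' t)) * Complex.exp (-Complex.I * (ϑ t : ℂ))) t := by
    have := ((hϑc.const_mul (-Complex.I)).cexp)
    simpa [mul_comm] using this
  have hright : HasDerivAt (fun u : ℝ => (Z u : ℂ) * Complex.exp (-Complex.I * (ϑ u : ℂ)))
      (((deriv Z t : ℝ) : ℂ) * Complex.exp (-Complex.I * (ϑ t : ℂ)) +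
        (Z t : ℂ) * ((-Complex.I * (ϑ' t)) * Complex.exp (-Complex.I * (ϑ t : ℂ)))) t :=
    hZc.mul hexp
  have hfun : (fun u : ℝ => riemannZeta (1 / 2 + Complex.I * (u : ℂ))) =
      (fun u : ℝ => (Z u : ℂ) * Complex.exp (-Complex.I * (ϑ u : ℂ))) := funext hRS
  rw [hfun] at hleft
  have hEq := hleft.unique hright
  rw [hz, mul_zero] at hEq
  -- 0 = (Z' - i Z ϑ') exp(-iϑ)
  have hexpne : Complex.exp (-Complex.I * (ϑ t : ℂ)) ≠ 0 := Complex.exp_ne_zero _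
  have key : ((deriv Z t : ℝ) : ℂ) + (Z t : ℂ) * (-Complex.I * (ϑ' t)) = 0 := by
    have : (((deriv Z t : ℝ) : ℂ) + (Z t : ℂ) * (-Complex.I * (ϑ' t))) *
        Complex.exp (-Complex.I * (ϑ t : ℂ)) = 0 := by rw [hEq]; ring
    exact (mul_eq_zero.mp this).resolve_right hexpne
  have him : -(Z t * ϑ' t) = 0 := by
    have := congrArg Complex.im key
    simpa [Complex.add_im, Complex.mul_im, Complex.mul_re] using this
  have hZ0 : Z t = 0 := by
    rcases mul_eq_zero.mp (neg_eq_zero.mp him) with h | h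
    · exact h
    · exact absurd h hne
  refine ⟨hZ0, ?_⟩
  rw [hRS t, hZ0]
  simp
end

section
/- For every real t such that ζ'(1/2 + i t) ≠ 0, one has 1 + 2ϑ'(t)·ζ(1/2 + i t)/ζ'(1/2 + i t) = −e^{−2iϑ(t)}·ζ'(1/2 − i t)/ζ'(1/2 + i t); in particular this quantity has absolute value 1. -/
open Complex Real

lemma hasDerivAt_conj_conj {f : ℂ → ℂ} {f' z : ℂ} (h : HasDerivAt f f' ((starRingEnd ℂ) z)) :
    HasDerivAt (fun w => (starRingEnd ℂ) (f ((starRingEnd ℂ) w))) ((starRingEnd ℂ) f') z := by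
  have h1 : HasFDerivAt f ((ContinuousLinearMap.smulRight (1 : ℂ →L[ℂ] ℂ) f').restrictScalars ℝ)
      ((starRingEnd ℂ) z) := h.hasFDerivAt.restrictScalars ℝ
  have hc : ∀ w : ℂ, HasFDerivAt (fun w : ℂ => (starRingEnd ℂ) w)
      (Complex.conjCLE.toContinuousLinearMap) w := fun w => Complex.conjCLE.hasFDerivAt
  have h2 := (hc _).comp z (h1.comp z (hc z))
  have h3 : HasFDerivAt (fun w => (starRingEnd ℂ) (f ((starRingEnd ℂ) w)))
      (ContinuousLinearMap.smulRight (1 : ℂ →L[ℂ] ℂ) ((starRingEnd ℂ) f')) z := by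
    apply hasFDerivAt_of_restrictScalars ℝ h2
    apply ContinuousLinearMap.ext
    intro w
    simp [mul_comm]
  simpa using h3.hasDerivAt


lemma conj_ne_one {w : ℂ} (hw : w ≠ 1) : (starRingEnd ℂ) w ≠ 1 := by
  intro h
  apply hw
  have := congrArg (starRingEnd ℂ) h
  simpa using this

lemma zeta_conj_eqOn : Set.EqOn riemannZeta
    (fun w => (starRingEnd ℂ) (riemannZeta ((starRingEnd ℂ) w))) {(1:ℂ)}ᶜ := by
  have hζd : DifferentiableOn ℂ riemannZeta {(1:ℂ)}ᶜ :=
    fun w hw => (differentiableAt_riemannZeta hw).differentiableWithinAt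
  have hζ : AnalyticOnNhd ℂ riemannZeta {(1:ℂ)}ᶜ := hζd.analyticOnNhd isOpen_compl_singleton
  have hgd : DifferentiableOn ℂ (fun w => (starRingEnd ℂ) (riemannZeta ((starRingEnd ℂ) w)))
      {(1:ℂ)}ᶜ := by
    intro w hw
    have hw1 : (starRingEnd ℂ) w ≠ 1 := conj_ne_one hw
    exact (hasDerivAt_conj_conj
      ((differentiableAt_riemannZeta hw1).hasDerivAt)).differentiableAt.differentiableWithinAt
  have hg := hgd.analyticOnNhd isOpen_compl_singleton
  have hconn : IsPreconnected ({(1:ℂ)}ᶜ : Set ℂ) := by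
    refine (isConnected_compl_singleton_of_one_lt_rank ?_ 1).isPreconnected
    rw [Complex.rank_real_complex]; norm_num
  have h2 : (2:ℂ) ∈ ({(1:ℂ)}ᶜ : Set ℂ) := by norm_num
  refine hζ.eqOn_of_preconnected_of_eventuallyEq hg hconn h2 ?_
  have hopen : IsOpen {w : ℂ | 1 < w.re} := isOpen_lt continuous_const Complex.continuous_re
  have hmem : {w : ℂ | 1 < w.re} ∈ nhds (2:ℂ) := hopen.mem_nhds (by norm_num)
  filter_upwards [hmem] with w hw
  have hw' : 1 < ((starRingEnd ℂ) w).re := by simpa using hw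
  rw [zeta_eq_tsum_one_div_nat_cpow hw, zeta_eq_tsum_one_div_nat_cpow hw', Complex.conj_tsum]
  congr 1
  funext n
  rcases Nat.eq_zero_or_pos n with rfl | hn
  · simp only [Nat.cast_zero]
    rw [Complex.zero_cpow (fun h => by norm_num [h] at hw),
      Complex.zero_cpow (fun h => by simp [Complex.ext_iff] at h; norm_num [h.1] at hw')]
    simp
  · rw [map_div₀, map_one,
      ← Complex.conj_cpow _ _ (by rw [Complex.natCast_arg]; exact Real.pi_ne_zero.symm),
      Complex.conj_natCast]


theorem one_add_two_theta_deriv_zeta_ratio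
    (Z ϑ ϑ' : ℝ → ℝ)
    (hZa : ∀ t : ℝ, AnalyticAt ℝ Z t) (hϑa : ∀ t : ℝ, AnalyticAt ℝ ϑ t)
    (hRS : ∀ t : ℝ, riemannZeta (1 / 2 + Complex.I * (t : ℂ)) =
      (Z t : ℂ) * Complex.exp (-Complex.I * (ϑ t : ℂ)))
    (hϑ' : ∀ t : ℝ, HasDerivAt ϑ (ϑ' t) t)
    (t : ℝ) (hne : deriv riemannZeta (1 / 2 + Complex.I * (t : ℂ)) ≠ 0) :
    1 + 2 * (ϑ' t : ℂ) * riemannZeta (1 / 2 + Complex.I * (t : ℂ)) /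
        deriv riemannZeta (1 / 2 + Complex.I * (t : ℂ)) =
      -Complex.exp (-2 * Complex.I * (ϑ t : ℂ)) *
        deriv riemannZeta (1 / 2 - Complex.I * (t : ℂ)) /
          deriv riemannZeta (1 / 2 + Complex.I * (t : ℂ)) ∧
    ‖(1 + 2 * (ϑ' t : ℂ) * riemannZeta (1 / 2 + Complex.I * (t : ℂ)) /
        deriv riemannZeta (1 / 2 + Complex.I * (t : ℂ)))‖ = 1 := by
  set s : ℂ := 1 / 2 + Complex.I * (t : ℂ) with hs_def
  set s' : ℂ := 1 / 2 - Complex.I * (t : ℂ) with hs'_def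
  have hs : s ≠ 1 := by
    intro h; have := congrArg Complex.re h; simp [hs_def] at this
  have hs' : s' ≠ 1 := by
    intro h; have := congrArg Complex.re h; simp [hs'_def] at this
  have h0 : HasDerivAt (fun u : ℝ => (u : ℂ)) 1 t := by
    simpa using (hasDerivAt_id t).ofReal_comp
  have hl : HasDerivAt (fun u : ℝ => 1 / 2 + Complex.I * (u : ℂ)) Complex.I t := by
    simpa using ((h0.const_mul Complex.I).const_add (1/2 : ℂ))
  have hl' : HasDerivAt (fun u : ℝ => 1 / 2 - Complex.I * (u : ℂ)) (-Complex.I) t := by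
    simpa using ((h0.const_mul Complex.I).const_sub (1/2 : ℂ))
  have hF : HasDerivAt (fun u : ℝ => riemannZeta (1 / 2 + Complex.I * (u : ℂ)))
      (Complex.I * deriv riemannZeta s) t := by
    simpa [Function.comp_def] using HasDerivAt.scomp_of_eq (𝕜 := ℝ) (𝕜' := ℂ) (hg := (differentiableAt_riemannZeta hs).hasDerivAt) (hh := hl) (hy := hs_def)
  have hH : HasDerivAt (fun u : ℝ => riemannZeta (1 / 2 - Complex.I * (u : ℂ)))
      (-(Complex.I * deriv riemannZeta s')) t := by
    simpa [Function.comp_def] using HasDerivAt.scomp_of_eq (𝕜 := ℝ) (𝕜' := ℂ) (hg := (differentiableAt_riemannZeta hs').hasDerivAt) (hh := hl') (hy := hs'_def)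
  -- derivative of Z t * exp(-I ϑ t)
  have hZd : HasDerivAt Z (deriv Z t) t := (hZa t).differentiableAt.hasDerivAt
  have hZC : HasDerivAt (fun u : ℝ => ((Z u : ℂ))) (Complex.ofReal (deriv Z t)) t := hZd.ofReal_comp
  have hϑC : HasDerivAt (fun u : ℝ => ((ϑ u : ℂ))) ((ϑ' t : ℂ)) t := (hϑ' t).ofReal_comp
  have hE : HasDerivAt (fun u : ℝ => Complex.exp (-Complex.I * (ϑ u : ℂ)))
      (-Complex.I * (ϑ' t : ℂ) * Complex.exp (-Complex.I * (ϑ t : ℂ))) t := by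
    have := ((hϑC.const_mul (-Complex.I)).cexp)
    simpa [mul_comm] using this
  have hG : HasDerivAt (fun u : ℝ => (Z u : ℂ) * Complex.exp (-Complex.I * (ϑ u : ℂ)))
      (Complex.ofReal (deriv Z t) * Complex.exp (-Complex.I * (ϑ t : ℂ)) +
        (Z t : ℂ) * (-Complex.I * (ϑ' t : ℂ) * Complex.exp (-Complex.I * (ϑ t : ℂ)))) t :=
    hZC.mul hE
  have hG' : HasDerivAt (fun u : ℝ => (Z u : ℂ) * Complex.exp (Complex.I * (ϑ u : ℂ)))
      (Complex.ofReal (deriv Z t) * Complex.exp (Complex.I * (ϑ t : ℂ)) +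
        (Z t : ℂ) * (Complex.I * (ϑ' t : ℂ) * Complex.exp (Complex.I * (ϑ t : ℂ)))) t := by
    refine HasDerivAt.mul hZC ?_
    have := ((hϑC.const_mul Complex.I).cexp)
    simpa [mul_comm] using this
  have hFG : (fun u : ℝ => riemannZeta (1 / 2 + Complex.I * (u : ℂ)))
      = fun u : ℝ => (Z u : ℂ) * Complex.exp (-Complex.I * (ϑ u : ℂ)) := funext hRS
  have eq1 := (hFG ▸ hF).unique hG
  have key : ∀ u : ℝ, riemannZeta (1 / 2 - Complex.I * (u : ℂ)) =
      (Z u : ℂ) * Complex.exp (Complex.I * (ϑ u : ℂ)) := by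
    intro u
    have hu : (1 / 2 - Complex.I * (u : ℂ)) ∈ ({(1:ℂ)}ᶜ : Set ℂ) := by
      intro h
      have := congrArg Complex.re h
      simp at this
    have h2 : riemannZeta (1 / 2 - Complex.I * (u : ℂ)) = (starRingEnd ℂ)
        (riemannZeta ((starRingEnd ℂ) (1 / 2 - Complex.I * (u : ℂ)))) := zeta_conj_eqOn hu
    have h3 : (starRingEnd ℂ) (1 / 2 - Complex.I * (u : ℂ)) = 1 / 2 + Complex.I * (u : ℂ) := by
      simp [Complex.ext_iff]
    rw [h2, h3, hRS u, map_mul, Complex.conj_ofReal, ← Complex.exp_conj]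
    simp
  have hHG : (fun u : ℝ => riemannZeta (1 / 2 - Complex.I * (u : ℂ)))
      = fun u : ℝ => (Z u : ℂ) * Complex.exp (Complex.I * (ϑ u : ℂ)) := funext key
  have eq2 := (hHG ▸ hH).unique hG'
  set b := deriv riemannZeta s with hb_def
  set c := deriv riemannZeta s' with hc_def
  have ha : riemannZeta s = (Z t : ℂ) * Complex.exp (-Complex.I * (ϑ t : ℂ)) := hRS t
  have hexp : Complex.exp (-2 * Complex.I * (ϑ t : ℂ)) * Complex.exp (Complex.I * (ϑ t : ℂ))
      = Complex.exp (-Complex.I * (ϑ t : ℂ)) := by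
    rw [← Complex.exp_add]; ring_nf
  have keyI : Complex.I * (b + 2 * (ϑ' t : ℂ) * riemannZeta s) =
      Complex.I * (-(Complex.exp (-2 * Complex.I * (ϑ t : ℂ)) * c)) := by
    linear_combination eq1 + 2 * Complex.I * (ϑ' t : ℂ) * ha
      - Complex.exp (-2 * Complex.I * (ϑ t : ℂ)) * eq2
      - (Complex.ofReal (deriv Z t) + Complex.I * (ϑ' t : ℂ) * (Z t : ℂ)) * hexp
  have keymain : b + 2 * (ϑ' t : ℂ) * riemannZeta s =
      -(Complex.exp (-2 * Complex.I * (ϑ t : ℂ)) * c) :=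
    mul_left_cancel₀ Complex.I_ne_zero keyI
  have hcb : c = (starRingEnd ℂ) b := by
    apply mul_left_cancel₀ Complex.I_ne_zero
    have hcc := congrArg (starRingEnd ℂ) eq1
    simp only [map_mul, map_add, map_neg, Complex.conj_I, Complex.conj_ofReal,
      neg_neg, neg_mul, ← Complex.exp_conj] at hcc
    linear_combination hcc - eq2
  have h1 : 1 + 2 * (ϑ' t : ℂ) * riemannZeta s / b
      = (b + 2 * (ϑ' t : ℂ) * riemannZeta s) / b := by field_simp
  constructor
  · rw [h1, keymain]; ring
  · rw [h1, keymain, hcb]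
    rw [norm_div, norm_neg, norm_mul, Complex.norm_conj, Complex.norm_exp]
    have hre : ((-2 : ℂ) * Complex.I * (ϑ t : ℂ)).re = 0 := by simp
    rw [hre, Real.exp_zero, one_mul, div_self (norm_ne_zero_iff.mpr hne)]
end

section
/- Let ξ be a real number such that Z has a zero of multiplicity ω ≥ 1 at ξ (equivalently 1/2 + iξ is a zero of ζ of multiplicity ω on the critical line). Then κ'(ξ) = ϑ'(ξ)/(π·ω). -/
open Complex Real

lemma keyA (Z ϑ ϑ' κ : ℝ → ℝ)
    (hZa : ∀ t : ℝ, AnalyticAt ℝ Z t)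
    (hRS : ∀ t : ℝ, riemannZeta (1 / 2 + Complex.I * (t : ℂ)) =
      (Z t : ℂ) * Complex.exp (-Complex.I * (ϑ t : ℂ)))
    (hϑ' : ∀ t : ℝ, HasDerivAt ϑ (ϑ' t) t)
    (hκ : ∀ t : ℝ, deriv riemannZeta (1 / 2 + Complex.I * (t : ℂ)) ≠ 0 →
      Complex.exp (2 * π * Complex.I * (κ t : ℂ)) =
        1 + 2 * (ϑ' t : ℂ) * riemannZeta (1 / 2 + Complex.I * (t : ℂ)) /
          deriv riemannZeta (1 / 2 + Complex.I * (t : ℂ)))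
    (t : ℝ) :
    Real.sin (π * κ t) * deriv Z t = Real.cos (π * κ t) * (Z t * ϑ' t) := by
  set s : ℂ := 1 / 2 + Complex.I * (t : ℂ) with hs
  have hs1 : s ≠ 1 := by
    intro h
    have h2 := congrArg Complex.re h
    rw [hs] at h2
    simp at h2
  set u : ℝ := deriv Z t with hu
  set v : ℝ := Z t * ϑ' t with hv
  set E : ℂ := Complex.exp (-Complex.I * (ϑ t : ℂ)) with hE
  have hEne : E ≠ 0 := Complex.exp_ne_zero _
  have hinner : HasDerivAt (fun t : ℝ => (1 / 2 : ℂ) + Complex.I * (t : ℂ)) Complex.I t := by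
    have h1 : HasDerivAt (fun t : ℝ => (t : ℂ)) 1 t := hasDerivAt_id t |>.ofReal_comp
    simpa using ((h1.const_mul Complex.I).const_add (1/2 : ℂ))
  have hζ : HasDerivAt riemannZeta (deriv riemannZeta s) s :=
    (differentiableAt_riemannZeta hs1).hasDerivAt
  have hF : HasDerivAt (fun t : ℝ => riemannZeta (1 / 2 + Complex.I * (t : ℂ)))
      (Complex.I • deriv riemannZeta s) t := hζ.scomp t hinner
  have hZd : HasDerivAt Z u t := ((hZa t).differentiableAt).hasDerivAt
  have hG : HasDerivAt (fun t : ℝ => (Z t : ℂ) * Complex.exp (-Complex.I * (ϑ t : ℂ)))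
      ((u : ℂ) * E + (Z t : ℂ) * (E * (-Complex.I * (ϑ' t : ℂ)))) t := by
    have h1 : HasDerivAt (fun t : ℝ => (Z t : ℂ)) (u : ℂ) t := hZd.ofReal_comp
    have h2 : HasDerivAt (fun t : ℝ => -Complex.I * (ϑ t : ℂ)) (-Complex.I * (ϑ' t : ℂ)) t :=
      ((hϑ' t).ofReal_comp).const_mul (-Complex.I)
    exact h1.mul h2.cexp
  have hfun : (fun t : ℝ => riemannZeta (1 / 2 + Complex.I * (t : ℂ)))
      = fun t : ℝ => (Z t : ℂ) * Complex.exp (-Complex.I * (ϑ t : ℂ)) := funext hRS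
  rw [hfun] at hF
  have hD : Complex.I • deriv riemannZeta s
      = (u : ℂ) * E + (Z t : ℂ) * (E * (-Complex.I * (ϑ' t : ℂ))) := hF.unique hG
  have hD' : Complex.I * deriv riemannZeta s = ((u : ℂ) - Complex.I * (v : ℂ)) * E := by
    rw [smul_eq_mul] at hD
    rw [hD, hv]; push_cast; ring
  by_cases hz : deriv riemannZeta s = 0
  · rw [hz, mul_zero] at hD'
    have h0 : (u : ℂ) - Complex.I * (v : ℂ) = 0 := by
      rcases mul_eq_zero.mp hD'.symm with h | h
      · exact h
      · exact absurd h hEne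
    have hure : u = 0 := by
      have := congrArg Complex.re h0; simpa using this
    have hvim : v = 0 := by
      have := congrArg Complex.im h0; simpa using this
    rw [hure, hvim]; ring
  · have hk := hκ t hz
    rw [← hs] at hk
    have hk2 : Complex.exp (2 * π * Complex.I * (κ t : ℂ)) * deriv riemannZeta s
        = deriv riemannZeta s + 2 * (ϑ' t : ℂ) * riemannZeta s := by
      rw [hk]; field_simp
    have hzeta : riemannZeta s = (Z t : ℂ) * E := hRS t
    have hk4 : Complex.exp (2 * π * Complex.I * (κ t : ℂ)) * ((u : ℂ) - Complex.I * (v : ℂ))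
        = (u : ℂ) + Complex.I * (v : ℂ) := by
      apply mul_right_cancel₀ hEne
      calc Complex.exp (2 * π * Complex.I * (κ t : ℂ)) * ((u : ℂ) - Complex.I * (v : ℂ)) * E
          = Complex.I * (Complex.exp (2 * π * Complex.I * (κ t : ℂ)) * deriv riemannZeta s) := by
            rw [show Complex.exp (2 * π * Complex.I * (κ t : ℂ)) * ((u:ℂ) - Complex.I * (v:ℂ)) * E
              = Complex.exp (2 * π * Complex.I * (κ t : ℂ)) * (((u:ℂ) - Complex.I * (v:ℂ)) * E) from by ring, ← hD']
            ring
        _ = Complex.I * (deriv riemannZeta s + 2 * (ϑ' t : ℂ) * riemannZeta s) := by rw [hk2]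
        _ = Complex.I * deriv riemannZeta s + Complex.I * (2 * (ϑ' t : ℂ) * riemannZeta s) := by ring
        _ = ((u : ℂ) + Complex.I * (v : ℂ)) * E := by
            rw [hD', hzeta, hv]; push_cast; ring
    have hexp : Complex.exp (2 * π * Complex.I * (κ t : ℂ))
        = ((Real.cos (2 * π * κ t) : ℝ) : ℂ) + ((Real.sin (2 * π * κ t) : ℝ) : ℂ) * Complex.I := by
      rw [show (2 * (π:ℂ) * Complex.I * (κ t : ℂ)) = ((2 * π * κ t : ℝ) : ℂ) * Complex.I from by
        push_cast; ring, Complex.exp_mul_I, ← Complex.ofReal_cos, ← Complex.ofReal_sin]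
    rw [hexp] at hk4
    set C := Real.cos (2 * π * κ t) with hCdef
    set S := Real.sin (2 * π * κ t) with hSdef
    rw [Complex.ext_iff] at hk4
    obtain ⟨h1, h2⟩ := hk4
    simp [Complex.add_re, Complex.add_im, Complex.mul_re, Complex.mul_im] at h1 h2
    set a := Real.sin (π * κ t) with ha
    set b := Real.cos (π * κ t) with hb
    have hC : C = 2 * b ^ 2 - 1 := by
      rw [hCdef, hb, show 2 * π * κ t = 2 * (π * κ t) from by ring, Real.cos_two_mul]
    have hS : S = 2 * a * b := by
      rw [hSdef, ha, hb, show 2 * π * κ t = 2 * (π * κ t) from by ring, Real.sin_two_mul]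
    have hpy : a ^ 2 + b ^ 2 = 1 := by
      rw [ha, hb]; exact Real.sin_sq_add_cos_sq _
    -- h1 : C*u + S*v = u (hopefully), h2 : S*u - C*v = v
    rw [hC, hS] at h1 h2
    have e1 : a * (b * v - a * u) = 0 := by linear_combination h1 / 2 - u * hpy
    have e2 : b * (a * u - b * v) = 0 := by linear_combination h2 / 2
    linear_combination (-a) * e1 + b * e2 - (a * u - b * v) * hpy

lemma keyB (Z : ℝ → ℝ) (ξ : ℝ) (ω : ℕ) (hZa : AnalyticAt ℝ Z ξ)
    (hzero : ∀ j : ℕ, j < ω → iteratedDeriv j Z ξ = 0)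
    (hnonzero : iteratedDeriv ω Z ξ ≠ 0) :
    ∃ g : ℝ → ℝ, AnalyticAt ℝ g ξ ∧ g ξ ≠ 0 ∧ ∀ᶠ t in nhds ξ, Z t = (t - ξ) ^ ω * g t := by
  obtain ⟨p, hp⟩ := hZa
  have hcoeff : ∀ n : ℕ, (n.factorial : ℝ) * p.coeff n = iteratedDeriv n Z ξ := by
    intro n
    obtain ⟨r, hball⟩ := hp
    have h := hball.factorial_smul (1 : ℝ) n
    have h2 : iteratedDeriv n Z ξ = iteratedFDeriv ℝ n Z ξ (fun _ => 1) := rfl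
    rw [h2, ← h, nsmul_eq_mul]
    rfl
  have hcω : p.coeff ω ≠ 0 := by
    intro h
    apply hnonzero
    rw [← hcoeff, h, mul_zero]
  have hpω : p ω ≠ 0 := fun h => hcω (FormalMultilinearSeries.coeff_eq_zero.mpr h)
  have hpne : p ≠ 0 := fun h => hpω (by rw [h]; rfl)
  have hord : p.order = ω := by
    apply le_antisymm
    · by_contra h
      push_neg at h
      exact hpω (p.apply_eq_zero_of_lt_order h)
    · by_contra h
      push_neg at h
      have h1 : p.coeff p.order = 0 := by
        have h2 := hzero p.order h
        rw [← hcoeff] at h2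
        rcases mul_eq_zero.mp h2 with h3 | h3
        · exact absurd h3 (by positivity)
        · exact h3
      rw [FormalMultilinearSeries.coeff_eq_zero] at h1
      exact p.apply_order_ne_zero hpne h1
  refine ⟨(Function.swap dslope ξ)^[ω] Z, ?_, ?_, ?_⟩
  · exact ⟨_, by rw [← hord]; exact hp.has_fpower_series_iterate_dslope_fslope p.order⟩
  · rw [← hord]; exact hp.iterate_dslope_fslope_ne_zero hpne
  · have h := hp.eq_pow_order_mul_iterate_dslope
    rw [hord] at h
    filter_upwards [Filter.Eventually.of_forall h] with t ht
    simpa [smul_eq_mul] using ht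

lemma derivCont {f : ℝ → ℝ} {x : ℝ} (hf : AnalyticAt ℝ f x) : ContinuousAt (deriv f) x := by
  have h1 : AnalyticAt ℝ (fderiv ℝ f) x := hf.fderiv
  have h2 : ContinuousAt (fun y => fderiv ℝ f y 1) x :=
    (ContinuousLinearMap.apply ℝ ℝ (1 : ℝ)).continuous.continuousAt.comp h1.continuousAt
  have h3 : (fun y => fderiv ℝ f y 1) = deriv f := funext fun y => fderiv_apply_one_eq_deriv
  rwa [h3] at h2

theorem kappa_deriv_at_zero_of_zeta
    (Z ϑ ϑ' κ κ' : ℝ → ℝ)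
    (hZa : ∀ t : ℝ, AnalyticAt ℝ Z t) (hϑa : ∀ t : ℝ, AnalyticAt ℝ ϑ t)
    (hκa : ∀ t : ℝ, AnalyticAt ℝ κ t)
    (hRS : ∀ t : ℝ, riemannZeta (1 / 2 + Complex.I * (t : ℂ)) =
      (Z t : ℂ) * Complex.exp (-Complex.I * (ϑ t : ℂ)))
    (hϑ' : ∀ t : ℝ, HasDerivAt ϑ (ϑ' t) t)
    (hκ' : ∀ t : ℝ, HasDerivAt κ (κ' t) t)
    (hκ : ∀ t : ℝ, deriv riemannZeta (1 / 2 + Complex.I * (t : ℂ)) ≠ 0 →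
      Complex.exp (2 * π * Complex.I * (κ t : ℂ)) =
        1 + 2 * (ϑ' t : ℂ) * riemannZeta (1 / 2 + Complex.I * (t : ℂ)) /
          deriv riemannZeta (1 / 2 + Complex.I * (t : ℂ)))
    (hκ0 : κ 0 = -(1 / 2))
    (ξ : ℝ) (ω : ℕ) (hω : 1 ≤ ω)
    (hzero : ∀ j : ℕ, j < ω → iteratedDeriv j Z ξ = 0)
    (hnonzero : iteratedDeriv ω Z ξ ≠ 0) :
    κ' ξ = ϑ' ξ / (π * ω) := by
  obtain ⟨m, rfl⟩ : ∃ m, ω = m + 1 := ⟨ω - 1, (Nat.succ_pred_eq_of_pos hω).symm⟩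
  obtain ⟨g, hg_an, hg_ne, hg_eq⟩ := keyB Z ξ (m + 1) (hZa ξ) hzero hnonzero
  have hK := keyA Z ϑ ϑ' κ hZa hRS hϑ' hκ
  -- ϑ' is the derivative of the analytic function ϑ, hence continuous
  have hϑ'eq : ϑ' = deriv ϑ := funext fun t => ((hϑ' t).deriv).symm
  have hϑ'c : ContinuousAt ϑ' ξ := by rw [hϑ'eq]; exact derivCont (hϑa ξ)
  -- open set where the factorization holds and g is analytic
  obtain ⟨U, hUmem, hUo, hUξ⟩ :=
    eventually_nhds_iff.mp (hg_eq.and hg_an.eventually_analyticAt)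
  -- the auxiliary function ψ
  set p : ℝ → ℝ := fun t =>
    deriv g t * Real.sin (π * κ t) - g t * ϑ' t * Real.cos (π * κ t) with hpdef
  set q : ℝ → ℝ := fun t => ((m : ℝ) + 1) * (g t * Real.sin (π * κ t)) with hqdef
  set ψ : ℝ → ℝ := fun t => q t + (t - ξ) * p t with hψdef
  -- ψ vanishes on U \ {ξ}
  have hψ0 : ∀ t ∈ U, t ≠ ξ → ψ t = 0 := by
    intro t htU htne
    have hKt := hK t
    have hgd : HasDerivAt g (deriv g t) t :=
      (hUmem t htU).2.differentiableAt.hasDerivAt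
    have h1 : HasDerivAt (fun t : ℝ => (t - ξ) ^ (m + 1))
        (((m : ℝ) + 1) * (t - ξ) ^ m) t := by
      have := ((hasDerivAt_id t).sub_const ξ).pow (m + 1)
      simpa [mul_one, Pi.pow_def] using this
    have hpow : HasDerivAt (fun t => (t - ξ) ^ (m + 1) * g t)
        (((m : ℝ) + 1) * (t - ξ) ^ m * g t + (t - ξ) ^ (m + 1) * deriv g t) t :=
      h1.mul hgd
    have hZt : HasDerivAt Z
        (((m : ℝ) + 1) * (t - ξ) ^ m * g t + (t - ξ) ^ (m + 1) * deriv g t) t := by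
      apply hpow.congr_of_eventuallyEq
      filter_upwards [hUo.mem_nhds htU] with y hy
      exact (hUmem y hy).1
    rw [hZt.deriv, (hUmem t htU).1] at hKt
    have hne : (t - ξ) ^ m ≠ 0 := pow_ne_zero _ (sub_ne_zero.mpr htne)
    have hfac : (t - ξ) ^ m * ψ t = 0 := by
      rw [hψdef, hqdef, hpdef]
      simp only
      linear_combination hKt
    exact ((mul_eq_zero.mp hfac).resolve_left hne)
  -- continuity of p at ξ
  have hκc : ContinuousAt κ ξ := (hκ' ξ).differentiableAt.continuousAt
  have hsinc : ContinuousAt (fun t => Real.sin (π * κ t)) ξ :=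
    Real.continuous_sin.continuousAt.comp (continuousAt_const.mul hκc)
  have hcosc : ContinuousAt (fun t => Real.cos (π * κ t)) ξ :=
    Real.continuous_cos.continuousAt.comp (continuousAt_const.mul hκc)
  have hgc : ContinuousAt g ξ := hg_an.differentiableAt.continuousAt
  have hpc : ContinuousAt p ξ :=
    ((derivCont hg_an).mul hsinc).sub ((hgc.mul hϑ'c).mul hcosc)
  -- derivative of (t - ξ) * p t at ξ is p ξ
  have hh : HasDerivAt (fun t => (t - ξ) * p t) (p ξ) ξ := by
    rw [hasDerivAt_iff_tendsto_slope]
    have hev : (fun t => p t) =ᶠ[nhdsWithin ξ {ξ}ᶜ] slope (fun t => (t - ξ) * p t) ξ := by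
      filter_upwards [self_mem_nhdsWithin] with t ht
      have htne : t - ξ ≠ 0 := sub_ne_zero.mpr ht
      rw [slope_def_field]
      field_simp
      ring
    exact Filter.Tendsto.congr' hev (hpc.continuousWithinAt.tendsto)
  -- derivative of q at ξ
  have hsind : HasDerivAt (fun t => Real.sin (π * κ t))
      (Real.cos (π * κ ξ) * (π * κ' ξ)) ξ := ((hκ' ξ).const_mul π).sin
  have hgd : HasDerivAt g (deriv g ξ) ξ := hg_an.differentiableAt.hasDerivAt
  have hq : HasDerivAt q (((m : ℝ) + 1) *
      (deriv g ξ * Real.sin (π * κ ξ) + g ξ * (Real.cos (π * κ ξ) * (π * κ' ξ)))) ξ :=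
    (hgd.mul hsind).const_mul _
  have hψd : HasDerivAt ψ (((m : ℝ) + 1) *
      (deriv g ξ * Real.sin (π * κ ξ) + g ξ * (Real.cos (π * κ ξ) * (π * κ' ξ))) + p ξ) ξ :=
    hq.add hh
  -- ψ ξ = 0
  have hψξ : ψ ξ = 0 := by
    have h1 : Filter.Tendsto ψ (nhdsWithin ξ {ξ}ᶜ) (nhds (ψ ξ)) :=
      (hψd.continuousAt.tendsto).mono_left nhdsWithin_le_nhds
    have h2 : Filter.Tendsto ψ (nhdsWithin ξ {ξ}ᶜ) (nhds 0) := by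
      apply Filter.Tendsto.congr' _ tendsto_const_nhds
      filter_upwards [self_mem_nhdsWithin,
        eventually_nhdsWithin_of_eventually_nhds (hUo.mem_nhds hUξ)] with t ht1 ht2
      exact (hψ0 t ht2 ht1).symm
    exact tendsto_nhds_unique h1 h2
  -- ψ = 0 eventually near ξ, hence derivative 0
  have hψev : ψ =ᶠ[nhds ξ] fun _ => 0 := by
    filter_upwards [hUo.mem_nhds hUξ] with t ht
    by_cases h : t = ξ
    · rw [h]; exact hψξ
    · exact hψ0 t ht h
  have hψd0 : HasDerivAt ψ 0 ξ :=
    (hasDerivAt_const ξ (0 : ℝ)).congr_of_eventuallyEq hψev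
  have hder : ((m : ℝ) + 1) *
      (deriv g ξ * Real.sin (π * κ ξ) + g ξ * (Real.cos (π * κ ξ) * (π * κ' ξ))) + p ξ = 0 :=
    hψd.unique hψd0
  -- sin (π κ ξ) = 0
  have hsin0 : Real.sin (π * κ ξ) = 0 := by
    have h1 : ((m : ℝ) + 1) * (g ξ * Real.sin (π * κ ξ)) = 0 := by
      have h0 := hψξ
      rw [hψdef, hqdef] at h0
      simp only [sub_self, zero_mul, add_zero] at h0
      exact h0
    have h2 : (m : ℝ) + 1 ≠ 0 := by positivity
    rcases mul_eq_zero.mp h1 with h | h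
    · exact absurd h h2
    · rcases mul_eq_zero.mp h with h | h
      · exact absurd h hg_ne
      · exact h
  have hcos0 : Real.cos (π * κ ξ) ≠ 0 := by
    intro h
    have := Real.sin_sq_add_cos_sq (π * κ ξ)
    rw [hsin0, h] at this
    norm_num at this
  -- conclude
  rw [hpdef] at hder
  simp only [hsin0, mul_zero, zero_sub, mul_one, add_zero, zero_add] at hder
  -- hder : (m+1) * (g ξ * (cos * (π * κ' ξ))) + (- (g ξ * ϑ' ξ * cos)) = 0  (roughly)
  have hkey : ((m : ℝ) + 1) * π * κ' ξ = ϑ' ξ := by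
    have h3 : g ξ * Real.cos (π * κ ξ) * (((m : ℝ) + 1) * π * κ' ξ - ϑ' ξ) = 0 := by
      linear_combination hder
    rcases mul_eq_zero.mp h3 with h | h
    · rcases mul_eq_zero.mp h with h | h
      · exact absurd h hg_ne
      · exact absurd h hcos0
    · linarith
  have hπ : (π : ℝ) ≠ 0 := Real.pi_ne_zero
  have hm1 : ((m : ℝ) + 1) ≠ 0 := by positivity
  rw [eq_div_iff (by push_cast; exact mul_ne_zero hπ hm1)]
  push_cast
  linarith [hkey]
end

section
/- For the function f(t) := −2/(1+4t²) + Σ_{n=1}^∞ (2(4n+1)/((4n+1)²+4t²) − (1/2 − aₙ)/((1/2 − aₙ)² + t²)), where aₙ is the unique real zero of ζ' in (−2n−2, −2n), the series converges and for t > 1 one has |f(t)| ≤ 2/(1+4t²) + 1/t. -/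
open Complex Real

noncomputable def Ff (t x : ℝ) : ℝ :=
  if x ≤ t then 1 / t - x / (x ^ 2 + t ^ 2) else x / (x ^ 2 + t ^ 2)

lemma h_le_half (t x : ℝ) (ht : 0 < t) : x / (x ^ 2 + t ^ 2) ≤ 1 / (2 * t) := by
  rw [div_le_div_iff₀ (by positivity) (by positivity)]
  nlinarith [sq_nonneg (x - t)]

lemma h_nonneg (t x : ℝ) (ht : 0 < t) (hx : 0 ≤ x) : 0 ≤ x / (x ^ 2 + t ^ 2) := by
  positivity

lemma h_inc (t x y : ℝ) (ht : 0 < t) (hx : 0 ≤ x) (hxy : x ≤ y) (hyt : y ≤ t) :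
    x / (x ^ 2 + t ^ 2) ≤ y / (y ^ 2 + t ^ 2) := by
  rw [div_le_div_iff₀ (by positivity) (by positivity)]
  have h1 : x * y ≤ t ^ 2 := by nlinarith
  nlinarith [mul_nonneg (sub_nonneg.mpr hxy) (sub_nonneg.mpr h1)]

lemma h_dec (t x y : ℝ) (ht : 0 < t) (htx : t ≤ x) (hxy : x ≤ y) :
    y / (y ^ 2 + t ^ 2) ≤ x / (x ^ 2 + t ^ 2) := by
  rw [div_le_div_iff₀ (by positivity) (by positivity)]
  have h1 : t ^ 2 ≤ x * y := by nlinarith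
  nlinarith [mul_nonneg (sub_nonneg.mpr hxy) (sub_nonneg.mpr h1)]

lemma half_half (t : ℝ) (ht : 0 < t) : 1 / (2 * t) + 1 / (2 * t) = 1 / t := by
  have ht' : t ≠ 0 := ne_of_gt ht
  rw [← add_div, eq_div_iff ht']
  field_simp
  norm_num

lemma Ff_step (t c b : ℝ) (ht : 0 < t) (hc : 0 ≤ c) (hcb : c ≤ b) :
    |c / (c ^ 2 + t ^ 2) - b / (b ^ 2 + t ^ 2)| ≤ Ff t c - Ff t b := by
  have hb : 0 ≤ b := hc.trans hcb
  unfold Ff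
  by_cases hbt : b ≤ t
  · rw [if_pos (hcb.trans hbt), if_pos hbt]
    have := h_inc t c b ht hc hcb hbt
    rw [abs_sub_comm, _root_.abs_of_nonneg (by linarith)]
    linarith
  · push_neg at hbt
    rw [if_neg (not_le.mpr hbt)]
    by_cases hct : c ≤ t
    · rw [if_pos hct]
      have h1 := h_le_half t c ht
      have h2 := h_le_half t b ht
      have h3 := h_nonneg t c ht hc
      have h4 := h_nonneg t b ht hb
      have h5 := half_half t ht
      rw [abs_le]
      constructor <;> linarith
    · push_neg at hct
      rw [if_neg (not_le.mpr hct)]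
      have := h_dec t c b ht hct.le hcb
      rw [_root_.abs_of_nonneg (by linarith)]

lemma Ff_nonneg (t x : ℝ) (ht : 0 < t) (hx : 0 ≤ x) : 0 ≤ Ff t x := by
  unfold Ff
  split
  · have h1 := h_le_half t x ht
    have h5 := half_half t ht
    have h6 : 0 < 1 / (2 * t) := by positivity
    linarith
  · exact h_nonneg t x ht hx

lemma Ff_le (t x : ℝ) (ht : 0 < t) (hx : 0 ≤ x) : Ff t x ≤ 1 / t := by
  unfold Ff
  split
  · have := h_nonneg t x ht hx; linarith
  · have h1 := h_le_half t x ht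
    have h5 := half_half t ht
    have h6 : 0 < 1 / (2 * t) := by positivity
    linarith

lemma crude (t c b : ℝ) (hc : 2 ≤ c) (hcb : c ≤ b) (hb : b ≤ c + 2) :
    |c / (c ^ 2 + t ^ 2) - b / (b ^ 2 + t ^ 2)| ≤ 2 / (c ^ 2 + t ^ 2) := by
  have hc0 : (0:ℝ) < c ^ 2 + t ^ 2 := by nlinarith [sq_nonneg t]
  have hb0 : (0:ℝ) < b ^ 2 + t ^ 2 := by nlinarith [sq_nonneg t]
  rw [div_sub_div _ _ hc0.ne' hb0.ne', abs_div, abs_of_pos (mul_pos hc0 hb0),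
    div_le_div_iff₀ (mul_pos hc0 hb0) hc0]
  have hnum : |c * (b ^ 2 + t ^ 2) - (c ^ 2 + t ^ 2) * b| ≤ 2 * (b ^ 2 + t ^ 2) := by
    rw [abs_le]
    have hcb0 : 0 ≤ c * b := mul_nonneg (by linarith) (by linarith)
    have hd : 0 ≤ 2 - (b - c) := by linarith
    have hd2 : 0 ≤ b - c := by linarith
    constructor <;>
      nlinarith [sq_nonneg t, mul_nonneg hd (add_nonneg hcb0 (sq_nonneg t)),
        mul_nonneg hd2 hcb0, mul_nonneg hd2 (sq_nonneg t),
        mul_nonneg hd (sq_nonneg t), mul_nonneg hd2 (sq_nonneg (b - c)),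
        mul_nonneg (mul_nonneg hd2 (by linarith : (0:ℝ) ≤ b)) (by linarith : (0:ℝ) ≤ b - c)]
  calc |c * (b ^ 2 + t ^ 2) - (c ^ 2 + t ^ 2) * b| * (c ^ 2 + t ^ 2)
      ≤ (2 * (b ^ 2 + t ^ 2)) * (c ^ 2 + t ^ 2) := by
        exact mul_le_mul_of_nonneg_right hnum hc0.le
    _ = 2 * ((c ^ 2 + t ^ 2) * (b ^ 2 + t ^ 2)) := by ring

theorem f_series_converges_and_bound
    (a : ℕ → ℝ)
    (ha : ∀ n : ℕ, 1 ≤ n →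
      a n ∈ Set.Ioo (-2 * (n : ℝ) - 2) (-2 * (n : ℝ)) ∧
        deriv riemannZeta ((a n : ℝ) : ℂ) = 0) :
    (∀ t : ℝ, Summable (fun n : ℕ =>
      (2 * (4 * (n + 1) + 1) / ((4 * (n + 1) + 1) ^ 2 + 4 * t ^ 2)
        - (1 / 2 - a (n + 1)) / ((1 / 2 - a (n + 1)) ^ 2 + t ^ 2) : ℝ))) ∧
    (∀ t : ℝ, 1 < t →
      |(-2 / (1 + 4 * t ^ 2) + ∑' n : ℕ,
        (2 * (4 * (n + 1) + 1) / ((4 * (n + 1) + 1) ^ 2 + 4 * t ^ 2)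
          - (1 / 2 - a (n + 1)) / ((1 / 2 - a (n + 1)) ^ 2 + t ^ 2) : ℝ))|
        ≤ 2 / (1 + 4 * t ^ 2) + 1 / t) := by
  set C : ℕ → ℝ := fun n => 2 * n + 5 / 2 with hC
  set b : ℕ → ℝ := fun n => 1 / 2 - a (n + 1) with hbdef
  -- bounds on b n
  have hbnd : ∀ n : ℕ, C n < b n ∧ b n < C n + 2 := by
    intro n
    have h := (ha (n + 1) (by omega)).1
    obtain ⟨h1, h2⟩ := h
    push_cast at h1 h2
    constructor <;> simp only [hC, hbdef] <;> push_cast <;> linarith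
  have hC2 : ∀ n : ℕ, (2 : ℝ) ≤ C n := by
    intro n
    simp only [hC]
    have : (0:ℝ) ≤ (n:ℝ) := Nat.cast_nonneg n
    linarith
  have hCsucc : ∀ n : ℕ, C (n + 1) = C n + 2 := by
    intro n; simp only [hC]; push_cast; ring
  -- rewrite the summand
  have hfun : ∀ t : ℝ, (fun n : ℕ =>
      (2 * (4 * (n + 1) + 1) / ((4 * (n + 1) + 1) ^ 2 + 4 * t ^ 2)
        - (1 / 2 - a (n + 1)) / ((1 / 2 - a (n + 1)) ^ 2 + t ^ 2) : ℝ))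
      = fun n : ℕ => C n / (C n ^ 2 + t ^ 2) - b n / (b n ^ 2 + t ^ 2) := by
    intro t
    funext n
    have e1 : (2 * (4 * ((n : ℝ) + 1) + 1) / ((4 * ((n : ℝ) + 1) + 1) ^ 2 + 4 * t ^ 2) : ℝ)
        = C n / (C n ^ 2 + t ^ 2) := by
      have d1 : (0:ℝ) < (4 * ((n : ℝ) + 1) + 1) ^ 2 + 4 * t ^ 2 := by positivity
      have d2 : (0:ℝ) < C n ^ 2 + t ^ 2 := by
        have := hC2 n; nlinarith [sq_nonneg t]
      rw [div_eq_div_iff d1.ne' d2.ne']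
      simp only [hC]
      ring
    rw [e1]
  -- crude bound, valid for every t
  have hcrude : ∀ t : ℝ, ∀ n : ℕ,
      |C n / (C n ^ 2 + t ^ 2) - b n / (b n ^ 2 + t ^ 2)| ≤ 1 / ((n : ℝ) + 1) ^ 2 := by
    intro t n
    have h1 := crude t (C n) (b n) (hC2 n) (hbnd n).1.le (hbnd n).2.le
    refine h1.trans ?_
    have d2 : (0:ℝ) < C n ^ 2 + t ^ 2 := by
      have := hC2 n; nlinarith [sq_nonneg t]
    rw [div_le_div_iff₀ d2 (by positivity)]
    simp only [hC]
    nlinarith [sq_nonneg t, sq_nonneg ((n : ℝ)), (Nat.cast_nonneg n : (0:ℝ) ≤ (n:ℝ))]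
  have hmaj : Summable (fun n : ℕ => 1 / ((n : ℝ) + 1) ^ 2) := by
    have h := Real.summable_one_div_nat_pow.mpr (by norm_num : 1 < 2)
    have h2 := (summable_nat_add_iff 1).mpr h
    simpa using h2
  have hsumabs : ∀ t : ℝ,
      Summable (fun n : ℕ => |C n / (C n ^ 2 + t ^ 2) - b n / (b n ^ 2 + t ^ 2)|) := by
    intro t
    exact Summable.of_nonneg_of_le (fun n => abs_nonneg _) (hcrude t) hmaj
  have hsum : ∀ t : ℝ,
      Summable (fun n : ℕ => C n / (C n ^ 2 + t ^ 2) - b n / (b n ^ 2 + t ^ 2)) := by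
    intro t
    exact (hsumabs t).of_abs
  constructor
  · intro t
    rw [hfun t]
    exact hsum t
  · intro t ht
    have ht0 : 0 < t := by linarith
    rw [hfun t]
    -- bound on the tail sum
    have htail : ∑' n : ℕ, |C n / (C n ^ 2 + t ^ 2) - b n / (b n ^ 2 + t ^ 2)| ≤ 1 / t := by
      apply Real.tsum_le_of_sum_range_le (fun n => abs_nonneg _)
      intro N
      have hstep : ∀ n : ℕ, |C n / (C n ^ 2 + t ^ 2) - b n / (b n ^ 2 + t ^ 2)|
          ≤ Ff t (C n) - Ff t (C (n + 1)) := by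
        intro n
        have hCpos : (0:ℝ) ≤ C n := by linarith [hC2 n]
        have h1 := Ff_step t (C n) (b n) ht0 hCpos (hbnd n).1.le
        have h2 := Ff_step t (b n) (C (n + 1)) ht0 (by linarith [hC2 n, (hbnd n).1])
          (by rw [hCsucc n]; exact (hbnd n).2.le)
        have h2' : 0 ≤ Ff t (b n) - Ff t (C (n + 1)) := le_trans (abs_nonneg _) h2
        linarith
      calc ∑ n ∈ Finset.range N, |C n / (C n ^ 2 + t ^ 2) - b n / (b n ^ 2 + t ^ 2)|
          ≤ ∑ n ∈ Finset.range N, (Ff t (C n) - Ff t (C (n + 1))) :=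
            Finset.sum_le_sum (fun n _ => hstep n)
        _ = Ff t (C 0) - Ff t (C N) := Finset.sum_range_sub' (fun n => Ff t (C n)) N
        _ ≤ 1 / t - 0 := by
            have h1 := Ff_le t (C 0) ht0 (by linarith [hC2 0])
            have h2 := Ff_nonneg t (C N) ht0 (by linarith [hC2 N])
            linarith
        _ = 1 / t := by ring
    have habs_tsum : |∑' n : ℕ, (C n / (C n ^ 2 + t ^ 2) - b n / (b n ^ 2 + t ^ 2))|
        ≤ ∑' n : ℕ, |C n / (C n ^ 2 + t ^ 2) - b n / (b n ^ 2 + t ^ 2)| := by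
      have := norm_tsum_le_tsum_norm (f := fun n : ℕ =>
        C n / (C n ^ 2 + t ^ 2) - b n / (b n ^ 2 + t ^ 2)) (by simpa [Real.norm_eq_abs] using hsumabs t)
      simpa [Real.norm_eq_abs] using this
    have hfirst : |(-2 / (1 + 4 * t ^ 2) : ℝ)| = 2 / (1 + 4 * t ^ 2) := by
      rw [abs_div, abs_of_pos (by positivity : (0:ℝ) < 1 + 4 * t ^ 2)]
      norm_num
    calc |(-2 / (1 + 4 * t ^ 2) + ∑' n : ℕ,
            (C n / (C n ^ 2 + t ^ 2) - b n / (b n ^ 2 + t ^ 2)) : ℝ)|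
        ≤ |(-2 / (1 + 4 * t ^ 2) : ℝ)|
            + |∑' n : ℕ, (C n / (C n ^ 2 + t ^ 2) - b n / (b n ^ 2 + t ^ 2))| := abs_add_le _ _
      _ ≤ 2 / (1 + 4 * t ^ 2) + 1 / t := by
          rw [hfirst]
          exact add_le_add_right (habs_tsum.trans htail) _
end
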